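/- arXiv:1008.2465 — 11 statements merged into one kernel-verified Lean document; each statement's English description precedes it below -/
import Mathlib

section
/- Let k be a field and consider the power series ring k[[x_1,...,x_n,z]] with maximal ideal m = (x_1,...,x_n,z). For any scalars a_1,...,a_n in k, letting I = (x_1 - a_1·z, ..., x_n - a_n·z), one has (z^2) + I·m = m^2. -/
open MvPowerSeries

/-- Let `k` be a field, `S = k[[x_1,…,x_n,z]]` (variables indexed by
`Option (Fin n)`, with `X none` playing the role of `z` and `X (some i)` that of `x_i`),
and `m` its maximal ideal, generated by the variables.  For any scalars `a_1,…,a_n ∈ k`,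
with `I = (x_1 - a_1 z, …, x_n - a_n z)`, one has `(z²) + I·m = m²`. -/
theorem span_zsq_add_I_mul_m_eq_m_sq
    (k : Type) [Field k] (n : ℕ) (a : Fin n → k) :
    let S := MvPowerSeries (Option (Fin n)) k
    let z : S := MvPowerSeries.X none
    let m : Ideal S := Ideal.span (Set.range (MvPowerSeries.X : Option (Fin n) → S))
    let I : Ideal S := Ideal.span
      (Set.range fun i : Fin n =>
        MvPowerSeries.X (some i) - MvPowerSeries.C (σ := Option (Fin n)) (R := k) (a i) * z)
    Ideal.span {z ^ 2} + I * m = m ^ 2 := by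
  intro S z m I
  have hz : z ∈ m := Ideal.subset_span ⟨none, rfl⟩
  have hx : ∀ u : Option (Fin n), MvPowerSeries.X u ∈ m :=
    fun u => Ideal.subset_span ⟨u, rfl⟩
  have hIgen : ∀ i : Fin n,
      (MvPowerSeries.X (some i) - MvPowerSeries.C (σ := Option (Fin n)) (R := k) (a i) * z) ∈ I :=
    fun i => Ideal.subset_span ⟨i, rfl⟩
  have hIm : I ≤ m := by
    rw [Ideal.span_le]
    rintro _ ⟨i, rfl⟩
    exact Ideal.sub_mem _ (hx (some i)) (Ideal.mul_mem_left _ _ hz)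
  -- key membership facts in J := span{z²} + I*m
  have hzz : z * z ∈ Ideal.span {z ^ 2} + I * m := by
    refine Ideal.mem_sup_left ?_
    rw [← sq]
    exact Ideal.subset_span rfl
  have hxz : ∀ i : Fin n, MvPowerSeries.X (some i) * z ∈ Ideal.span {z ^ 2} + I * m := by
    intro i
    have key : MvPowerSeries.X (some i) * z =
        (MvPowerSeries.X (some i) - MvPowerSeries.C (σ := Option (Fin n)) (R := k) (a i) * z) * z
          + MvPowerSeries.C (σ := Option (Fin n)) (R := k) (a i) * z ^ 2 := by ring
    rw [key]
    exact Ideal.add_mem _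
      (Ideal.mem_sup_right (Ideal.mul_mem_mul (hIgen i) hz))
      (Ideal.mem_sup_left (Ideal.mul_mem_left _ _ (Ideal.subset_span rfl)))
  have hxx : ∀ u v : Option (Fin n),
      MvPowerSeries.X u * MvPowerSeries.X v ∈ Ideal.span {z ^ 2} + I * m := by
    rintro (_ | i) (_ | j)
    · exact hzz
    · show z * MvPowerSeries.X (some j) ∈ _
      rw [mul_comm z]
      exact hxz j
    · exact hxz i
    · have key : MvPowerSeries.X (some i) * MvPowerSeries.X (some j) =
          (MvPowerSeries.X (some i) - MvPowerSeries.C (σ := Option (Fin n)) (R := k) (a i) * z) *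
            MvPowerSeries.X (some j)
          + MvPowerSeries.C (σ := Option (Fin n)) (R := k) (a i) * (MvPowerSeries.X (some j) * z) := by
        ring
      rw [key]
      exact Ideal.add_mem _
        (Ideal.mem_sup_right (Ideal.mul_mem_mul (hIgen i) (hx (some j))))
        (Ideal.mul_mem_left _ _ (hxz j))
  apply le_antisymm
  · apply sup_le
    · rw [Ideal.span_le, Set.singleton_subset_iff, sq, sq]
      exact Ideal.mul_mem_mul hz hz
    · rw [sq]
      exact Ideal.mul_mono hIm le_rfl
  · rw [sq, Ideal.span_mul_span']
    rw [Ideal.span_le]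
    rintro x hxmem
    rcases Set.mem_mul.mp hxmem with ⟨p, ⟨u, rfl⟩, q, ⟨v, rfl⟩, rfl⟩
    exact hxx u v
end

section
/- Let k be a field and f ∈ k[[x_1,...,x_n,z]] a power series of order at least 4 (i.e., f ∈ m^4 where m = (x_1,...,x_n,z)). Then for any scalars a_1,...,a_n ∈ k, f can be written as f = z^2·h + (x_1 - a_1·z)·g_1 + ... + (x_n - a_n·z)·g_n where each g_i ∈ m^3 and h ∈ m^2. -/
open MvPowerSeries

theorem aux_decomp
    (k : Type) [Field k] (n : ℕ)
    (m : Ideal (MvPowerSeries (Option (Fin n)) k))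
    (y : Option (Fin n) → MvPowerSeries (Option (Fin n)) k)
    (hspan : m = Ideal.span (Set.range y))
    (j : ℕ) (f : MvPowerSeries (Option (Fin n)) k) (hf : f ∈ m ^ (j + 1)) :
    ∃ c : Option (Fin n) → MvPowerSeries (Option (Fin n)) k,
      (∀ i, c i ∈ m ^ j) ∧ f = ∑ i, y i * c i := by
  classical
  have hmem : f ∈ (m ^ j) • Submodule.span (MvPowerSeries (Option (Fin n)) k) (Set.range y) := by
    rw [Ideal.smul_eq_mul]
    have h2 : Ideal.span (Set.range y) = Submodule.span (MvPowerSeries (Option (Fin n)) k) (Set.range y) := rfl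
    rw [← h2, ← hspan, ← pow_succ]
    exact hf
  obtain ⟨c, hc, hsum⟩ := (Submodule.mem_ideal_smul_span_iff_exists_sum (m ^ j) y f).mp hmem
  refine ⟨fun i => c i, hc, ?_⟩
  rw [← hsum, Finsupp.sum_fintype _ _ (by simp)]
  exact Finset.sum_congr rfl fun i _ => by rw [smul_eq_mul, mul_comm]

/-- Lemma 2.3 of the paper.  Let `k` be a field and
`f ∈ k[[x_1,…,x_n,z]]` a power series of order at least `4`, i.e. `f ∈ m⁴` where
`m = (x_1,…,x_n,z)` (variables indexed by `Option (Fin n)`, `X none = z`).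
Then for any scalars `a_1,…,a_n ∈ k` one can write
`f = z²·h + ∑ᵢ (xᵢ - aᵢ·z)·gᵢ` with each `gᵢ ∈ m³` and `h ∈ m²`. -/
theorem order_ge_four_decomposition
    (k : Type) [Field k] (n : ℕ) (a : Fin n → k)
    (f : MvPowerSeries (Option (Fin n)) k)
    (m : Ideal (MvPowerSeries (Option (Fin n)) k))
    (hm : m = Ideal.span
      (Set.range (MvPowerSeries.X : Option (Fin n) → MvPowerSeries (Option (Fin n)) k)))
    (hf : f ∈ m ^ 4) :
    ∃ (h : MvPowerSeries (Option (Fin n)) k) (g : Fin n → MvPowerSeries (Option (Fin n)) k),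
      h ∈ m ^ 2 ∧ (∀ i, g i ∈ m ^ 3) ∧
      f = (MvPowerSeries.X none) ^ 2 * h +
        ∑ i : Fin n,
          (MvPowerSeries.X (some i)
            - (MvPowerSeries.C (a i) : MvPowerSeries (Option (Fin n)) k) * MvPowerSeries.X none) * g i := by
  classical
  set y : Option (Fin n) → MvPowerSeries (Option (Fin n)) k := fun o =>
    match o with
    | none => X none
    | some i => X (some i) - (C (a i) : MvPowerSeries (Option (Fin n)) k) * X none with hy
  have hynone : y none = X none := rfl
  have hysome : ∀ i, y (some i) = X (some i) - (C (a i) : MvPowerSeries (Option (Fin n)) k) * X none :=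
    fun i => rfl
  have hXmem : ∀ o, (X o : MvPowerSeries (Option (Fin n)) k) ∈ m := fun o => by
    rw [hm]; exact Ideal.subset_span ⟨o, rfl⟩
  have hspan : m = Ideal.span (Set.range y) := by
    apply le_antisymm
    · rw [hm, Ideal.span_le]
      rintro _ ⟨o, rfl⟩
      cases o with
      | none => exact Ideal.subset_span ⟨none, rfl⟩
      | some i =>
        have : (X (some i) : MvPowerSeries (Option (Fin n)) k) = y (some i) + (C (a i) : MvPowerSeries (Option (Fin n)) k) * y none := by
          rw [hynone, hysome]; ring
        rw [this]
        exact add_mem (Ideal.subset_span ⟨some i, rfl⟩)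
          (Ideal.mul_mem_left _ _ (Ideal.subset_span ⟨none, rfl⟩))
    · rw [Ideal.span_le]
      rintro _ ⟨o, rfl⟩
      cases o with
      | none => exact hXmem none
      | some i =>
        rw [hysome]
        exact sub_mem (hXmem (some i)) (Ideal.mul_mem_left _ _ (hXmem none))
  obtain ⟨c, hc1, hc2⟩ := aux_decomp k n m y hspan 3 f (by rw [show (3:ℕ)+1 = 4 from rfl] at *; exact hf)
  obtain ⟨d, hd1, hd2⟩ := aux_decomp k n m y hspan 2 (c none) (hc1 none)
  have hXd : ∀ i, (X none : MvPowerSeries (Option (Fin n)) k) * d (some i) ∈ m ^ 3 := fun i => by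
    have := Ideal.mul_mem_mul (hd1 (some i)) (hXmem none)
    rw [← pow_succ] at this
    rwa [mul_comm]
  refine ⟨d none, fun i => c (some i) + X none * d (some i), hd1 none,
    fun i => add_mem (hc1 (some i)) (hXd i), ?_⟩
  have hswap : (X none : MvPowerSeries (Option (Fin n)) k) * ∑ i, y (some i) * d (some i)
      = ∑ i, y (some i) * (X none * d (some i)) := by
    rw [Finset.mul_sum]; exact Finset.sum_congr rfl fun i _ => by ring
  calc f = ∑ o, y o * c o := hc2
    _ = y none * c none + ∑ i, y (some i) * c (some i) := by rw [Fintype.sum_option]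
    _ = X none * (y none * d none + ∑ i, y (some i) * d (some i))
        + ∑ i, y (some i) * c (some i) := by
      rw [hynone, hd2, Fintype.sum_option]
    _ = X none ^ 2 * d none
        + ∑ i : Fin n, (X (some i) - (C (a i) : MvPowerSeries (Option (Fin n)) k) * X none)
            * (c (some i) + X none * d (some i)) := by
      simp only [← hysome, hynone, mul_add, Finset.sum_add_distrib, hswap]
      ring
end

section
/- Let S be a commutative ring, f ∈ S, and (φ, ψ) a pair of n×n matrices over S with φψ = ψφ = f·I_n (a matrix factorization of f). Then in S[[u,v]], the pair of 2n×2n block matrices Φ = [[φ, -v·I],[u·I, ψ]] and Ψ = [[ψ, v·I],[-u·I, φ]] satisfies ΦΨ = ΨΦ = (f + uv)·I_{2n}. -/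
open MvPowerSeries Matrix

/-- Knörrer-type doubling, Remark 2.1 of the paper.
Let `S` be a commutative ring, `f ∈ S`, and `(φ, ψ)` an `N × N` matrix factorization of
`f`, i.e. `φψ = ψφ = f·1`.  In `T = S[[u,v]]` (with `u = X 0`, `v = X 1`), the block
matrices `Φ = [[φ, -v·1],[u·1, ψ]]` and `Ψ = [[ψ, v·1],[-u·1, φ]]` satisfy
`ΦΨ = ΨΦ = (f + uv)·1`. -/
theorem knorrer_doubling
    (S : Type) [CommRing S] (f : S) (N : ℕ)
    (φ ψ : Matrix (Fin N) (Fin N) S)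
    (hφψ : φ * ψ = f • (1 : Matrix (Fin N) (Fin N) S))
    (hψφ : ψ * φ = f • (1 : Matrix (Fin N) (Fin N) S)) :
    let T := MvPowerSeries (Fin 2) S
    let u : T := MvPowerSeries.X 0
    let v : T := MvPowerSeries.X 1
    let ι : Matrix (Fin N) (Fin N) S → Matrix (Fin N) (Fin N) T :=
      fun M => M.map ((MvPowerSeries.C : S →+* MvPowerSeries (Fin 2) S))
    let Φ : Matrix (Fin N ⊕ Fin N) (Fin N ⊕ Fin N) T :=
      Matrix.fromBlocks (ι φ) (-(v • 1)) (u • 1) (ι ψ)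
    let Ψ : Matrix (Fin N ⊕ Fin N) (Fin N ⊕ Fin N) T :=
      Matrix.fromBlocks (ι ψ) (v • 1) (-(u • 1)) (ι φ)
    Φ * Ψ = ((MvPowerSeries.C : S →+* MvPowerSeries (Fin 2) S) f + u * v) • 1 ∧
      Ψ * Φ = ((MvPowerSeries.C : S →+* MvPowerSeries (Fin 2) S) f + u * v) • 1 := by
  intro T u v ι Φ Ψ
  have hmul : ∀ α β : Matrix (Fin N) (Fin N) S, α * β = f • 1 →
      ι α * ι β = ((MvPowerSeries.C : S →+* MvPowerSeries (Fin 2) S) f) • 1 := by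
    intro α β h1
    show (α.map _) * (β.map _) = _
    rw [← Matrix.map_mul, h1]
    ext i j
    simp only [Matrix.map_apply, Matrix.smul_apply, Matrix.one_apply, smul_ite, smul_zero,
      smul_eq_mul, mul_one, mul_zero]
    split_ifs <;> simp
  have hcomm : (u:T) * v = v * u := mul_comm u v
  constructor <;>
  · show Matrix.fromBlocks _ _ _ _ * Matrix.fromBlocks _ _ _ _ = _
    rw [Matrix.fromBlocks_multiply, ← Matrix.fromBlocks_one, Matrix.fromBlocks_smul,
      Matrix.fromBlocks_inj]
    refine ⟨?_, ?_, ?_, ?_⟩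
    all_goals
      simp [hmul φ ψ hφψ, hmul ψ φ hψφ, Matrix.smul_mul, Matrix.mul_smul,
        smul_smul, add_smul, hcomm, add_comm]
    all_goals
      refine Matrix.ext fun i j => ?_
      simp only [Matrix.neg_apply, Matrix.smul_apply, Matrix.add_apply, Matrix.zero_apply,
        smul_eq_mul]
      ring
end

section
/- Let k be a field, f ∈ k[[x_1,...,x_n,z]] with f = z^2·h + Σ_i (x_i - a_i z)·g_i for power series g_i, h involving parameters a_1,...,a_n. Given pairwise commuting m×m matrices A_1,...,A_n over k, define inflated matrices by substituting A_i for a_i, x_i·I_m for x_i, z·I_m for z, and α·I_m for scalars α, in the inductively defined matrix factorization (φ_0,ψ_0)=([z^2],[h]), (φ_i,ψ_i)=([[φ_{i-1}, -g_i I],[(x_i - a_i z)I, ψ_{i-1}]], [[ψ_{i-1}, g_i I],[(-x_i + a_i z)I, φ_{i-1}]]). Then the resulting pair (Φ_n, Ψ_n) of (m·2^n)×(m·2^n) matrices satisfies Φ_n Ψ_n = Ψ_n Φ_n = f · I_{m·2^n}. -/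
open Matrix MvPowerSeries

/-- The Knörrer-style inductively defined pair of `2^i × 2^i` matrices attached to two
sequences `u v : ℕ → S`: start with `([u 0], [v 0])` and at each step form
`([[φ, -v·1],[u·1, ψ]], [[ψ, v·1],[-u·1, φ]])`. -/
def knorrerPair {S : Type} [CommRing S] (u v : ℕ → S) :
    (i : ℕ) → Matrix (Fin (2 ^ i)) (Fin (2 ^ i)) S × Matrix (Fin (2 ^ i)) (Fin (2 ^ i)) S
  | 0 => (Matrix.of fun _ _ => u 0, Matrix.of fun _ _ => v 0)
  | (i + 1) =>
    let p := knorrerPair u v i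
    let e : Fin (2 ^ i) ⊕ Fin (2 ^ i) ≃ Fin (2 ^ (i + 1)) :=
      finSumFinEquiv.trans (finCongr (by rw [pow_succ, mul_two]))
    ((Matrix.reindex e e)
        (Matrix.fromBlocks p.1 ((-(v (i + 1))) • 1) ((u (i + 1)) • 1) p.2),
     (Matrix.reindex e e)
        (Matrix.fromBlocks p.2 ((v (i + 1)) • 1) ((-(u (i + 1))) • 1) p.1))

/-- *Inflation*: given a ring homomorphism `ρ` from a commutative ring `R` into `m × m`
matrices over `k` (the image of a tuple of pairwise commuting matrices), a matrix with
entries in `R[[x's]]` is turned into a matrix of size `m` times bigger with entries in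
`k[[x's]]`, by applying `ρ` to every coefficient of every entry. -/
noncomputable def inflate {k R : Type} [Field k] [CommRing R] {m : ℕ} {σ : Type}
    (ρ : R →+* Matrix (Fin m) (Fin m) k) {N : Type}
    (M : Matrix N N (MvPowerSeries σ R)) :
    Matrix (N × Fin m) (N × Fin m) (MvPowerSeries σ k) :=
  Matrix.of fun p q =>
    (fun d => ρ (MvPowerSeries.coeff (R := R) d (M p.1 q.1)) p.2 q.2 : MvPowerSeries σ k)

section KPAux


variable {k R : Type} [Field k] [CommRing R] {m : ℕ} {σ : Type}

/-- Entry-wise ring hom from power series over `R` to matrices of power series over `k`. -/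
noncomputable def coeffMatHom (ρ : R →+* Matrix (Fin m) (Fin m) k) :
    MvPowerSeries σ R →+* Matrix (Fin m) (Fin m) (MvPowerSeries σ k) where
  toFun s := Matrix.of fun i j => (fun d => ρ (MvPowerSeries.coeff (R := R) d s) i j : MvPowerSeries σ k)
  map_one' := by
    classical
    refine Matrix.ext fun i j => MvPowerSeries.ext fun d => ?_
    trans ρ (MvPowerSeries.coeff (R := R) d 1) i j
    · rfl
    by_cases hd : d = 0 <;> by_cases hij : i = j <;>
      simp [hd, hij, Matrix.one_apply, MvPowerSeries.coeff_one]
  map_mul' s t := by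
    classical
    refine Matrix.ext fun i j => MvPowerSeries.ext fun d => ?_
    trans ρ (MvPowerSeries.coeff (R := R) d (s * t)) i j
    · rfl
    rw [MvPowerSeries.coeff_mul, map_sum ρ, Matrix.sum_apply, Matrix.mul_apply,
      map_sum (MvPowerSeries.coeff (R := k) d)]
    simp only [MvPowerSeries.coeff_mul]
    rw [Finset.sum_comm]
    refine Finset.sum_congr rfl fun p _ => ?_
    rw [_root_.map_mul, Matrix.mul_apply]
    exact Finset.sum_congr rfl fun r _ => rfl
  map_zero' := by
    refine Matrix.ext fun i j => MvPowerSeries.ext fun d => ?_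
    trans ρ (MvPowerSeries.coeff (R := R) d 0) i j
    · rfl
    simp
  map_add' s t := by
    refine Matrix.ext fun i j => MvPowerSeries.ext fun d => ?_
    trans ρ (MvPowerSeries.coeff (R := R) d (s + t)) i j
    · rfl
    rw [map_add (MvPowerSeries.coeff (R := R) d), map_add ρ, Matrix.add_apply, Matrix.add_apply,
      map_add (MvPowerSeries.coeff (R := k) d)]
    rfl

lemma inflate_eq_comp {N : Type} [Fintype N] [DecidableEq N]
    (ρ : R →+* Matrix (Fin m) (Fin m) k) (M : Matrix N N (MvPowerSeries σ R)) :
    inflate ρ M = Matrix.compRingEquiv N (Fin m) (MvPowerSeries σ k)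
      ((coeffMatHom ρ).mapMatrix M) := rfl

lemma inflate_mul {N : Type} [Fintype N] [DecidableEq N]
    (ρ : R →+* Matrix (Fin m) (Fin m) k) (M M' : Matrix N N (MvPowerSeries σ R)) :
    inflate ρ (M * M') = inflate ρ M * inflate ρ M' := by
  simp only [inflate_eq_comp, _root_.map_mul]


lemma knorrerPair_mul {S : Type} [CommRing S] (u v : ℕ → S) (i : ℕ) :
    (knorrerPair u v i).1 * (knorrerPair u v i).2
        = (∑ j ∈ Finset.range (i + 1), u j * v j) • 1 ∧
      (knorrerPair u v i).2 * (knorrerPair u v i).1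
        = (∑ j ∈ Finset.range (i + 1), u j * v j) • 1 := by
  induction i with
  | zero =>
      haveI : Subsingleton (Fin (2 ^ 0)) := by
        rw [pow_zero]; infer_instance
      constructor <;>
      · ext a b
        rw [Matrix.mul_apply]
        simp [knorrerPair, Matrix.one_apply, Subsingleton.elim a b,
          Finset.card_univ, mul_comm]
  | succ i ih =>
      obtain ⟨ih1, ih2⟩ := ih
      set e : Fin (2 ^ i) ⊕ Fin (2 ^ i) ≃ Fin (2 ^ (i + 1)) :=
        finSumFinEquiv.trans (finCongr (by rw [pow_succ, mul_two])) with he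
      have key : ∀ A B : Matrix (Fin (2 ^ i) ⊕ Fin (2 ^ i)) (Fin (2 ^ i) ⊕ Fin (2 ^ i)) S,
          (Matrix.reindex e e A) * (Matrix.reindex e e B) = Matrix.reindex e e (A * B) := by
        intro A B
        simp [Matrix.reindex_apply, Matrix.submatrix_mul_equiv]
      set s := ∑ j ∈ Finset.range (i + 1), u j * v j with hs
      have hblock : ∀ (φ ψ : Matrix (Fin (2 ^ i)) (Fin (2 ^ i)) S) (a b : S),
          φ * ψ = s • 1 → ψ * φ = s • 1 →
          Matrix.fromBlocks φ ((-b) • 1) (a • 1) ψ *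
            Matrix.fromBlocks ψ (b • 1) ((-a) • 1) φ
            = (s + a * b) • (1 : Matrix _ _ S) := by
        intro φ ψ a b h1 h2
        rw [Matrix.fromBlocks_multiply, h1, h2, ← Matrix.fromBlocks_one,
          Matrix.fromBlocks_smul]
        congr 1 <;>
          simp [Matrix.smul_mul, Matrix.mul_smul, smul_smul, add_smul, mul_comm, add_comm]
      have hone : ∀ c : S, Matrix.reindex e e (c • (1 : Matrix _ _ S)) = c • 1 := by
        intro c
        simp [Matrix.reindex_apply, Matrix.submatrix_smul, Matrix.submatrix_one_equiv]
      have hsum : s + u (i + 1) * v (i + 1) = ∑ j ∈ Finset.range (i + 1 + 1), u j * v j := by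
        rw [Finset.sum_range_succ, hs]
      constructor
      · show Matrix.reindex e e _ * Matrix.reindex e e _ = _
        rw [key, hblock _ _ _ _ ih1 ih2, hsum, hone]
      · show Matrix.reindex e e _ * Matrix.reindex e e _ = _
        have h2 := hblock (knorrerPair u v i).2 (knorrerPair u v i).1
          (-(u (i + 1))) (-(v (i + 1))) ih2 ih1
        rw [neg_neg, neg_neg, neg_mul_neg] at h2
        rw [key, h2, hsum, hone]

lemma inflate_smul_one {k R : Type} [Field k] [CommRing R] [Algebra k R] {m : ℕ} {σ : Type}
    {N : Type} [DecidableEq N]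
    (ρ : R →ₐ[k] Matrix (Fin m) (Fin m) k) (f : MvPowerSeries σ k) :
    inflate ρ.toRingHom
        ((MvPowerSeries.map (σ := σ) (algebraMap k R) f) • (1 : Matrix N N (MvPowerSeries σ R)))
      = f • 1 := by
  refine Matrix.ext fun p q => MvPowerSeries.ext fun d => ?_
  trans ρ (MvPowerSeries.coeff (R := R) d
      (((MvPowerSeries.map (σ := σ) (algebraMap k R) f) • (1 : Matrix N N (MvPowerSeries σ R)))
        p.1 q.1)) p.2 q.2
  · rfl
  rw [Matrix.smul_apply, Matrix.one_apply, Matrix.smul_apply, Matrix.one_apply]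
  by_cases hp : p.1 = q.1
  · by_cases hm : p.2 = q.2
    · simp [hp, hm, Prod.ext_iff, smul_eq_mul, MvPowerSeries.coeff_map,
        AlgHom.commutes, Matrix.algebraMap_matrix_apply]
    · simp [hp, hm, Prod.ext_iff, smul_eq_mul, MvPowerSeries.coeff_map,
        AlgHom.commutes, Matrix.algebraMap_matrix_apply]
  · have hpq : ¬ p = q := fun hh => hp (congrArg Prod.fst hh)
    simp [hp, hpq, smul_eq_mul]

end KPAux

/-- Let `f ∈ k[[x_1,…,x_n,z]]` be written (with parameters
`a_1,…,a_n`) as `f = z²·h + ∑ᵢ (xᵢ - aᵢ z)·gᵢ`.  The parameters, together with the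
pairwise commuting `m × m` matrices `A_i` substituted for them, are encoded by a
commutative `k`-algebra `R` and an algebra map `ρ : R → Matₘ(k)` with `A_i = ρ(aᵢ)`;
`h, gᵢ` are power series with coefficients in `R`.  Inflating the inductively defined
matrix factorization `(φ_0,ψ_0) = ([z²],[h])`,
`(φ_i,ψ_i) = ([[φ_{i-1}, -gᵢ·1],[(xᵢ-aᵢz)·1, ψ_{i-1}]], [[ψ_{i-1}, gᵢ·1],[(-xᵢ+aᵢz)·1, φ_{i-1}]])`
yields a pair `(Φ_n, Ψ_n)` of `m·2ⁿ × m·2ⁿ` matrices over `k[[x_1,…,x_n,z]]` with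
`Φ_n Ψ_n = Ψ_n Φ_n = f · 1`. -/
theorem inflated_knorrerPair_is_matrix_factorization
    (k : Type) [Field k] (n m : ℕ)
    (R : Type) [CommRing R] [Algebra k R]
    (ρ : R →ₐ[k] Matrix (Fin m) (Fin m) k)
    (a : Fin n → R)
    (f : MvPowerSeries (Option (Fin n)) k)
    (h : MvPowerSeries (Option (Fin n)) R)
    (g : Fin n → MvPowerSeries (Option (Fin n)) R)
    (hf : MvPowerSeries.map (σ := Option (Fin n)) (algebraMap k R) f
        = (MvPowerSeries.X none) ^ 2 * h +
          ∑ i : Fin n,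
            (MvPowerSeries.X (some i)
              - MvPowerSeries.C (σ := Option (Fin n)) (R := R) (a i) * MvPowerSeries.X none) * g i) :
    let u : ℕ → MvPowerSeries (Option (Fin n)) R := fun j =>
      match j with
      | 0 => (MvPowerSeries.X none) ^ 2
      | j + 1 => if hj : j < n then
          MvPowerSeries.X (some ⟨j, hj⟩)
            - MvPowerSeries.C (σ := Option (Fin n)) (R := R) (a ⟨j, hj⟩) * MvPowerSeries.X none
        else 0
    let v : ℕ → MvPowerSeries (Option (Fin n)) R := fun j =>
      match j with
      | 0 => h
      | j + 1 => if hj : j < n then g ⟨j, hj⟩ else 0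
    let P := knorrerPair u v n
    inflate ρ.toRingHom P.1 * inflate ρ.toRingHom P.2 = f • 1 ∧
      inflate ρ.toRingHom P.2 * inflate ρ.toRingHom P.1 = f • 1 := by
  intro u v P
  have hP : P = knorrerPair u v n := rfl
  obtain ⟨h1, h2⟩ := knorrerPair_mul u v n
  have hsum : MvPowerSeries.map (σ := Option (Fin n)) (algebraMap k R) f
      = ∑ j ∈ Finset.range (n + 1), u j * v j := by
    rw [hf, Finset.sum_range_succ', add_comm]
    congr 1
    · rw [← Fin.sum_univ_eq_sum_range (fun j => u (j + 1) * v (j + 1)) n]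
      refine Finset.sum_congr rfl fun i _ => ?_
      show (MvPowerSeries.X (some i)
          - MvPowerSeries.C (σ := Option (Fin n)) (R := R) (a i) * MvPowerSeries.X none) * g i
        = (if hj : (i : ℕ) < n then
            MvPowerSeries.X (some ⟨(i : ℕ), hj⟩)
              - MvPowerSeries.C (σ := Option (Fin n)) (R := R) (a ⟨(i : ℕ), hj⟩) * MvPowerSeries.X none
          else 0) * (if hj : (i : ℕ) < n then g ⟨(i : ℕ), hj⟩ else 0)
      rw [dif_pos i.isLt, dif_pos i.isLt]
  constructor
  · rw [← inflate_mul, hP, h1, ← hsum]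
    exact inflate_smul_one ρ f
  · rw [← inflate_mul, hP, h2, ← hsum]
    exact inflate_smul_one ρ f
end

section
/- Let k be an infinite field and V, V' finite-dimensional modules over the free algebra k⟨x_1,...,x_m⟩, with the action of x_i on V given by X_i ∈ End_k(V) and on V' by X_i'. Fix m distinct scalars c_1,...,c_m ∈ k and define k⟨a,b⟩-module structures on V^m and (V')^m where a acts by the block diagonal matrix diag(c_1 id, ..., c_m id) and b acts by the block matrix with X_1,...,X_m on the diagonal and identity blocks on the subdiagonal (and the analogous operators A', B' on (V')^m). If S: V^m → (V')^m is k-linear with SA = A'S and SB = B'S, then S = diag(σ,...,σ) for a single map σ: V → V' satisfying σX_i = X_i'σ for all i. -/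
open Matrix

/-- Example 2.3 of the paper, Gelfand–Ponomarev.  Let `k` be a field
with `m` distinct scalars `c_1,…,c_m`, and let `V = k^{nV}`, `V' = k^{nV'}` carry
`k⟨x_1,…,x_m⟩`-module structures via operators `X_i`, `X_i'`.  Put on `V^m`, `(V')^m`
the `k⟨a,b⟩`-module structures where `a` acts by `A = diag(c_1·1,…,c_m·1)` and `b` acts
by the block matrix `B` with `X_1,…,X_m` on the diagonal and identity blocks on the
subdiagonal (resp. `A'`, `B'`).  If `S : V^m → (V')^m` is `k`-linear with `SA = A'S`
and `SB = B'S`, then `S = diag(σ,…,σ)` for a single map `σ : V → V'` satisfying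
`σX_i = X_i'σ` for all `i`. -/
theorem gelfand_ponomarev_intertwiner
    (k : Type) [Field k] (m nV nV' : ℕ)
    (c : Fin m → k) (hc : Function.Injective c)
    (X : Fin m → Matrix (Fin nV) (Fin nV) k)
    (X' : Fin m → Matrix (Fin nV') (Fin nV') k)
    (A : Matrix (Fin m × Fin nV) (Fin m × Fin nV) k)
    (hA : A = Matrix.of fun p q => if p.1 = q.1 ∧ p.2 = q.2 then c p.1 else 0)
    (A' : Matrix (Fin m × Fin nV') (Fin m × Fin nV') k)
    (hA' : A' = Matrix.of fun p q => if p.1 = q.1 ∧ p.2 = q.2 then c p.1 else 0)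
    (B : Matrix (Fin m × Fin nV) (Fin m × Fin nV) k)
    (hB : B = Matrix.of fun p q =>
      if p.1 = q.1 then X p.1 p.2 q.2
      else if (p.1 : ℕ) = (q.1 : ℕ) + 1 then (if p.2 = q.2 then 1 else 0) else 0)
    (B' : Matrix (Fin m × Fin nV') (Fin m × Fin nV') k)
    (hB' : B' = Matrix.of fun p q =>
      if p.1 = q.1 then X' p.1 p.2 q.2
      else if (p.1 : ℕ) = (q.1 : ℕ) + 1 then (if p.2 = q.2 then 1 else 0) else 0)
    (S : Matrix (Fin m × Fin nV') (Fin m × Fin nV) k)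
    (hSA : S * A = A' * S) (hSB : S * B = B' * S) :
    ∃ σ : Matrix (Fin nV') (Fin nV) k,
      (∀ p q, S p q = if p.1 = q.1 then σ p.2 q.2 else 0) ∧
      ∀ i, σ * X i = X' i * σ := by
  subst hA hA' hB hB'
  -- off-diagonal blocks vanish
  have hS0 : ∀ (p : Fin m × Fin nV') (q : Fin m × Fin nV), p.1 ≠ q.1 → S p q = 0 := by
    intro p q h
    have e := congrFun (congrFun hSA p) q
    rw [Matrix.mul_apply, Matrix.mul_apply] at e
    have l : ∑ r, S p r * (Matrix.of fun p q => if p.1 = q.1 ∧ p.2 = q.2 then c p.1 else 0) r q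
        = S p q * c q.1 := by
      rw [Finset.sum_eq_single q]
      · simp
      · intro r _ hr
        have : ¬(r.1 = q.1 ∧ r.2 = q.2) := by
          intro hh; exact hr (Prod.ext hh.1 hh.2)
        simp [this]
      · simp
    have r : ∑ r, (Matrix.of fun p q => if p.1 = q.1 ∧ p.2 = q.2 then c p.1 else 0) p r * S r q
        = c p.1 * S p q := by
      rw [Finset.sum_eq_single p]
      · simp
      · intro r _ hr
        have : ¬(p.1 = r.1 ∧ p.2 = r.2) := by
          intro hh; exact hr (Prod.ext hh.1.symm hh.2.symm)
        simp [this]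
      · simp
    rw [l, r] at e
    by_contra hne
    have e2 : S p q * c q.1 = S p q * c p.1 := by rw [e]; ring
    exact h ((hc (mul_left_cancel₀ hne e2)).symm)
  -- generic evaluation of the (i,a),(j,b) entry of hSB
  have hkey : ∀ (i j : Fin m) (a : Fin nV') (b : Fin nV),
      (∑ s, S (i,a) (i,s) * (if i = j then X i s b
        else if (i:ℕ) = (j:ℕ)+1 then (if s = b then (1:k) else 0) else 0))
      = ∑ s, (if i = j then X' i a s
        else if (i:ℕ) = (j:ℕ)+1 then (if a = s then (1:k) else 0) else 0) * S (j,s) (j,b) := by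
    intro i j a b
    have e := congrFun (congrFun hSB (i,a)) (j,b)
    rw [Matrix.mul_apply, Matrix.mul_apply, Fintype.sum_prod_type, Fintype.sum_prod_type] at e
    simp only [Matrix.of_apply] at e
    rw [Finset.sum_eq_single_of_mem i (Finset.mem_univ i), Finset.sum_eq_single_of_mem j (Finset.mem_univ j)] at e
    · exact e
    · intro r _ hr
      apply Finset.sum_eq_zero
      intro s _
      rw [hS0 (r,s) (j,b) hr, mul_zero]
    · intro r _ hr
      apply Finset.sum_eq_zero
      intro s _
      rw [hS0 (i,a) (r,s) (fun hh => hr hh.symm), zero_mul]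
  -- diagonal relation
  have key1 : ∀ (i : Fin m) (a : Fin nV') (b : Fin nV),
      (∑ s, S (i,a) (i,s) * X i s b) = ∑ s, X' i a s * S (i,s) (i,b) := by
    intro i a b
    have := hkey i i a b
    simpa using this
  -- subdiagonal relation : successive blocks agree
  have key2 : ∀ (i j : Fin m) (a : Fin nV') (b : Fin nV), (i:ℕ) = (j:ℕ)+1 →
      S (i,a) (i,b) = S (j,a) (j,b) := by
    intro i j a b hij
    have hij' : i ≠ j := by
      intro hh; rw [hh] at hij; omega
    have := hkey i j a b
    simpa [hij', hij] using this
  rcases Nat.eq_zero_or_pos m with hm | hm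
  · subst hm
    exact ⟨0, fun p _ => p.1.elim0, fun i => i.elim0⟩
  · set i0 : Fin m := ⟨0, hm⟩ with hi0
    have blockeq : ∀ (v : ℕ) (h : v < m) (a : Fin nV') (b : Fin nV),
        S (⟨v,h⟩, a) (⟨v,h⟩, b) = S (i0, a) (i0, b) := by
      intro v
      induction v with
      | zero => intro h a b; rfl
      | succ n ih =>
        intro h a b
        have hn : n < m := Nat.lt_of_succ_lt h
        rw [key2 ⟨n+1,h⟩ ⟨n,hn⟩ a b rfl]
        exact ih hn a b
    have blockeq' : ∀ (i : Fin m) (a : Fin nV') (b : Fin nV),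
        S (i, a) (i, b) = S (i0, a) (i0, b) := fun i a b => blockeq i.1 i.2 a b
    refine ⟨Matrix.of fun a b => S (i0,a) (i0,b), ?_, ?_⟩
    · rintro ⟨p1, p2⟩ ⟨q1, q2⟩
      dsimp only
      split
      · next hpq =>
        subst hpq
        exact blockeq' p1 p2 q2
      · next hpq => exact hS0 (p1,p2) (q1,q2) hpq
    · intro i
      ext a b
      rw [Matrix.mul_apply, Matrix.mul_apply]
      have h2 := key1 i a b
      simp only [blockeq' i] at h2
      simpa using h2
end

section
/- With the matrices A and B of the Drozd construction (built from commuting operators X, Y on a finite-dimensional vector space V and 5 distinct scalars), one has AB = BA, A² = 0, AB² = 0, and B³ = 0; hence A and B define a module structure over R = k[a,b]/(a², ab², b³) on V^(32). -/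
open Matrix

/-- The matrix `A` of Drozd's Example 2.4: the `32·n`-square block matrix
`[[0,0,I₁₅],[0,0,0],[0,0,0]]` (blocks of size `n`, outer sizes `15n, 2n, 15n`). -/
def drozdA (k : Type) [Field k] (n : ℕ) :
    Matrix (Fin 32 × Fin n) (Fin 32 × Fin n) k :=
  Matrix.of fun p q =>
    if (p.1 : ℕ) < 15 ∧ (q.1 : ℕ) = (p.1 : ℕ) + 17 then (if p.2 = q.2 then 1 else 0)
    else 0

/-- The matrix `B` of Drozd's Example 2.4: the `32·n`-square block matrix
`[[B₁,0,B₂],[0,0,B₃],[0,0,B₁]]` with `B₁ = [[0,0,I₅],[0,0,0],[0,0,0]]`,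
`B₂ = [[0,0,0],[I₅,0,0],[0,C,0]]`, `B₃ = [0,D,0]`, `C = diag(c₁·1,…,c₅·1)` and
`D = [[1,0,1,1,1],[0,1,1,X,Y]]`, written out entrywise in terms of the `32 × 32` grid
of `n × n` blocks. -/
def drozdB (k : Type) [Field k] (n : ℕ) (c : Fin 5 → k)
    (X Y : Matrix (Fin n) (Fin n) k) :
    Matrix (Fin 32 × Fin n) (Fin 32 × Fin n) k :=
  Matrix.of fun p q =>
    let i := (p.1 : ℕ); let j := (q.1 : ℕ)
    if i < 5 ∧ j = i + 10 then (if p.2 = q.2 then 1 else 0)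
    else if 5 ≤ i ∧ i < 10 ∧ j = i + 12 then (if p.2 = q.2 then 1 else 0)
    else if h : 10 ≤ i ∧ i < 15 ∧ j = i + 12 then
      (if p.2 = q.2 then c ⟨i - 10, by omega⟩ else 0)
    else if i = 15 ∧ (j = 22 ∨ j = 24 ∨ j = 25 ∨ j = 26) then (if p.2 = q.2 then 1 else 0)
    else if i = 16 ∧ (j = 23 ∨ j = 24) then (if p.2 = q.2 then 1 else 0)
    else if i = 16 ∧ j = 25 then X p.2 q.2
    else if i = 16 ∧ j = 26 then Y p.2 q.2
    else if 17 ≤ i ∧ i < 22 ∧ j = i + 10 then (if p.2 = q.2 then 1 else 0)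
    else 0

namespace DrozdAux

open Kronecker

variable {k : Type} [Field k] {n : ℕ}

/-- The `32 × 32` scalar skeleton of `drozdA`. -/
def A0 (k : Type) [Field k] : Matrix (Fin 32) (Fin 32) k :=
  Matrix.of fun i j => if (i : ℕ) < 15 ∧ (j : ℕ) = (i : ℕ) + 17 then 1 else 0

/-- The `32 × 32` scalar skeleton of `drozdB` (the `X`, `Y` entries removed). -/
def B0 (k : Type) [Field k] (c : Fin 5 → k) : Matrix (Fin 32) (Fin 32) k :=
  Matrix.of fun i j =>
    if (i : ℕ) < 5 ∧ (j : ℕ) = (i : ℕ) + 10 then 1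
    else if 5 ≤ (i : ℕ) ∧ (i : ℕ) < 10 ∧ (j : ℕ) = (i : ℕ) + 12 then 1
    else if h : 10 ≤ (i : ℕ) ∧ (i : ℕ) < 15 ∧ (j : ℕ) = (i : ℕ) + 12 then
      c ⟨(i : ℕ) - 10, by omega⟩
    else if (i : ℕ) = 15 ∧ ((j : ℕ) = 22 ∨ (j : ℕ) = 24 ∨ (j : ℕ) = 25 ∨ (j : ℕ) = 26) then 1
    else if (i : ℕ) = 16 ∧ ((j : ℕ) = 23 ∨ (j : ℕ) = 24) then 1
    else if 17 ≤ (i : ℕ) ∧ (i : ℕ) < 22 ∧ (j : ℕ) = (i : ℕ) + 10 then 1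
    else 0

lemma A0_eq_zero {i j : Fin 32} (h : ¬((i : ℕ) < 15 ∧ (j : ℕ) = (i : ℕ) + 17)) :
    A0 k i j = 0 := by
  simp [A0, h]

lemma B0_eq_zero (c : Fin 5 → k) {i j : Fin 32}
    (h : 22 ≤ (i : ℕ) ∨ (j : ℕ) < 10 ∨ (j : ℕ) = 16) : B0 k c i j = 0 := by
  simp only [B0, Matrix.of_apply]
  split_ifs <;> first | rfl | (exfalso; omega)

lemma A0_mul_apply (M : Matrix (Fin 32) (Fin 32) k) (i j : Fin 32) :
    (A0 k * M) i j = if h : (i : ℕ) < 15 then M ⟨(i : ℕ) + 17, by omega⟩ j else 0 := by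
  rw [Matrix.mul_apply]
  split
  · next h =>
    rw [Finset.sum_eq_single (⟨(i : ℕ) + 17, by omega⟩ : Fin 32)]
    · simp [A0, h]
    · intro r _ hr
      have : ¬((i : ℕ) < 15 ∧ (r : ℕ) = (i : ℕ) + 17) := by
        rintro ⟨-, h2⟩; exact hr (Fin.ext h2)
      simp [A0, this]
    · simp
  · next h =>
    apply Finset.sum_eq_zero; intro r _
    simp [A0, h]

lemma mul_A0_apply (M : Matrix (Fin 32) (Fin 32) k) (i j : Fin 32) :
    (M * A0 k) i j = if h : 17 ≤ (j : ℕ) then M i ⟨(j : ℕ) - 17, by omega⟩ else 0 := by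
  rw [Matrix.mul_apply]
  split
  · next h =>
    rw [Finset.sum_eq_single (⟨(j : ℕ) - 17, by omega⟩ : Fin 32)]
    · have h1 : A0 k ⟨(j : ℕ) - 17, by omega⟩ j = 1 := by
        show (if ((j : ℕ) - 17 < 15 ∧ (j : ℕ) = (j : ℕ) - 17 + 17) then (1:k) else 0) = 1
        rw [if_pos (by omega)]
      rw [h1, mul_one]
    · intro r _ hr
      have : ¬((r : ℕ) < 15 ∧ (j : ℕ) = (r : ℕ) + 17) := by
        rintro ⟨-, h2⟩
        exact hr (Fin.ext (show (r : ℕ) = (j : ℕ) - 17 by omega))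
      simp [A0, this]
    · simp
  · next h =>
    apply Finset.sum_eq_zero; intro r _
    have : ¬((r : ℕ) < 15 ∧ (j : ℕ) = (r : ℕ) + 17) := by omega
    simp [A0, this]

set_option maxHeartbeats 1600000 in
/-- `A₀B₀ = B₀A₀`. -/
lemma A0_mul_B0_comm (c : Fin 5 → k) : A0 k * B0 k c = B0 k c * A0 k := by
  ext i j
  rw [A0_mul_apply, mul_A0_apply]
  by_cases h1 : (i : ℕ) < 15 <;> by_cases h2 : 17 ≤ (j : ℕ) <;>
    simp only [h1, h2, dif_pos, dif_neg, not_false_iff, B0, Matrix.of_apply] <;>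
    split_ifs <;> first | rfl | (exfalso; omega)

lemma A0_mul_A0 : A0 k * A0 k = 0 := by
  ext i j
  rw [A0_mul_apply]
  split
  · exact A0_eq_zero (by simp only [Fin.val_mk]; omega)
  · simp

/-- Rows `≥ 10` of `B₀ * B₀` vanish. -/
lemma B0_mul_B0_row (c : Fin 5 → k) {i : Fin 32} (hi : 10 ≤ (i : ℕ)) (j : Fin 32) :
    (B0 k c * B0 k c) i j = 0 := by
  rw [Matrix.mul_apply]
  apply Finset.sum_eq_zero; intro s _
  by_cases hs : 22 ≤ (s : ℕ)
  · rw [B0_eq_zero c (Or.inl hs), mul_zero]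
  · have : B0 k c i s = 0 := by
      simp only [B0, Matrix.of_apply]
      split_ifs <;> first | rfl | (exfalso; omega)
    rw [this, zero_mul]

/-- Every column of `B₀` in which `B₀` is nonzero has index `≥ 10`. -/
lemma B0_mul_B0_mul_B0 (c : Fin 5 → k) : B0 k c * (B0 k c * B0 k c) = 0 := by
  ext i j
  rw [Matrix.mul_apply]
  simp only [Matrix.zero_apply]
  apply Finset.sum_eq_zero; intro s _
  by_cases hs : 10 ≤ (s : ℕ)
  · rw [B0_mul_B0_row c hs, mul_zero]
  · have : B0 k c i s = 0 := B0_eq_zero c (by omega)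
    rw [this, zero_mul]

lemma A0_mul_B0_mul_B0 (c : Fin 5 → k) : A0 k * B0 k c * B0 k c = 0 := by
  rw [Matrix.mul_assoc]
  ext i j
  rw [A0_mul_apply]
  simp only [Matrix.zero_apply]
  split
  · exact B0_mul_B0_row c (by simp only [Fin.val_mk]; omega) j
  · rfl

lemma A0_col16 (a : Fin 32) : A0 k a (16 : Fin 32) = 0 :=
  A0_eq_zero (by omega)

lemma B0_col16 (c : Fin 5 → k) (a : Fin 32) : B0 k c a (16 : Fin 32) = 0 :=
  B0_eq_zero c (by right; right; rfl)

lemma A0B0_col16 (c : Fin 5 → k) (a : Fin 32) : (A0 k * B0 k c) a (16 : Fin 32) = 0 := by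
  rw [A0_mul_apply]
  split
  · exact B0_col16 c _
  · rfl

lemma B0B0_col16 (c : Fin 5 → k) (a : Fin 32) : (B0 k c * B0 k c) a (16 : Fin 32) = 0 := by
  rw [Matrix.mul_apply]
  apply Finset.sum_eq_zero; intro s _
  rw [B0_col16, mul_zero]

lemma mul_stdBasis_eq_zero (M : Matrix (Fin 32) (Fin 32) k) (i j : Fin 32)
    (h : ∀ a, M a i = 0) : M * single i j (1 : k) = 0 := by
  ext a b
  rw [Matrix.mul_apply]
  simp only [Matrix.zero_apply]
  apply Finset.sum_eq_zero; intro r _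
  by_cases hr : i = r
  · subst hr; rw [h, zero_mul]
  · simp [single, hr]

lemma stdBasis_mul_eq_zero (M : Matrix (Fin 32) (Fin 32) k) (i j : Fin 32)
    (h : ∀ b, M j b = 0) : single i j (1 : k) * M = 0 := by
  ext a b
  rw [Matrix.mul_apply]
  simp only [Matrix.zero_apply]
  apply Finset.sum_eq_zero; intro r _
  by_cases hr : j = r
  · subst hr; rw [h, mul_zero]
  · simp [single, hr]

lemma drozdA_eq (n : ℕ) : drozdA k n = A0 k ⊗ₖ (1 : Matrix (Fin n) (Fin n) k) := by
  ext ⟨i, x⟩ ⟨j, y⟩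
  simp only [drozdA, A0, Matrix.of_apply, Matrix.kroneckerMap_apply, Matrix.one_apply]
  split_ifs <;> simp

set_option maxHeartbeats 1600000 in
lemma drozdB_eq (n : ℕ) (c : Fin 5 → k) (X Y : Matrix (Fin n) (Fin n) k) :
    drozdB k n c X Y =
      B0 k c ⊗ₖ (1 : Matrix (Fin n) (Fin n) k)
        + single (16 : Fin 32) (25 : Fin 32) (1 : k) ⊗ₖ X
        + single (16 : Fin 32) (26 : Fin 32) (1 : k) ⊗ₖ Y := by
  ext ⟨i, x⟩ ⟨j, y⟩
  simp only [drozdB, B0, single, Matrix.of_apply, Matrix.kroneckerMap_apply,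
    Matrix.one_apply, Matrix.add_apply, Fin.ext_iff]
  have h16 : ((16 : Fin 32) : ℕ) = 16 := rfl
  have h25 : ((25 : Fin 32) : ℕ) = 25 := rfl
  have h26 : ((26 : Fin 32) : ℕ) = 26 := rfl
  rw [h16, h25, h26]
  split_ifs <;> first | omega | ring

section Assemble

variable (n : ℕ) (c : Fin 5 → k) (X Y : Matrix (Fin n) (Fin n) k)

local notation "E₁" => single (16 : Fin 32) (25 : Fin 32) (1 : k)
local notation "E₂" => single (16 : Fin 32) (26 : Fin 32) (1 : k)

lemma E_row (j r b : Fin 32) (h : (16 : Fin 32) ≠ r) :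
    single (16 : Fin 32) j (1 : k) r b = 0 := by
  simp only [single, Matrix.of_apply]
  rw [if_neg]
  rintro ⟨h1, -⟩
  exact h h1

lemma AB_eq : drozdA k n * drozdB k n c X Y =
    (A0 k * B0 k c) ⊗ₖ (1 : Matrix (Fin n) (Fin n) k) := by
  rw [drozdA_eq, drozdB_eq, Matrix.mul_add, Matrix.mul_add,
    ← mul_kronecker_mul, ← mul_kronecker_mul, ← mul_kronecker_mul,
    mul_stdBasis_eq_zero (A0 k) _ _ (fun a => A0_col16 a),
    mul_stdBasis_eq_zero (A0 k) _ _ (fun a => A0_col16 a),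
    zero_kronecker, zero_kronecker, add_zero, add_zero, Matrix.one_mul]

lemma BA_eq : drozdB k n c X Y * drozdA k n =
    (B0 k c * A0 k) ⊗ₖ (1 : Matrix (Fin n) (Fin n) k) := by
  rw [drozdA_eq, drozdB_eq, Matrix.add_mul, Matrix.add_mul,
    ← mul_kronecker_mul, ← mul_kronecker_mul, ← mul_kronecker_mul,
    stdBasis_mul_eq_zero (A0 k) _ _ (fun b => A0_eq_zero (by simp)),
    stdBasis_mul_eq_zero (A0 k) _ _ (fun b => A0_eq_zero (by simp)),
    zero_kronecker, zero_kronecker, add_zero, add_zero, Matrix.one_mul]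

lemma BB_eq : drozdB k n c X Y * drozdB k n c X Y =
    (B0 k c * B0 k c) ⊗ₖ (1 : Matrix (Fin n) (Fin n) k) := by
  have hBE1 : B0 k c * E₁ = 0 := mul_stdBasis_eq_zero _ _ _ (fun a => B0_col16 c a)
  have hBE2 : B0 k c * E₂ = 0 := mul_stdBasis_eq_zero _ _ _ (fun a => B0_col16 c a)
  have hE1B : E₁ * B0 k c = 0 :=
    stdBasis_mul_eq_zero _ _ _ (fun b => B0_eq_zero c (by left; decide))
  have hE2B : E₂ * B0 k c = 0 :=
    stdBasis_mul_eq_zero _ _ _ (fun b => B0_eq_zero c (by left; decide))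
  have hE11 : E₁ * E₁ = 0 := stdBasis_mul_eq_zero _ _ _ (fun b => E_row 25 25 b (by decide))
  have hE12 : E₁ * E₂ = 0 := stdBasis_mul_eq_zero _ _ _ (fun b => E_row 26 25 b (by decide))
  have hE21 : E₂ * E₁ = 0 := stdBasis_mul_eq_zero _ _ _ (fun b => E_row 25 26 b (by decide))
  have hE22 : E₂ * E₂ = 0 := stdBasis_mul_eq_zero _ _ _ (fun b => E_row 26 26 b (by decide))
  rw [drozdB_eq]
  simp only [Matrix.add_mul, Matrix.mul_add, ← mul_kronecker_mul,
    hBE1, hBE2, hE1B, hE2B, hE11, hE12, hE21, hE22,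
    zero_kronecker, add_zero, zero_add, Matrix.one_mul]

lemma ABB_eq : drozdA k n * drozdB k n c X Y * drozdB k n c X Y = 0 := by
  rw [AB_eq, drozdB_eq, Matrix.mul_add, Matrix.mul_add,
    ← mul_kronecker_mul, ← mul_kronecker_mul, ← mul_kronecker_mul,
    mul_stdBasis_eq_zero _ _ _ (fun a => A0B0_col16 c a),
    mul_stdBasis_eq_zero _ _ _ (fun a => A0B0_col16 c a),
    Matrix.one_mul, A0_mul_B0_mul_B0,
    zero_kronecker, zero_kronecker, zero_kronecker, add_zero, add_zero]

lemma AA_eq : drozdA k n * drozdA k n = 0 := by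
  rw [drozdA_eq, ← mul_kronecker_mul, A0_mul_A0, zero_kronecker]

lemma BBB_eq : drozdB k n c X Y * drozdB k n c X Y * drozdB k n c X Y = 0 := by
  rw [BB_eq, drozdB_eq, Matrix.mul_add, Matrix.mul_add,
    ← mul_kronecker_mul, ← mul_kronecker_mul, ← mul_kronecker_mul,
    mul_stdBasis_eq_zero _ _ _ (fun a => B0B0_col16 c a),
    mul_stdBasis_eq_zero _ _ _ (fun a => B0B0_col16 c a),
    Matrix.one_mul, Matrix.mul_assoc, B0_mul_B0_mul_B0,
    zero_kronecker, zero_kronecker, zero_kronecker, add_zero, add_zero]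

end Assemble

end DrozdAux

/-- part of Example 2.4, Drozd.  With the matrices `A`, `B` of the
Drozd construction (built from commuting operators `X, Y` on a finite-dimensional
space and 5 distinct scalars `c₁,…,c₅`), one has `AB = BA`, `A² = 0`, `AB² = 0` and
`B³ = 0`; hence `A` and `B` define a module structure over
`R = k[a,b]/(a², ab², b³)` on `V^(32)`, i.e. there is a `k`-algebra map
`R → End(V^(32))` sending `a ↦ A` and `b ↦ B`. -/
theorem drozd_matrices_satisfy_relations
    (k : Type) [Field k] (n : ℕ) (c : Fin 5 → k) (hc : Function.Injective c)
    (X Y : Matrix (Fin n) (Fin n) k) (hXY : Commute X Y) :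
    let A := drozdA k n
    let B := drozdB k n c X Y
    A * B = B * A ∧ A * A = 0 ∧ A * B * B = 0 ∧ B * B * B = 0 ∧
      ∃ φ : (MvPolynomial (Fin 2) k ⧸
          Ideal.span {(MvPolynomial.X 0 : MvPolynomial (Fin 2) k) ^ 2,
            MvPolynomial.X 0 * MvPolynomial.X 1 ^ 2,
            (MvPolynomial.X 1 : MvPolynomial (Fin 2) k) ^ 3})
          →ₐ[k] Matrix (Fin 32 × Fin n) (Fin 32 × Fin n) k,
        φ (Ideal.Quotient.mk _ (MvPolynomial.X 0)) = A ∧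
        φ (Ideal.Quotient.mk _ (MvPolynomial.X 1)) = B := by
  intro A B
  have hAB : A * B = B * A := by
    show drozdA k n * drozdB k n c X Y = drozdB k n c X Y * drozdA k n
    rw [DrozdAux.AB_eq, DrozdAux.BA_eq, DrozdAux.A0_mul_B0_comm]
  have hA2 : A * A = 0 := DrozdAux.AA_eq n
  have hAB2 : A * B * B = 0 := DrozdAux.ABB_eq n c X Y
  have hB3 : B * B * B = 0 := DrozdAux.BBB_eq n c X Y
  refine ⟨hAB, hA2, hAB2, hB3, ?_⟩
  have hcomm : ∀ x ∈ ({A, B} : Set (Matrix (Fin 32 × Fin n) (Fin 32 × Fin n) k)),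
      ∀ y ∈ ({A, B} : Set (Matrix (Fin 32 × Fin n) (Fin 32 × Fin n) k)), x * y = y * x := by
    intro x hx y hy
    simp only [Set.mem_insert_iff, Set.mem_singleton_iff] at hx hy
    rcases hx with hx | hx <;> rcases hy with hy | hy <;> rw [hx, hy] <;>
      first | rfl | exact hAB | exact hAB.symm
  letI : CommRing (Algebra.adjoin k ({A, B} : Set (Matrix (Fin 32 × Fin n) (Fin 32 × Fin n) k))) :=
    Algebra.adjoinCommRingOfComm k hcomm
  let a : Algebra.adjoin k ({A, B} : Set (Matrix (Fin 32 × Fin n) (Fin 32 × Fin n) k)) :=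
    ⟨A, Algebra.subset_adjoin (by left; rfl)⟩
  let b : Algebra.adjoin k ({A, B} : Set (Matrix (Fin 32 × Fin n) (Fin 32 × Fin n) k)) :=
    ⟨B, Algebra.subset_adjoin (by right; rfl)⟩
  let f : MvPolynomial (Fin 2) k →ₐ[k] Matrix (Fin 32 × Fin n) (Fin 32 × Fin n) k :=
    (Algebra.adjoin k ({A, B} : Set (Matrix (Fin 32 × Fin n) (Fin 32 × Fin n) k))).val.comp
      (MvPolynomial.aeval (R := k) ![a, b])
  have hf0 : f (MvPolynomial.X 0) = A := by
    simp [f, a, MvPolynomial.aeval_X]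
  have hf1 : f (MvPolynomial.X 1) = B := by
    simp [f, b, MvPolynomial.aeval_X]
  have hle : ∀ p ∈ Ideal.span {(MvPolynomial.X 0 : MvPolynomial (Fin 2) k) ^ 2,
      MvPolynomial.X 0 * MvPolynomial.X 1 ^ 2,
      (MvPolynomial.X 1 : MvPolynomial (Fin 2) k) ^ 3}, f p = 0 := by
    have hker : Ideal.span {(MvPolynomial.X 0 : MvPolynomial (Fin 2) k) ^ 2,
        MvPolynomial.X 0 * MvPolynomial.X 1 ^ 2,
        (MvPolynomial.X 1 : MvPolynomial (Fin 2) k) ^ 3} ≤ RingHom.ker f.toRingHom := by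
      rw [Ideal.span_le]
      rintro g hg
      simp only [Set.mem_insert_iff, Set.mem_singleton_iff] at hg
      rcases hg with rfl | rfl | rfl <;>
        simp only [SetLike.mem_coe, RingHom.mem_ker, AlgHom.toRingHom_eq_coe,
          RingHom.coe_coe, _root_.map_mul, map_pow, hf0, hf1]
      · rw [pow_two, hA2]
      · rw [pow_two, ← Matrix.mul_assoc, hAB2]
      · rw [pow_succ, pow_two, hB3]
    intro p hp
    exact hker hp
  refine ⟨Ideal.Quotient.liftₐ _ f hle, ?_, ?_⟩
  · rw [Ideal.Quotient.liftₐ_apply]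
    exact hf0
  · rw [Ideal.Quotient.liftₐ_apply]
    exact hf1
end

section
/- Let k be a field, X, Y, X', Y' be n×n matrices over k, and set D = [[I,0,I,I,I],[0,I,I,X,Y]] and D' = [[I,0,I,I,I],[0,I,I,X',Y']] (2n×5n block matrices). Suppose S is a 2n×2n matrix and Z_1,...,Z_5 are n×n matrices with S·D = D'·diag(Z_1,...,Z_5). Then S = diag(σ, σ) where σ = Z_1 = Z_2 = Z_3 = Z_4 = Z_5 and σX = X'σ and σY = Y'σ. -/
open Matrix

/-- Let `k` be a field, `X, Y, X', Y'` be `n × n` matrices, and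
`D = [[I,0,I,I,I],[0,I,I,X,Y]]`, `D' = [[I,0,I,I,I],[0,I,I,X',Y']]` (2n × 5n block
matrices).  If `S` is `2n × 2n` and `Z_1,…,Z_5` are `n × n` with
`S·D = D'·diag(Z_1,…,Z_5)`, then `S = diag(σ, σ)` where
`σ = Z_1 = Z_2 = Z_3 = Z_4 = Z_5`, `σX = X'σ` and `σY = Y'σ`. -/
theorem D_matrix_intertwiner
    (k : Type) [Field k] (n : ℕ)
    (X Y X' Y' : Matrix (Fin n) (Fin n) k)
    (Z : Fin 5 → Matrix (Fin n) (Fin n) k)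
    (D : Matrix (Fin 2 × Fin n) (Fin 5 × Fin n) k)
    (hD : D = Matrix.of fun p q =>
      if p.1 = 0 then
        (if q.1 = 0 ∨ q.1 = 2 ∨ q.1 = 3 ∨ q.1 = 4 then (if p.2 = q.2 then 1 else 0) else 0)
      else
        (if q.1 = 1 ∨ q.1 = 2 then (if p.2 = q.2 then 1 else 0)
         else if q.1 = 3 then X p.2 q.2
         else if q.1 = 4 then Y p.2 q.2
         else 0))
    (D' : Matrix (Fin 2 × Fin n) (Fin 5 × Fin n) k)
    (hD' : D' = Matrix.of fun p q =>
      if p.1 = 0 then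
        (if q.1 = 0 ∨ q.1 = 2 ∨ q.1 = 3 ∨ q.1 = 4 then (if p.2 = q.2 then 1 else 0) else 0)
      else
        (if q.1 = 1 ∨ q.1 = 2 then (if p.2 = q.2 then 1 else 0)
         else if q.1 = 3 then X' p.2 q.2
         else if q.1 = 4 then Y' p.2 q.2
         else 0))
    (S : Matrix (Fin 2 × Fin n) (Fin 2 × Fin n) k)
    (hS : S * D = D' * (Matrix.of fun p q => if p.1 = q.1 then Z p.1 p.2 q.2 else 0)) :
    ∃ σ : Matrix (Fin n) (Fin n) k,
      (∀ j, Z j = σ) ∧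
      (∀ p q, S p q = if p.1 = q.1 then σ p.2 q.2 else 0) ∧
      σ * X = X' * σ ∧ σ * Y = Y' * σ := by
  replace hS : S * D = D' * ((Matrix.of fun p q => if p.1 = q.1 then Z p.1 p.2 q.2 else 0 :
      Matrix (Fin 5 × Fin n) (Fin 5 × Fin n) k)) := hS
  subst hD hD'
  have h := fun (i : Fin 2) (a : Fin n) (j : Fin 5) (b : Fin n) =>
    congrFun (congrFun hS (i, a)) (j, b)
  simp only [mul_apply, of_apply, Fintype.sum_prod_type, Fin.sum_univ_two,
    Fin.sum_univ_five] at h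
  have hh := fun i a j b => h i a j b
  simp only [Fin.isValue, Fin.reduceEq, true_or, or_true, false_or, or_false,
    if_true, if_false, mul_ite, mul_one, mul_zero, ite_mul, one_mul, zero_mul,
    Finset.sum_ite_eq, Finset.sum_ite_eq', Finset.mem_univ, if_pos,
    Finset.sum_const_zero, add_zero, zero_add] at h
  have h00 := fun a b => h 0 a 0 b
  have h10 := fun a b => h 1 a 0 b
  have h01 := fun a b => h 0 a 1 b
  have h11 := fun a b => h 1 a 1 b
  have h02 := fun a b => h 0 a 2 b
  have h12 := fun a b => h 1 a 2 b
  have h03 := fun a b => h 0 a 3 b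
  have h13 := fun a b => h 1 a 3 b
  have h04 := fun a b => h 0 a 4 b
  have h14 := fun a b => h 1 a 4 b
  simp only [Fin.isValue, Fin.reduceEq, true_or, or_true, false_or, or_false,
    if_true, if_false, reduceIte, mul_ite, mul_one, mul_zero, ite_mul, one_mul, zero_mul,
    Finset.sum_ite_eq, Finset.sum_ite_eq', Finset.mem_univ, if_pos,
    Finset.sum_const_zero, add_zero, zero_add] at h00 h10 h01 h11 h02 h12 h03 h13 h04 h14
  clear h hh hS
  have e2 : ∀ a b, Z 2 a b = Z 0 a b := fun a b => by
    have := h02 a b; rw [h00, h01, add_zero] at this; exact this.symm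
  have e1 : ∀ a b, Z 1 a b = Z 0 a b := fun a b => by
    have := h12 a b; rw [h10, h11, zero_add] at this; rw [this, e2]
  have e3 : ∀ a b, Z 3 a b = Z 0 a b := fun a b => by
    have := h03 a b; rw [h00] at this
    simp only [h01, zero_mul, Finset.sum_const_zero, add_zero] at this
    exact this.symm
  have e4 : ∀ a b, Z 4 a b = Z 0 a b := fun a b => by
    have := h04 a b; rw [h00] at this
    simp only [h01, zero_mul, Finset.sum_const_zero, add_zero] at this
    exact this.symm
  refine ⟨Z 0, ?_, ?_, ?_, ?_⟩
  · intro j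
    fin_cases j
    · rfl
    · exact Matrix.ext e1
    · exact Matrix.ext e2
    · exact Matrix.ext e3
    · exact Matrix.ext e4
  · rintro ⟨i, a⟩ ⟨i', b⟩
    fin_cases i <;> fin_cases i' <;>
      simp [h00, h10, h01, h11, e1]
  · ext a b
    have := h13 a b
    rw [h10, zero_add] at this
    simp only [h11, e1, e3] at this
    simpa [Matrix.mul_apply] using this
  · ext a b
    have := h14 a b
    rw [h10, zero_add] at this
    simp only [h11, e1, e4] at this
    simpa [Matrix.mul_apply] using this
end

section
/- In the setting of the inflated matrix factorizations of f (order ≥ 4), let Φ̄_i, Ψ̄_i denote reductions modulo m² of the partial inflated factorizations. If C and D are (m·2^i)×(m·2^i) matrices over k with C·Φ̄_i = Φ̄_i'·D and D·Ψ̄_i = Ψ̄_i'·C, then C and D are (m×m)-block lower triangular. -/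
open Matrix MvPowerSeries

lemma coeff_single_zero_of_mem_sq {S : Type*} [CommRing S] {σ : Type*}
    {F : MvPowerSeries σ S}
    (hF : F ∈ (Ideal.span (Set.range (MvPowerSeries.X : σ → MvPowerSeries σ S))) ^ 2)
    (s : σ) : MvPowerSeries.coeff (R := S) (Finsupp.single s 1) F = 0 := by
  classical
  rw [pow_two] at hF
  have hconst : ∀ x ∈ Ideal.span (Set.range (MvPowerSeries.X : σ → MvPowerSeries σ S)),
      constantCoeff (σ := σ) (R := S) x = 0 := by
    intro x hx
    have : Ideal.span (Set.range (MvPowerSeries.X : σ → MvPowerSeries σ S)) ≤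
        RingHom.ker (constantCoeff (σ := σ) (R := S)) := by
      rw [Ideal.span_le]
      rintro _ ⟨t, rfl⟩
      simp [RingHom.mem_ker]
    simpa [RingHom.mem_ker] using this hx
  refine Submodule.mul_induction_on hF ?_ ?_
  · intro a ha b hb
    rw [coeff_mul]
    refine Finset.sum_eq_zero ?_
    rintro ⟨d₁, d₂⟩ hd
    rw [Finset.HasAntidiagonal.mem_antidiagonal] at hd
    by_cases h1 : d₁ s = 0
    · have hd1 : d₁ = 0 := by
        ext t
        have ht := DFunLike.congr_fun hd t
        simp only [Finsupp.coe_add, Pi.add_apply, Finsupp.single_apply] at ht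
        by_cases hts : s = t
        · subst hts; simpa using h1
        · rw [if_neg hts] at ht
          simpa using Nat.eq_zero_of_add_eq_zero_right ht
      subst hd1
      simp [coeff_zero_eq_constantCoeff, hconst a ha]
    · have hd2 : d₂ = 0 := by
        ext t
        have ht := DFunLike.congr_fun hd t
        simp only [Finsupp.coe_add, Pi.add_apply, Finsupp.single_apply] at ht
        by_cases hts : s = t
        · subst hts; rw [if_pos rfl] at ht; simpa using by omega
        · rw [if_neg hts] at ht
          simpa using Nat.eq_zero_of_add_eq_zero_left ht
      subst hd2
      simp [coeff_zero_eq_constantCoeff, hconst b hb]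
  · intro x y hx hy
    simp [map_add, hx, hy]
/-- the equivalence used in `knorrerPair`. -/
def e2 (i : ℕ) : Fin (2 ^ i) ⊕ Fin (2 ^ i) ≃ Fin (2 ^ (i + 1)) :=
  finSumFinEquiv.trans (finCongr (by rw [pow_succ, mul_two]))

lemma knorrerPair_succ_fst {S : Type} [CommRing S] (u v : ℕ → S) (i : ℕ) :
    (knorrerPair u v (i + 1)).1 =
      (Matrix.reindex (e2 i) (e2 i))
        (Matrix.fromBlocks (knorrerPair u v i).1 ((-(v (i + 1))) • 1) ((u (i + 1)) • 1)
          (knorrerPair u v i).2) := rfl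

lemma knorrerPair_succ_snd {S : Type} [CommRing S] (u v : ℕ → S) (i : ℕ) :
    (knorrerPair u v (i + 1)).2 =
      (Matrix.reindex (e2 i) (e2 i))
        (Matrix.fromBlocks (knorrerPair u v i).2 ((v (i + 1)) • 1) ((-(u (i + 1))) • 1)
          (knorrerPair u v i).1) := rfl

lemma knorrer_coeff_zero {R σ : Type} [CommRing R] (u v : ℕ → MvPowerSeries σ R)
    (d : σ →₀ ℕ) :
    ∀ i : ℕ, (∀ j ≤ i, MvPowerSeries.coeff (R := R) d (u j) = 0) →
      (∀ j ≤ i, MvPowerSeries.coeff (R := R) d (v j) = 0) →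
      ∀ p q, MvPowerSeries.coeff (R := R) d ((knorrerPair u v i).1 p q) = 0 ∧
        MvPowerSeries.coeff (R := R) d ((knorrerPair u v i).2 p q) = 0
  | 0, hu, hv, p, q => by
    constructor <;> simp [knorrerPair, hu 0 le_rfl, hv 0 le_rfl]
  | (i + 1), hu, hv, p, q => by
    have IH := knorrer_coeff_zero u v d i (fun j hj => hu j (hj.trans i.le_succ))
      (fun j hj => hv j (hj.trans i.le_succ))
    have hscal : ∀ (c : MvPowerSeries σ R), MvPowerSeries.coeff (R := R) d c = 0 →
        ∀ (a b : Fin (2 ^ i)),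
          MvPowerSeries.coeff (R := R) d ((c • (1 : Matrix (Fin (2^i)) (Fin (2^i)) _)) a b) = 0 := by
      intro c hc a b
      by_cases h : a = b <;> simp [Matrix.smul_apply, Matrix.one_apply, h, hc]
    constructor
    · rw [knorrerPair_succ_fst, Matrix.reindex_apply, Matrix.submatrix_apply]
      rcases hp : (e2 i).symm p with a | a <;> rcases hq : (e2 i).symm q with b | b <;>
        simp only [hp, hq, Matrix.fromBlocks_apply₁₁, Matrix.fromBlocks_apply₁₂,
          Matrix.fromBlocks_apply₂₁, Matrix.fromBlocks_apply₂₂]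
      · exact (IH a b).1
      · exact hscal _ (by simp [hv (i+1) le_rfl]) a b
      · exact hscal _ (hu (i+1) le_rfl) a b
      · exact (IH a b).2
    · rw [knorrerPair_succ_snd, Matrix.reindex_apply, Matrix.submatrix_apply]
      rcases hp : (e2 i).symm p with a | a <;> rcases hq : (e2 i).symm q with b | b <;>
        simp only [hp, hq, Matrix.fromBlocks_apply₁₁, Matrix.fromBlocks_apply₁₂,
          Matrix.fromBlocks_apply₂₁, Matrix.fromBlocks_apply₂₂]
      · exact (IH a b).2
      · exact hscal _ (hv (i+1) le_rfl) a b
      · exact hscal _ (by simp [hu (i+1) le_rfl]) a b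
      · exact (IH a b).1

section Infra
variable {k R : Type} [Field k] [CommRing R] {m : ℕ} {σ : Type}

/-- entrywise `ρ`-image of the `d`-coefficient of a matrix of power series. -/
def blowC (ρ : R →+* Matrix (Fin m) (Fin m) k) (d : σ →₀ ℕ) {N : Type}
    (M : Matrix N N (MvPowerSeries σ R)) : Matrix (N × Fin m) (N × Fin m) k :=
  Matrix.of fun p q => ρ (MvPowerSeries.coeff (R := R) d (M p.1 q.1)) p.2 q.2

/-- product version of a sum-index equivalence. -/
def eP {N N' N'' : Type} (e : N ⊕ N' ≃ N'') (m : ℕ) :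
    (N × Fin m) ⊕ (N' × Fin m) ≃ N'' × Fin m :=
  (Equiv.sumProdDistrib N N' (Fin m)).symm.trans (e.prodCongr (Equiv.refl _))

lemma eP_symm_inl {N N' N'' : Type} (e : N ⊕ N' ≃ N'') {p : N'' × Fin m} {a : N}
    (h : e.symm p.1 = Sum.inl a) : (eP e m).symm p = Sum.inl (a, p.2) := by
  simp [eP, Equiv.sumProdDistrib, h]

lemma eP_symm_inr {N N' N'' : Type} (e : N ⊕ N' ≃ N'') {p : N'' × Fin m} {a : N'}
    (h : e.symm p.1 = Sum.inr a) : (eP e m).symm p = Sum.inr (a, p.2) := by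
  simp [eP, Equiv.sumProdDistrib, h]

lemma blowC_reindex_fromBlocks (ρ : R →+* Matrix (Fin m) (Fin m) k) (d : σ →₀ ℕ)
    {N N' N'' : Type} (e : N ⊕ N' ≃ N'')
    (A : Matrix N N (MvPowerSeries σ R)) (B : Matrix N N' (MvPowerSeries σ R))
    (C : Matrix N' N (MvPowerSeries σ R)) (D : Matrix N' N' (MvPowerSeries σ R)) :
    blowC ρ d ((Matrix.reindex e e) (Matrix.fromBlocks A B C D)) =
      (Matrix.reindex (eP e m) (eP e m))
        (Matrix.fromBlocks (blowC ρ d A)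
          (Matrix.of fun p q => ρ (MvPowerSeries.coeff (R := R) d (B p.1 q.1)) p.2 q.2)
          (Matrix.of fun p q => ρ (MvPowerSeries.coeff (R := R) d (C p.1 q.1)) p.2 q.2)
          (blowC ρ d D)) := by
  ext p q
  rcases hp : e.symm p.1 with a | a <;> rcases hq : e.symm q.1 with b | b <;>
    simp [blowC, Matrix.reindex_apply, Matrix.submatrix_apply, eP_symm_inl e,
      eP_symm_inr e, hp, hq]

lemma blowC_smul_one_zero (ρ : R →+* Matrix (Fin m) (Fin m) k) (d : σ →₀ ℕ)
    {N : Type} [DecidableEq N] {c : MvPowerSeries σ R}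
    (hc : MvPowerSeries.coeff (R := R) d c = 0) :
    (Matrix.of fun (p q : N × Fin m) =>
      ρ (MvPowerSeries.coeff (R := R) d ((c • (1 : Matrix N N (MvPowerSeries σ R))) p.1 q.1)) p.2 q.2)
      = 0 := by
  ext p q
  by_cases h : p.1 = q.1 <;>
    simp [Matrix.smul_apply, Matrix.one_apply, h, hc]

lemma blowC_smul_one_one (ρ : R →+* Matrix (Fin m) (Fin m) k) (d : σ →₀ ℕ)
    {N : Type} [DecidableEq N] {c : MvPowerSeries σ R}
    (hc : MvPowerSeries.coeff (R := R) d c = 1) :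
    (Matrix.of fun (p q : N × Fin m) =>
      ρ (MvPowerSeries.coeff (R := R) d ((c • (1 : Matrix N N (MvPowerSeries σ R))) p.1 q.1)) p.2 q.2)
      = 1 := by
  ext p q
  rcases p with ⟨p1, α⟩; rcases q with ⟨q1, β⟩
  by_cases h : p1 = q1
  · subst h
    simp [Matrix.smul_apply, Matrix.one_apply, hc, Prod.ext_iff]
  · simp [Matrix.smul_apply, Matrix.one_apply, h, Prod.ext_iff]

lemma blowC_smul_one_negone (ρ : R →+* Matrix (Fin m) (Fin m) k) (d : σ →₀ ℕ)
    {N : Type} [DecidableEq N] {c : MvPowerSeries σ R}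
    (hc : MvPowerSeries.coeff (R := R) d c = -1) :
    (Matrix.of fun (p q : N × Fin m) =>
      ρ (MvPowerSeries.coeff (R := R) d ((c • (1 : Matrix N N (MvPowerSeries σ R))) p.1 q.1)) p.2 q.2)
      = -1 := by
  ext p q
  rcases p with ⟨p1, α⟩; rcases q with ⟨q1, β⟩
  by_cases h : p1 = q1
  · subst h
    simp [Matrix.smul_apply, Matrix.one_apply, hc, Prod.ext_iff]
  · simp [Matrix.smul_apply, Matrix.one_apply, h, Prod.ext_iff]

end Infra

lemma blowC_eq_zero {k R σ : Type} [Field k] [CommRing R] {m : ℕ}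
    (ρ : R →+* Matrix (Fin m) (Fin m) k) (d : σ →₀ ℕ) {N : Type}
    {M : Matrix N N (MvPowerSeries σ R)}
    (h : ∀ p q, MvPowerSeries.coeff (R := R) d (M p q) = 0) : blowC ρ d M = 0 := by
  ext p q
  simp [blowC, h]

lemma reindex_conj_eq {k : Type} [Field k] {n n' : Type} [Fintype n] [Fintype n']
    [DecidableEq n] [DecidableEq n'] (eh : n ≃ n') (C D : Matrix n' n' k)
    (M M' : Matrix n n k) (h : C * (Matrix.reindex eh eh) M = (Matrix.reindex eh eh) M' * D) :
    (C.submatrix eh eh) * M = M' * (D.submatrix eh eh) := by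
  have h1 : M = ((Matrix.reindex eh eh) M).submatrix eh eh := by
    simp [Matrix.reindex_apply, Matrix.submatrix_submatrix]
  have h2 : M' = ((Matrix.reindex eh eh) M').submatrix eh eh := by
    simp [Matrix.reindex_apply, Matrix.submatrix_submatrix]
  calc C.submatrix eh eh * M = C.submatrix eh eh * ((Matrix.reindex eh eh) M).submatrix eh eh := by
        rw [← h1]
    _ = (C * (Matrix.reindex eh eh) M).submatrix eh eh := by
        rw [Matrix.submatrix_mul_equiv]
    _ = ((Matrix.reindex eh eh) M' * D).submatrix eh eh := by rw [h]
    _ = ((Matrix.reindex eh eh) M').submatrix eh eh * D.submatrix eh eh := by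
        rw [Matrix.submatrix_mul_equiv]
    _ = M' * D.submatrix eh eh := by rw [← h2]

lemma aux_lower_triangular {k R R' σ : Type} [Field k] [CommRing R] [CommRing R'] {m : ℕ}
    (ρ : R →+* Matrix (Fin m) (Fin m) k) (ρ' : R' →+* Matrix (Fin m) (Fin m) k)
    (u v : ℕ → MvPowerSeries σ R) (u' v' : ℕ → MvPowerSeries σ R')
    (μ : ℕ → (σ →₀ ℕ)) :
    ∀ i : ℕ,
    (∀ l < i, ∀ j ≤ i, j ≠ l + 1 → MvPowerSeries.coeff (R := R) (μ l) (u j) = 0) →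
    (∀ l < i, MvPowerSeries.coeff (R := R) (μ l) (u (l + 1)) = 1) →
    (∀ l < i, ∀ j ≤ i, MvPowerSeries.coeff (R := R) (μ l) (v j) = 0) →
    (∀ l < i, ∀ j ≤ i, j ≠ l + 1 → MvPowerSeries.coeff (R := R') (μ l) (u' j) = 0) →
    (∀ l < i, MvPowerSeries.coeff (R := R') (μ l) (u' (l + 1)) = 1) →
    (∀ l < i, ∀ j ≤ i, MvPowerSeries.coeff (R := R') (μ l) (v' j) = 0) →
    ∀ C D : Matrix (Fin (2 ^ i) × Fin m) (Fin (2 ^ i) × Fin m) k,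
    (∀ l < i, C * blowC ρ (μ l) (knorrerPair u v i).1
        = blowC ρ' (μ l) (knorrerPair u' v' i).1 * D) →
    (∀ l < i, D * blowC ρ (μ l) (knorrerPair u v i).2
        = blowC ρ' (μ l) (knorrerPair u' v' i).2 * C) →
    ∀ p q : Fin (2 ^ i) × Fin m, p.1 < q.1 → C p q = 0 ∧ D p q = 0
  | 0 => by
    intro _ _ _ _ _ _ C D _ _ p q hpq
    exact absurd hpq (by omega)
  | (i + 1) => by
    intro hu hu1 hv hu' hu1' hv' C D hC hD p q hpq
    set eh := eP (e2 i) m with hehdef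
    set C₀ := C.submatrix eh eh with hC₀
    set D₀ := D.submatrix eh eh with hD₀
    -- structure of the blown coefficient matrices
    have hstepΦ : ∀ l, blowC ρ (μ l) (knorrerPair u v (i + 1)).1
        = (Matrix.reindex eh eh) (Matrix.fromBlocks
            (blowC ρ (μ l) (knorrerPair u v i).1)
            (Matrix.of fun p q => ρ (MvPowerSeries.coeff (R := R) (μ l)
              (((-(v (i+1))) • (1 : Matrix (Fin (2^i)) (Fin (2^i)) _)) p.1 q.1)) p.2 q.2)
            (Matrix.of fun p q => ρ (MvPowerSeries.coeff (R := R) (μ l)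
              (((u (i+1)) • (1 : Matrix (Fin (2^i)) (Fin (2^i)) _)) p.1 q.1)) p.2 q.2)
            (blowC ρ (μ l) (knorrerPair u v i).2)) := by
      intro l
      rw [knorrerPair_succ_fst, blowC_reindex_fromBlocks]
    have hstepΨ : ∀ l, blowC ρ (μ l) (knorrerPair u v (i + 1)).2
        = (Matrix.reindex eh eh) (Matrix.fromBlocks
            (blowC ρ (μ l) (knorrerPair u v i).2)
            (Matrix.of fun p q => ρ (MvPowerSeries.coeff (R := R) (μ l)
              (((v (i+1)) • (1 : Matrix (Fin (2^i)) (Fin (2^i)) _)) p.1 q.1)) p.2 q.2)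
            (Matrix.of fun p q => ρ (MvPowerSeries.coeff (R := R) (μ l)
              (((-(u (i+1))) • (1 : Matrix (Fin (2^i)) (Fin (2^i)) _)) p.1 q.1)) p.2 q.2)
            (blowC ρ (μ l) (knorrerPair u v i).1)) := by
      intro l
      rw [knorrerPair_succ_snd, blowC_reindex_fromBlocks]
    have hstepΦ' : ∀ l, blowC ρ' (μ l) (knorrerPair u' v' (i + 1)).1
        = (Matrix.reindex eh eh) (Matrix.fromBlocks
            (blowC ρ' (μ l) (knorrerPair u' v' i).1)
            (Matrix.of fun p q => ρ' (MvPowerSeries.coeff (R := R') (μ l)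
              (((-(v' (i+1))) • (1 : Matrix (Fin (2^i)) (Fin (2^i)) _)) p.1 q.1)) p.2 q.2)
            (Matrix.of fun p q => ρ' (MvPowerSeries.coeff (R := R') (μ l)
              (((u' (i+1)) • (1 : Matrix (Fin (2^i)) (Fin (2^i)) _)) p.1 q.1)) p.2 q.2)
            (blowC ρ' (μ l) (knorrerPair u' v' i).2)) := by
      intro l
      rw [knorrerPair_succ_fst, blowC_reindex_fromBlocks]
    have hstepΨ' : ∀ l, blowC ρ' (μ l) (knorrerPair u' v' (i + 1)).2
        = (Matrix.reindex eh eh) (Matrix.fromBlocks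
            (blowC ρ' (μ l) (knorrerPair u' v' i).2)
            (Matrix.of fun p q => ρ' (MvPowerSeries.coeff (R := R') (μ l)
              (((v' (i+1)) • (1 : Matrix (Fin (2^i)) (Fin (2^i)) _)) p.1 q.1)) p.2 q.2)
            (Matrix.of fun p q => ρ' (MvPowerSeries.coeff (R := R') (μ l)
              (((-(u' (i+1))) • (1 : Matrix (Fin (2^i)) (Fin (2^i)) _)) p.1 q.1)) p.2 q.2)
            (blowC ρ' (μ l) (knorrerPair u' v' i).1)) := by
      intro l
      rw [knorrerPair_succ_snd, blowC_reindex_fromBlocks]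
    -- top-level equation (monomial μ i)
    have htopΦeq : C₀ * Matrix.fromBlocks 0 0 1 0 = Matrix.fromBlocks 0 0 1 0 * D₀ := by
      apply reindex_conj_eq
      have h1 := hC i (Nat.lt_succ_self i)
      rw [hstepΦ i, hstepΦ' i] at h1
      rw [blowC_eq_zero ρ (μ i) (fun p q => (knorrer_coeff_zero u v (μ i) i
            (fun j hj => hu i (Nat.lt_succ_self i) j (hj.trans i.le_succ) (by omega))
            (fun j hj => hv i (Nat.lt_succ_self i) j (hj.trans i.le_succ)) p q).1),
          blowC_eq_zero ρ (μ i) (fun p q => (knorrer_coeff_zero u v (μ i) i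
            (fun j hj => hu i (Nat.lt_succ_self i) j (hj.trans i.le_succ) (by omega))
            (fun j hj => hv i (Nat.lt_succ_self i) j (hj.trans i.le_succ)) p q).2),
          blowC_eq_zero ρ' (μ i) (fun p q => (knorrer_coeff_zero u' v' (μ i) i
            (fun j hj => hu' i (Nat.lt_succ_self i) j (hj.trans i.le_succ) (by omega))
            (fun j hj => hv' i (Nat.lt_succ_self i) j (hj.trans i.le_succ)) p q).1),
          blowC_eq_zero ρ' (μ i) (fun p q => (knorrer_coeff_zero u' v' (μ i) i
            (fun j hj => hu' i (Nat.lt_succ_self i) j (hj.trans i.le_succ) (by omega))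
            (fun j hj => hv' i (Nat.lt_succ_self i) j (hj.trans i.le_succ)) p q).2),
          blowC_smul_one_zero ρ (μ i)
            (by rw [map_neg, hv i (Nat.lt_succ_self i) (i+1) le_rfl, neg_zero]),
          blowC_smul_one_zero ρ' (μ i)
            (by rw [map_neg, hv' i (Nat.lt_succ_self i) (i+1) le_rfl, neg_zero]),
          blowC_smul_one_one ρ (μ i) (hu1 i (Nat.lt_succ_self i)),
          blowC_smul_one_one ρ' (μ i) (hu1' i (Nat.lt_succ_self i))] at h1
      exact h1
    have htopΨeq : D₀ * Matrix.fromBlocks 0 0 (-1) 0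
        = Matrix.fromBlocks 0 0 (-1) 0 * C₀ := by
      apply reindex_conj_eq
      have h1 := hD i (Nat.lt_succ_self i)
      rw [hstepΨ i, hstepΨ' i] at h1
      rw [blowC_eq_zero ρ (μ i) (fun p q => (knorrer_coeff_zero u v (μ i) i
            (fun j hj => hu i (Nat.lt_succ_self i) j (hj.trans i.le_succ) (by omega))
            (fun j hj => hv i (Nat.lt_succ_self i) j (hj.trans i.le_succ)) p q).1),
          blowC_eq_zero ρ (μ i) (fun p q => (knorrer_coeff_zero u v (μ i) i
            (fun j hj => hu i (Nat.lt_succ_self i) j (hj.trans i.le_succ) (by omega))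
            (fun j hj => hv i (Nat.lt_succ_self i) j (hj.trans i.le_succ)) p q).2),
          blowC_eq_zero ρ' (μ i) (fun p q => (knorrer_coeff_zero u' v' (μ i) i
            (fun j hj => hu' i (Nat.lt_succ_self i) j (hj.trans i.le_succ) (by omega))
            (fun j hj => hv' i (Nat.lt_succ_self i) j (hj.trans i.le_succ)) p q).1),
          blowC_eq_zero ρ' (μ i) (fun p q => (knorrer_coeff_zero u' v' (μ i) i
            (fun j hj => hu' i (Nat.lt_succ_self i) j (hj.trans i.le_succ) (by omega))
            (fun j hj => hv' i (Nat.lt_succ_self i) j (hj.trans i.le_succ)) p q).2),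
          blowC_smul_one_zero ρ (μ i) (hv i (Nat.lt_succ_self i) (i+1) le_rfl),
          blowC_smul_one_zero ρ' (μ i) (hv' i (Nat.lt_succ_self i) (i+1) le_rfl),
          blowC_smul_one_negone ρ (μ i)
            (by rw [map_neg, hu1 i (Nat.lt_succ_self i)]),
          blowC_smul_one_negone ρ' (μ i)
            (by rw [map_neg, hu1' i (Nat.lt_succ_self i)])] at h1
      exact h1
    -- extract block identities from the top-level equations
    rw [← Matrix.fromBlocks_toBlocks C₀, ← Matrix.fromBlocks_toBlocks D₀,
      Matrix.fromBlocks_multiply, Matrix.fromBlocks_multiply] at htopΦeq htopΨeq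
    simp only [Matrix.mul_zero, Matrix.zero_mul, Matrix.mul_one, Matrix.one_mul,
      Matrix.mul_neg, Matrix.neg_mul, zero_add,
      add_zero, mul_one, one_mul, mul_zero, zero_mul] at htopΦeq htopΨeq
    have hC12 : C₀.toBlocks₁₂ = 0 := by
      have := congrArg Matrix.toBlocks₁₁ htopΦeq
      simpa using this
    have hC22 : C₀.toBlocks₂₂ = D₀.toBlocks₁₁ := by
      have := congrArg Matrix.toBlocks₂₁ htopΦeq
      simpa using this
    have hD12 : D₀.toBlocks₁₂ = 0 := by
      have := congrArg Matrix.toBlocks₂₂ htopΦeq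
      simpa using this.symm
    have hD22 : D₀.toBlocks₂₂ = C₀.toBlocks₁₁ := by
      have := congrArg Matrix.toBlocks₂₁ htopΨeq
      simpa using this
    -- lower-level equations
    have hlowΦ : ∀ l < i,
        C₀ * Matrix.fromBlocks (blowC ρ (μ l) (knorrerPair u v i).1) 0 0
            (blowC ρ (μ l) (knorrerPair u v i).2)
        = Matrix.fromBlocks (blowC ρ' (μ l) (knorrerPair u' v' i).1) 0 0
            (blowC ρ' (μ l) (knorrerPair u' v' i).2) * D₀ := by
      intro l hl
      apply reindex_conj_eq
      have h1 := hC l (hl.trans (Nat.lt_succ_self i))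
      rw [hstepΦ l, hstepΦ' l,
        blowC_smul_one_zero ρ (μ l)
          (by rw [map_neg, hv l (by omega) (i+1) le_rfl, neg_zero]),
        blowC_smul_one_zero ρ' (μ l)
          (by rw [map_neg, hv' l (by omega) (i+1) le_rfl, neg_zero]),
        blowC_smul_one_zero ρ (μ l) (hu l (by omega) (i+1) le_rfl (by omega)),
        blowC_smul_one_zero ρ' (μ l) (hu' l (by omega) (i+1) le_rfl (by omega))] at h1
      exact h1
    have hlowΨ : ∀ l < i,
        D₀ * Matrix.fromBlocks (blowC ρ (μ l) (knorrerPair u v i).2) 0 0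
            (blowC ρ (μ l) (knorrerPair u v i).1)
        = Matrix.fromBlocks (blowC ρ' (μ l) (knorrerPair u' v' i).2) 0 0
            (blowC ρ' (μ l) (knorrerPair u' v' i).1) * C₀ := by
      intro l hl
      apply reindex_conj_eq
      have h1 := hD l (hl.trans (Nat.lt_succ_self i))
      rw [hstepΨ l, hstepΨ' l,
        blowC_smul_one_zero ρ (μ l) (hv l (by omega) (i+1) le_rfl),
        blowC_smul_one_zero ρ' (μ l) (hv' l (by omega) (i+1) le_rfl),
        blowC_smul_one_zero ρ (μ l)
          (by rw [map_neg, hu l (by omega) (i+1) le_rfl (by omega), neg_zero]),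
        blowC_smul_one_zero ρ' (μ l)
          (by rw [map_neg, hu' l (by omega) (i+1) le_rfl (by omega), neg_zero])] at h1
      exact h1
    -- apply the induction hypothesis to the two diagonal block pairs
    have IH1 := aux_lower_triangular ρ ρ' u v u' v' μ i
      (fun l hl j hj => hu l (by omega) j (by omega))
      (fun l hl => hu1 l (by omega))
      (fun l hl j hj => hv l (by omega) j (by omega))
      (fun l hl j hj => hu' l (by omega) j (by omega))
      (fun l hl => hu1' l (by omega))
      (fun l hl j hj => hv' l (by omega) j (by omega))
      C₀.toBlocks₁₁ D₀.toBlocks₁₁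
      (fun l hl => by
        have h1 := hlowΦ l hl
        rw [← Matrix.fromBlocks_toBlocks C₀, ← Matrix.fromBlocks_toBlocks D₀,
          Matrix.fromBlocks_multiply, Matrix.fromBlocks_multiply] at h1
        have := congrArg Matrix.toBlocks₁₁ h1
        simpa using this)
      (fun l hl => by
        have h1 := hlowΨ l hl
        rw [← Matrix.fromBlocks_toBlocks C₀, ← Matrix.fromBlocks_toBlocks D₀,
          Matrix.fromBlocks_multiply, Matrix.fromBlocks_multiply] at h1
        have := congrArg Matrix.toBlocks₁₁ h1
        simpa using this)
    have IH2 := aux_lower_triangular ρ ρ' u v u' v' μ i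
      (fun l hl j hj => hu l (by omega) j (by omega))
      (fun l hl => hu1 l (by omega))
      (fun l hl j hj => hv l (by omega) j (by omega))
      (fun l hl j hj => hu' l (by omega) j (by omega))
      (fun l hl => hu1' l (by omega))
      (fun l hl j hj => hv' l (by omega) j (by omega))
      D₀.toBlocks₂₂ C₀.toBlocks₂₂
      (fun l hl => by
        have h1 := hlowΨ l hl
        rw [← Matrix.fromBlocks_toBlocks C₀, ← Matrix.fromBlocks_toBlocks D₀,
          Matrix.fromBlocks_multiply, Matrix.fromBlocks_multiply] at h1
        have := congrArg Matrix.toBlocks₂₂ h1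
        simpa using this)
      (fun l hl => by
        have h1 := hlowΦ l hl
        rw [← Matrix.fromBlocks_toBlocks C₀, ← Matrix.fromBlocks_toBlocks D₀,
          Matrix.fromBlocks_multiply, Matrix.fromBlocks_multiply] at h1
        have := congrArg Matrix.toBlocks₂₂ h1
        simpa using this)
    -- now conclude entrywise
    have hCval : C p q = C₀ (eh.symm p) (eh.symm q) := by
      rw [hC₀]
      simp [Matrix.submatrix_apply]
    have hDval : D p q = D₀ (eh.symm p) (eh.symm q) := by
      rw [hD₀]
      simp [Matrix.submatrix_apply]
    rw [hCval, hDval]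
    rcases hp : (e2 i).symm p.1 with a | a <;> rcases hq : (e2 i).symm q.1 with b | b
    · -- inl, inl : use IH1 and hD22/hC11
      rw [eP_symm_inl (e2 i) hp, eP_symm_inl (e2 i) hq]
      have hab : a < b := by
        have hpv : p.1 = e2 i (Sum.inl a) := ((Equiv.symm_apply_eq _).1 hp)
        have hqv : q.1 = e2 i (Sum.inl b) := ((Equiv.symm_apply_eq _).1 hq)
        have : (p.1 : ℕ) = (a : ℕ) := by rw [hpv]; simp [e2, Nat.add_comm]
        have h2 : (q.1 : ℕ) = (b : ℕ) := by rw [hqv]; simp [e2, Nat.add_comm]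
        rw [Fin.lt_def] at hpq ⊢
        omega
      have h1 := IH1 (a, p.2) (b, q.2) hab
      have h2 := IH2 (a, p.2) (b, q.2) hab
      exact ⟨h1.1, h1.2⟩
    · -- inl, inr : off-diagonal blocks vanish
      rw [eP_symm_inl (e2 i) hp, eP_symm_inr (e2 i) hq]
      constructor
      · have : C₀ (Sum.inl (a, p.2)) (Sum.inr (b, q.2))
            = C₀.toBlocks₁₂ (a, p.2) (b, q.2) := rfl
        rw [this, hC12]; rfl
      · have : D₀ (Sum.inl (a, p.2)) (Sum.inr (b, q.2))
            = D₀.toBlocks₁₂ (a, p.2) (b, q.2) := rfl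
        rw [this, hD12]; rfl
    · -- inr, inl : impossible
      exfalso
      have hpv : p.1 = e2 i (Sum.inr a) := ((Equiv.symm_apply_eq _).1 hp)
      have hqv : q.1 = e2 i (Sum.inl b) := ((Equiv.symm_apply_eq _).1 hq)
      have h1 : (p.1 : ℕ) = 2 ^ i + (a : ℕ) := by rw [hpv]; simp [e2, Nat.add_comm]
      have h2 : (q.1 : ℕ) = (b : ℕ) := by rw [hqv]; simp [e2, Nat.add_comm]
      have hb := b.isLt
      rw [Fin.lt_def] at hpq
      omega
    · -- inr, inr : use IH2 via hC22, hD22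
      rw [eP_symm_inr (e2 i) hp, eP_symm_inr (e2 i) hq]
      have hab : a < b := by
        have hpv : p.1 = e2 i (Sum.inr a) := ((Equiv.symm_apply_eq _).1 hp)
        have hqv : q.1 = e2 i (Sum.inr b) := ((Equiv.symm_apply_eq _).1 hq)
        have : (p.1 : ℕ) = 2 ^ i + (a : ℕ) := by rw [hpv]; simp [e2, Nat.add_comm]
        have h2 : (q.1 : ℕ) = 2 ^ i + (b : ℕ) := by rw [hqv]; simp [e2, Nat.add_comm]
        rw [Fin.lt_def] at hpq ⊢
        omega
      have h2 := IH2 (a, p.2) (b, q.2) hab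
      constructor
      · have : C₀ (Sum.inr (a, p.2)) (Sum.inr (b, q.2))
            = C₀.toBlocks₂₂ (a, p.2) (b, q.2) := rfl
        rw [this]; exact h2.2
      · have : D₀ (Sum.inr (a, p.2)) (Sum.inr (b, q.2))
            = D₀.toBlocks₂₂ (a, p.2) (b, q.2) := rfl
        rw [this]; exact h2.1

lemma coeff_map_C_mul_inflate {k R : Type} [Field k] [CommRing R] {m : ℕ} {σ : Type}
    (ρ : R →+* Matrix (Fin m) (Fin m) k) (d : σ →₀ ℕ) {N : Type} [Fintype N] [Fintype (Fin m)]
    (A : Matrix (N × Fin m) (N × Fin m) k) (M : Matrix N N (MvPowerSeries σ R))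
    (p q : N × Fin m) :
    MvPowerSeries.coeff (R := k) d ((A.map ⇑(MvPowerSeries.C (σ := σ) (R := k)) * inflate ρ M) p q)
      = (A * blowC ρ d M) p q := by
  rw [Matrix.mul_apply, Matrix.mul_apply, map_sum]
  refine Finset.sum_congr rfl fun r _ => ?_
  rw [Matrix.map_apply, MvPowerSeries.coeff_C_mul]
  rfl

lemma coeff_inflate_mul_map_C {k R : Type} [Field k] [CommRing R] {m : ℕ} {σ : Type}
    (ρ : R →+* Matrix (Fin m) (Fin m) k) (d : σ →₀ ℕ) {N : Type} [Fintype N]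
    (A : Matrix (N × Fin m) (N × Fin m) k) (M : Matrix N N (MvPowerSeries σ R))
    (p q : N × Fin m) :
    MvPowerSeries.coeff (R := k) d ((inflate ρ M * A.map ⇑(MvPowerSeries.C (σ := σ) (R := k))) p q)
      = (blowC ρ d M * A) p q := by
  rw [Matrix.mul_apply, Matrix.mul_apply, map_sum]
  refine Finset.sum_congr rfl fun r _ => ?_
  rw [Matrix.map_apply, MvPowerSeries.coeff_mul_C]
  rfl

/-- Lemma 2.6(i) of the paper.  With `Φ̄ᵢ, Ψ̄ᵢ` the reductions modulo
`m²` of the partial inflated matrix factorizations of `f` (order `≥ 4`), built from the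
commuting tuples encoded by `(R, ρ, a)` and `(R', ρ', a')`: if `C, D` are
`m·2ⁱ × m·2ⁱ` matrices over `k` with `C·Φ̄ᵢ = Φ̄ᵢ'·D` and `D·Ψ̄ᵢ = Ψ̄ᵢ'·C` (i.e. the
products agree modulo `m²` entrywise), then `C` and `D` are `(m × m)`-block lower
triangular. -/
theorem reduction_hom_block_lower_triangular
    (k : Type) [Field k] (n m : ℕ)
    (R R' : Type) [CommRing R] [Algebra k R] [CommRing R'] [Algebra k R']
    (ρ : R →ₐ[k] Matrix (Fin m) (Fin m) k)
    (ρ' : R' →ₐ[k] Matrix (Fin m) (Fin m) k)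
    (a : Fin n → R) (a' : Fin n → R')
    (f : MvPowerSeries (Option (Fin n)) k)
    (hford : f ∈ (Ideal.span (Set.range
        (MvPowerSeries.X : Option (Fin n) → MvPowerSeries (Option (Fin n)) k))) ^ 4)
    (h : MvPowerSeries (Option (Fin n)) R) (g : Fin n → MvPowerSeries (Option (Fin n)) R)
    (hh : h ∈ (Ideal.span (Set.range
        (MvPowerSeries.X : Option (Fin n) → MvPowerSeries (Option (Fin n)) R))) ^ 2)
    (hg : ∀ i, g i ∈ (Ideal.span (Set.range
        (MvPowerSeries.X : Option (Fin n) → MvPowerSeries (Option (Fin n)) R))) ^ 3)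
    (hf : MvPowerSeries.map (σ := Option (Fin n)) (algebraMap k R) f
        = (MvPowerSeries.X none) ^ 2 * h +
          ∑ i : Fin n,
            (MvPowerSeries.X (some i)
              - MvPowerSeries.C (σ := Option (Fin n)) (R := R) (a i) * MvPowerSeries.X none) * g i)
    (h' : MvPowerSeries (Option (Fin n)) R')
    (g' : Fin n → MvPowerSeries (Option (Fin n)) R')
    (hh' : h' ∈ (Ideal.span (Set.range
        (MvPowerSeries.X : Option (Fin n) → MvPowerSeries (Option (Fin n)) R'))) ^ 2)
    (hg' : ∀ i, g' i ∈ (Ideal.span (Set.range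
        (MvPowerSeries.X : Option (Fin n) → MvPowerSeries (Option (Fin n)) R'))) ^ 3)
    (hf' : MvPowerSeries.map (σ := Option (Fin n)) (algebraMap k R') f
        = (MvPowerSeries.X none) ^ 2 * h' +
          ∑ i : Fin n,
            (MvPowerSeries.X (some i)
              - MvPowerSeries.C (σ := Option (Fin n)) (R := R') (a' i) * MvPowerSeries.X none) * g' i)    (i : ℕ) (hi : i ≤ n) :
    let u : ℕ → MvPowerSeries (Option (Fin n)) R := fun j =>
      match j with
      | 0 => (MvPowerSeries.X none) ^ 2
      | j + 1 => if hj : j < n then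
          MvPowerSeries.X (some ⟨j, hj⟩)
            - MvPowerSeries.C (σ := Option (Fin n)) (R := R) (a ⟨j, hj⟩) * MvPowerSeries.X none
        else 0
    let v : ℕ → MvPowerSeries (Option (Fin n)) R := fun j =>
      match j with
      | 0 => h
      | j + 1 => if hj : j < n then g ⟨j, hj⟩ else 0
    let Φ := inflate ρ.toRingHom (knorrerPair u v i).1
    let Ψ := inflate ρ.toRingHom (knorrerPair u v i).2
    let u' : ℕ → MvPowerSeries (Option (Fin n)) R' := fun j =>
      match j with
      | 0 => (MvPowerSeries.X none) ^ 2
      | j + 1 => if hj : j < n then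
          MvPowerSeries.X (some ⟨j, hj⟩)
            - MvPowerSeries.C (σ := Option (Fin n)) (R := R') (a' ⟨j, hj⟩) * MvPowerSeries.X none
        else 0
    let v' : ℕ → MvPowerSeries (Option (Fin n)) R' := fun j =>
      match j with
      | 0 => h'
      | j + 1 => if hj : j < n then g' ⟨j, hj⟩ else 0
    let Φ' := inflate ρ'.toRingHom (knorrerPair u' v' i).1
    let Ψ' := inflate ρ'.toRingHom (knorrerPair u' v' i).2
    ∀ C D : Matrix ((Fin (2 ^ i)) × Fin m) ((Fin (2 ^ i)) × Fin m) k,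
      (∀ p q, (C.map ⇑(MvPowerSeries.C (σ := Option (Fin n)) (R := k)) * Φ) p q
              - (Φ' * D.map ⇑(MvPowerSeries.C (σ := Option (Fin n)) (R := k))) p q
            ∈ (Ideal.span (Set.range
                (MvPowerSeries.X : Option (Fin n) → MvPowerSeries (Option (Fin n)) k))) ^ 2) →
      (∀ p q, (D.map ⇑(MvPowerSeries.C (σ := Option (Fin n)) (R := k)) * Ψ) p q
              - (Ψ' * C.map ⇑(MvPowerSeries.C (σ := Option (Fin n)) (R := k))) p q
            ∈ (Ideal.span (Set.range
                (MvPowerSeries.X : Option (Fin n) → MvPowerSeries (Option (Fin n)) k))) ^ 2) →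
      (∀ p q : Fin (2 ^ i), p < q → ∀ α β : Fin m,
        C (p, α) (q, β) = 0 ∧ D (p, α) (q, β) = 0) := by
  intro u v Φ Ψ u' v' Φ' Ψ' C D hC hD p q hpq α β
  classical
  set μ : ℕ → (Option (Fin n) →₀ ℕ) :=
    fun l => if hl : l < n then Finsupp.single (some ⟨l, hl⟩) 1 else 0 with hμ
  have hne_none : ∀ (t : Fin n) (c : ℕ), c ≠ 0 →
      (Finsupp.single (some t) 1 : Option (Fin n) →₀ ℕ) ≠ Finsupp.single none c := by
    intro t c hc hcon
    have := DFunLike.congr_fun hcon none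
    simp [Finsupp.single_apply] at this
    omega
  have hne_some : ∀ (t s : Fin n), t ≠ s →
      (Finsupp.single (some t) 1 : Option (Fin n) →₀ ℕ) ≠ Finsupp.single (some s) 1 := by
    intro t s hts hcon
    have := DFunLike.congr_fun hcon (some t)
    rw [Finsupp.single_apply, Finsupp.single_apply, if_pos rfl,
      if_neg (by simpa using fun hc => hts hc.symm)] at this
    exact one_ne_zero this
  have pow3le : (Ideal.span (Set.range
      (MvPowerSeries.X : Option (Fin n) → MvPowerSeries (Option (Fin n)) R))) ^ 3 ≤
      (Ideal.span (Set.range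
      (MvPowerSeries.X : Option (Fin n) → MvPowerSeries (Option (Fin n)) R))) ^ 2 :=
    Ideal.pow_le_pow_right (by norm_num)
  have pow3le' : (Ideal.span (Set.range
      (MvPowerSeries.X : Option (Fin n) → MvPowerSeries (Option (Fin n)) R'))) ^ 3 ≤
      (Ideal.span (Set.range
      (MvPowerSeries.X : Option (Fin n) → MvPowerSeries (Option (Fin n)) R'))) ^ 2 :=
    Ideal.pow_le_pow_right (by norm_num)
  have hun : ∀ l < i, ∀ j ≤ i, j ≠ l + 1 → MvPowerSeries.coeff (R := R) (μ l) (u j) = 0 := by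
    intro l hl j hj hne
    have hln : l < n := lt_of_lt_of_le hl hi
    have hμl : μ l = Finsupp.single (some ⟨l, hln⟩) 1 := dif_pos hln
    cases j with
    | zero =>
      show MvPowerSeries.coeff (R := R) (μ l) ((MvPowerSeries.X none) ^ 2) = 0
      rw [hμl, MvPowerSeries.coeff_X_pow, if_neg (hne_none _ 2 (by norm_num))]
    | succ j =>
      have hjn : j < n := by omega
      show MvPowerSeries.coeff (R := R) (μ l) (if hj : j < n then
          MvPowerSeries.X (some ⟨j, hj⟩)
            - MvPowerSeries.C (σ := Option (Fin n)) (R := R) (a ⟨j, hj⟩) * MvPowerSeries.X none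
          else 0) = 0
      rw [dif_pos hjn, hμl, map_sub, MvPowerSeries.coeff_C_mul,
        MvPowerSeries.coeff_X, MvPowerSeries.coeff_X,
        if_neg (hne_some _ _ (by simp [Fin.ext_iff]; omega)),
        if_neg (hne_none _ 1 one_ne_zero), mul_zero, sub_zero]
  have hu1 : ∀ l < i, MvPowerSeries.coeff (R := R) (μ l) (u (l + 1)) = 1 := by
    intro l hl
    have hln : l < n := lt_of_lt_of_le hl hi
    have hμl : μ l = Finsupp.single (some ⟨l, hln⟩) 1 := dif_pos hln
    show MvPowerSeries.coeff (R := R) (μ l) (if hj : l < n then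
        MvPowerSeries.X (some ⟨l, hj⟩)
          - MvPowerSeries.C (σ := Option (Fin n)) (R := R) (a ⟨l, hj⟩) * MvPowerSeries.X none
        else 0) = 1
    rw [dif_pos hln, hμl, map_sub, MvPowerSeries.coeff_C_mul,
      MvPowerSeries.coeff_X, MvPowerSeries.coeff_X, if_pos rfl,
      if_neg (hne_none _ 1 one_ne_zero), mul_zero, sub_zero]
  have hvn : ∀ l < i, ∀ j ≤ i, MvPowerSeries.coeff (R := R) (μ l) (v j) = 0 := by
    intro l hl j hj
    have hln : l < n := lt_of_lt_of_le hl hi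
    have hμl : μ l = Finsupp.single (some ⟨l, hln⟩) 1 := dif_pos hln
    cases j with
    | zero =>
      show MvPowerSeries.coeff (R := R) (μ l) h = 0
      rw [hμl]
      exact coeff_single_zero_of_mem_sq hh _
    | succ j =>
      have hjn : j < n := by omega
      show MvPowerSeries.coeff (R := R) (μ l) (if hj : j < n then g ⟨j, hj⟩ else 0) = 0
      rw [dif_pos hjn, hμl]
      exact coeff_single_zero_of_mem_sq (pow3le (hg _)) _
  have hun' : ∀ l < i, ∀ j ≤ i, j ≠ l + 1 → MvPowerSeries.coeff (R := R') (μ l) (u' j) = 0 := by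
    intro l hl j hj hne
    have hln : l < n := lt_of_lt_of_le hl hi
    have hμl : μ l = Finsupp.single (some ⟨l, hln⟩) 1 := dif_pos hln
    cases j with
    | zero =>
      show MvPowerSeries.coeff (R := R') (μ l) ((MvPowerSeries.X none) ^ 2) = 0
      rw [hμl, MvPowerSeries.coeff_X_pow, if_neg (hne_none _ 2 (by norm_num))]
    | succ j =>
      have hjn : j < n := by omega
      show MvPowerSeries.coeff (R := R') (μ l) (if hj : j < n then
          MvPowerSeries.X (some ⟨j, hj⟩)
            - MvPowerSeries.C (σ := Option (Fin n)) (R := R') (a' ⟨j, hj⟩) * MvPowerSeries.X none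
          else 0) = 0
      rw [dif_pos hjn, hμl, map_sub, MvPowerSeries.coeff_C_mul,
        MvPowerSeries.coeff_X, MvPowerSeries.coeff_X,
        if_neg (hne_some _ _ (by simp [Fin.ext_iff]; omega)),
        if_neg (hne_none _ 1 one_ne_zero), mul_zero, sub_zero]
  have hu1' : ∀ l < i, MvPowerSeries.coeff (R := R') (μ l) (u' (l + 1)) = 1 := by
    intro l hl
    have hln : l < n := lt_of_lt_of_le hl hi
    have hμl : μ l = Finsupp.single (some ⟨l, hln⟩) 1 := dif_pos hln
    show MvPowerSeries.coeff (R := R') (μ l) (if hj : l < n then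
        MvPowerSeries.X (some ⟨l, hj⟩)
          - MvPowerSeries.C (σ := Option (Fin n)) (R := R') (a' ⟨l, hj⟩) * MvPowerSeries.X none
        else 0) = 1
    rw [dif_pos hln, hμl, map_sub, MvPowerSeries.coeff_C_mul,
      MvPowerSeries.coeff_X, MvPowerSeries.coeff_X, if_pos rfl,
      if_neg (hne_none _ 1 one_ne_zero), mul_zero, sub_zero]
  have hvn' : ∀ l < i, ∀ j ≤ i, MvPowerSeries.coeff (R := R') (μ l) (v' j) = 0 := by
    intro l hl j hj
    have hln : l < n := lt_of_lt_of_le hl hi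
    have hμl : μ l = Finsupp.single (some ⟨l, hln⟩) 1 := dif_pos hln
    cases j with
    | zero =>
      show MvPowerSeries.coeff (R := R') (μ l) h' = 0
      rw [hμl]
      exact coeff_single_zero_of_mem_sq hh' _
    | succ j =>
      have hjn : j < n := by omega
      show MvPowerSeries.coeff (R := R') (μ l) (if hj : j < n then g' ⟨j, hj⟩ else 0) = 0
      rw [dif_pos hjn, hμl]
      exact coeff_single_zero_of_mem_sq (pow3le' (hg' _)) _
  have hCmat : ∀ l < i, C * blowC ρ.toRingHom (μ l) (knorrerPair u v i).1
      = blowC ρ'.toRingHom (μ l) (knorrerPair u' v' i).1 * D := by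
    intro l hl
    have hln : l < n := lt_of_lt_of_le hl hi
    have hμl : μ l = Finsupp.single (some ⟨l, hln⟩) 1 := dif_pos hln
    ext pp qq
    have h0 := coeff_single_zero_of_mem_sq (hC pp qq) (some ⟨l, hln⟩)
    rw [map_sub, sub_eq_zero] at h0
    rw [hμl, ← coeff_map_C_mul_inflate, ← coeff_inflate_mul_map_C]
    exact h0
  have hDmat : ∀ l < i, D * blowC ρ.toRingHom (μ l) (knorrerPair u v i).2
      = blowC ρ'.toRingHom (μ l) (knorrerPair u' v' i).2 * C := by
    intro l hl
    have hln : l < n := lt_of_lt_of_le hl hi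
    have hμl : μ l = Finsupp.single (some ⟨l, hln⟩) 1 := dif_pos hln
    ext pp qq
    have h0 := coeff_single_zero_of_mem_sq (hD pp qq) (some ⟨l, hln⟩)
    rw [map_sub, sub_eq_zero] at h0
    rw [hμl, ← coeff_map_C_mul_inflate, ← coeff_inflate_mul_map_C]
    exact h0
  exact aux_lower_triangular ρ.toRingHom ρ'.toRingHom u v u' v' μ i
    hun hu1 hvn hun' hu1' hvn' C D hCmat hDmat (p, α) (q, β) hpq
end

section
/- In the setting of the previous lemma, additionally each diagonal (m×m)-block C_{jj} of C and D_{jj} of D equals either C_{11} or D_{11}, and for each j = 1,...,i one has C_{2^i,2^i}·A_j = A_j'·D_{2^i−2^{j−1}, 2^i−2^{j−1}}. -/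
open Matrix MvPowerSeries

namespace KnHelper


lemma add_pow_lt {q t l : ℕ} (htl : t < l) (hq : q < 2 ^ l) (hb : q.testBit t = false) :
    q + 2 ^ t < 2 ^ l := by
  have hlt : q % 2 ^ (t+1) < 2 ^ (t+1) := Nat.mod_lt _ (Nat.two_pow_pos _)
  have h1 : q % 2 ^ (t+1) < 2 ^ t := by
    have hb' : (q % 2 ^ (t+1)).testBit t = false := by
      simp [Nat.testBit_mod_two_pow, hb]
    by_contra hge
    push_neg at hge
    have hdiv : q % 2 ^ (t+1) / 2 ^ t = 1 := by
      have h2 : q % 2 ^ (t+1) / 2 ^ t < 2 := by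
        rw [Nat.div_lt_iff_lt_mul (Nat.two_pow_pos t)]
        calc q % 2 ^ (t+1) < 2 ^ (t+1) := hlt
        _ = 2 * 2 ^ t := by ring
      have h3 : 1 ≤ q % 2 ^ (t+1) / 2 ^ t := (Nat.one_le_div_iff (Nat.two_pow_pos t)).2 hge
      omega
    simp [Nat.testBit_eq_decide_div_mod_eq, hdiv] at hb'
  have hd : q / 2 ^ (t+1) + 1 ≤ 2 ^ (l - (t+1)) := by
    have : q / 2 ^ (t+1) < 2 ^ (l - (t+1)) := by
      rw [Nat.div_lt_iff_lt_mul (Nat.two_pow_pos _)]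
      calc q < 2 ^ l := hq
      _ = 2 ^ (l - (t+1)) * 2 ^ (t+1) := by rw [← pow_add]; congr 1; omega
    omega
  have e1 : 2 ^ (t+1) * (q / 2 ^ (t+1)) + q % 2 ^ (t+1) = q := Nat.div_add_mod q _
  have e2 : 2 ^ (t+1) = 2 ^ t + 2 ^ t := by rw [pow_succ, Nat.mul_two]
  calc q + 2 ^ t < 2 ^ (t+1) * (q / 2 ^ (t+1) + 1) := by
        rw [Nat.mul_add, Nat.mul_one]; linarith [e1, h1, e2]
  _ ≤ 2 ^ (t+1) * 2 ^ (l - (t+1)) := Nat.mul_le_mul_left _ hd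
  _ = 2 ^ l := by rw [← pow_add]; congr 1; omega

lemma testBit_add_pow {q t : ℕ} (hb : q.testBit t = false) (l : ℕ) :
    (q + 2 ^ t).testBit l = (q.testBit l || decide (l = t)) := by
  rcases lt_trichotomy l t with h | rfl | h
  · rw [Nat.add_comm, Nat.testBit_two_pow_add_gt h]
    have : decide (l = t) = false := by simp; omega
    rw [this, Bool.or_false]
  · rw [Nat.add_comm, Nat.testBit_two_pow_add_eq, hb]; simp
  · have hmod : q % 2 ^ l + 2 ^ t < 2 ^ l :=
      add_pow_lt h (Nat.mod_lt _ (Nat.two_pow_pos _))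
        (by simp [Nat.testBit_mod_two_pow, hb, h])
    have e1 : 2 ^ l * (q / 2 ^ l) + q % 2 ^ l = q := Nat.div_add_mod q _
    have hdiveq : (q + 2 ^ t) / 2 ^ l = q / 2 ^ l := by
      conv_lhs => rw [← e1]
      rw [Nat.add_assoc, Nat.mul_add_div (Nat.two_pow_pos _), Nat.div_eq_of_lt hmod,
        Nat.add_zero]
    have : decide (l = t) = false := by simp; omega
    rw [Nat.testBit_eq_decide_div_mod_eq, Nat.testBit_eq_decide_div_mod_eq, hdiveq, this, Bool.or_false]

/-- number of set bits of `p` strictly between `t` and `i`. -/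
def cnt (i t p : ℕ) : ℕ := ((Finset.Ico (t+1) i).filter (fun l => p.testBit l)).card

lemma cnt_top (i p : ℕ) : cnt (i+1) i p = 0 := by simp [cnt]

lemma cnt_lt {i t p : ℕ} (ht : t < i) (hp : p < 2 ^ i) : cnt (i+1) t p = cnt i t p := by
  rw [cnt, cnt, Nat.Ico_succ_right_eq_insert_Ico (by omega), Finset.filter_insert,
    if_neg (by simp [Nat.testBit_eq_false_of_lt hp])]

lemma cnt_add {i t x : ℕ} (ht : t < i) (hx : x < 2 ^ i) :
    cnt (i+1) t (2 ^ i + x) = cnt i t x + 1 := by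
  rw [cnt, cnt, Nat.Ico_succ_right_eq_insert_Ico (by omega), Finset.filter_insert,
    if_pos (by rw [Nat.testBit_two_pow_add_eq, Nat.testBit_eq_false_of_lt hx]; rfl)]
  rw [Finset.card_insert_of_notMem (by simp)]
  have : Finset.filter (fun l => (2 ^ i + x).testBit l = true) (Finset.Ico (t+1) i)
      = Finset.filter (fun l => x.testBit l = true) (Finset.Ico (t+1) i) := by
    apply Finset.filter_congr
    intro l hl
    rw [Finset.mem_Ico] at hl
    rw [Nat.testBit_two_pow_add_gt hl.2]
  rw [this]



lemma constantCoeff_eq_zero_of_mem_span {S σ : Type} [CommRing S]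
    {F : MvPowerSeries σ S}
    (hF : F ∈ Ideal.span (Set.range (X : σ → MvPowerSeries σ S))) :
    constantCoeff (σ := σ) (R := S) F = 0 := by
  have hle : Ideal.span (Set.range (X : σ → MvPowerSeries σ S))
      ≤ RingHom.ker (constantCoeff (σ := σ) (R := S)) := by
    rw [Ideal.span_le]
    rintro _ ⟨s, rfl⟩
    simp [RingHom.mem_ker]
  exact hle hF

lemma coeff_single_eq_zero_of_mem_sq {S σ : Type} [CommRing S]
    {F : MvPowerSeries σ S}
    (hF : F ∈ (Ideal.span (Set.range (X : σ → MvPowerSeries σ S))) ^ 2) (s : σ) :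
    coeff (R := S) (Finsupp.single s 1) F = 0 := by
  classical
  rw [pow_two] at hF
  refine Submodule.mul_induction_on hF ?_ ?_
  · intro x hx y hy
    rw [coeff_mul]
    apply Finset.sum_eq_zero
    rintro ⟨d₁, d₂⟩ hd
    replace hd := Finset.HasAntidiagonal.mem_antidiagonal.mp hd
    by_cases h1 : d₁ = 0
    · have h0 : coeff (R := S) d₁ x = 0 := by
        rw [h1]
        have : coeff (R := S) (0 : σ →₀ ℕ) x = constantCoeff (σ := σ) (R := S) x := rfl
        rw [this, constantCoeff_eq_zero_of_mem_span hx]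
      rw [h0, zero_mul]
    · have h2 : d₂ = 0 := by
        obtain ⟨t₀, ht₀⟩ := Finsupp.ne_iff.mp h1
        have h3 := DFunLike.congr_fun hd t₀
        have h4 : ∀ b, (d₁ + d₂) b = d₁ b + d₂ b := fun b => rfl
        ext b
        have h5 := DFunLike.congr_fun hd b
        rw [h4] at h3 h5
        rw [Finsupp.single_apply] at h3 h5
        simp only [Finsupp.coe_zero, Pi.zero_apply]
        by_cases hbs : s = b
        · subst hbs
          by_cases hts : s = t₀ <;> simp_all <;> omega
        · simp only [if_neg hbs] at h5; omega
      rw [h2]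
      have : coeff (R := S) (0 : σ →₀ ℕ) y = constantCoeff (σ := σ) (R := S) y := rfl
      rw [this, constantCoeff_eq_zero_of_mem_span hy, mul_zero]
  · intro x y hx hy
    rw [map_add, hx, hy, add_zero]


/-- linear-coefficient matrix entries of the Knörrer pair -/
def kc {S : Type} [CommRing S] (c : ℕ → S) (i p q : ℕ) : S :=
  ∑ t ∈ Finset.range i,
    if p = q + 2 ^ t ∧ q.testBit t = false then (-1 : S) ^ (cnt i t p) * c t else 0

variable {S : Type} [CommRing S] (c : ℕ → S)

lemma kc_tl {i x y : ℕ} (hx : x < 2 ^ i) (_hy : y < 2 ^ i) :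
    kc c (i+1) x y = kc c i x y := by
  rw [kc, kc, Finset.sum_range_succ, if_neg (by omega), add_zero]
  refine Finset.sum_congr rfl fun t ht => ?_
  rw [Finset.mem_range] at ht
  by_cases hc : x = y + 2 ^ t ∧ y.testBit t = false
  · rw [if_pos hc, if_pos hc, cnt_lt ht hx]
  · rw [if_neg hc, if_neg hc]

lemma kc_br {i x y : ℕ} (hx : x < 2 ^ i) (_hy : y < 2 ^ i) :
    kc c (i+1) (2 ^ i + x) (2 ^ i + y) = -kc c i x y := by
  rw [kc, kc, Finset.sum_range_succ, if_neg (by omega), add_zero, ← Finset.sum_neg_distrib]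
  refine Finset.sum_congr rfl fun t ht => ?_
  rw [Finset.mem_range] at ht
  have hbit : (2 ^ i + y).testBit t = y.testBit t := Nat.testBit_two_pow_add_gt ht y
  by_cases hc : x = y + 2 ^ t ∧ y.testBit t = false
  · rw [if_pos ⟨by omega, by rw [hbit]; exact hc.2⟩,
      if_pos hc, cnt_add ht hx, pow_succ]
    ring
  · rw [if_neg (fun hcc => hc ⟨by omega, by rw [← hbit]; exact hcc.2⟩), if_neg hc, neg_zero]

lemma kc_bl {i x y : ℕ} (hx : x < 2 ^ i) (hy : y < 2 ^ i) :
    kc c (i+1) (2 ^ i + x) y = if x = y then c i else 0 := by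
  rw [kc, Finset.sum_range_succ]
  have h1 : (2 ^ i + x = y + 2 ^ i ∧ y.testBit i = false) ↔ x = y := by
    constructor
    · intro hc; omega
    · intro hc; exact ⟨by omega, Nat.testBit_eq_false_of_lt hy⟩
  have h2 : ∀ t ∈ Finset.range i,
      (if 2 ^ i + x = y + 2 ^ t ∧ y.testBit t = false
        then (-1 : S) ^ (cnt (i+1) t (2 ^ i + x)) * c t else 0) = 0 := by
    intro t ht
    rw [Finset.mem_range] at ht
    rw [if_neg]
    rintro ⟨hc1, hc2⟩
    have h3 : (y + 2 ^ t).testBit i = (y.testBit i || decide (i = t)) := testBit_add_pow hc2 i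
    rw [← hc1, Nat.testBit_two_pow_add_eq, Nat.testBit_eq_false_of_lt hx,
      Nat.testBit_eq_false_of_lt hy] at h3
    simp at h3
    omega
  rw [Finset.sum_eq_zero h2, zero_add, cnt_top, pow_zero]
  by_cases hc : x = y
  · rw [if_pos (h1.mpr hc), if_pos hc, one_mul]
  · rw [if_neg (fun hcc => hc (h1.mp hcc)), if_neg hc]

lemma kc_tr {i x y : ℕ} (hx : x < 2 ^ i) (_hy : y < 2 ^ i) :
    kc c (i+1) x (2 ^ i + y) = 0 := by
  rw [kc]
  apply Finset.sum_eq_zero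
  intro t ht
  rw [Finset.mem_range, Nat.lt_succ_iff] at ht
  rw [if_neg]
  rintro ⟨hc1, _⟩
  rw [hc1, Nat.add_assoc] at hx
  exact Nat.not_lt.mpr (Nat.le_add_right _ _) hx

lemma knorrer_map {σ : Type} (u v : ℕ → MvPowerSeries σ S)
    (L : MvPowerSeries σ S →+ S) (hu0 : L (u 0) = 0) (hv : ∀ t, L (v t) = 0) :
    ∀ (i : ℕ) (p q : Fin (2 ^ i)),
      L ((knorrerPair u v i).1 p q) = kc (fun t => L (u (t + 1))) i (p : ℕ) (q : ℕ) ∧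
      L ((knorrerPair u v i).2 p q) = -kc (fun t => L (u (t + 1))) i (p : ℕ) (q : ℕ)
  | 0, p, q => by
    constructor
    · show L (u 0) = _
      rw [hu0, kc, Finset.range_zero, Finset.sum_empty]
    · show L (v 0) = _
      rw [hv 0, kc, Finset.range_zero, Finset.sum_empty, neg_zero]
  | (i + 1), p, q => by
    have IH := knorrer_map u v L hu0 hv i
    set e : Fin (2 ^ i) ⊕ Fin (2 ^ i) ≃ Fin (2 ^ (i + 1)) :=
      finSumFinEquiv.trans (finCongr (by rw [pow_succ, mul_two])) with he
    obtain ⟨x, rfl⟩ := e.surjective p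
    obtain ⟨y, rfl⟩ := e.surjective q
    have hKP1 : (knorrerPair u v (i+1)).1 (e x) (e y)
        = (Matrix.fromBlocks (knorrerPair u v i).1 ((-(v (i + 1))) • 1)
            ((u (i + 1)) • 1) (knorrerPair u v i).2) x y := by
      show (Matrix.reindex e e (Matrix.fromBlocks (knorrerPair u v i).1 _ _ _)) (e x) (e y) = _
      rw [Matrix.reindex_apply, Matrix.submatrix_apply, Equiv.symm_apply_apply,
        Equiv.symm_apply_apply]
    have hKP2 : (knorrerPair u v (i+1)).2 (e x) (e y)
        = (Matrix.fromBlocks (knorrerPair u v i).2 ((v (i + 1)) • 1)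
            ((-(u (i + 1))) • 1) (knorrerPair u v i).1) x y := by
      show (Matrix.reindex e e (Matrix.fromBlocks (knorrerPair u v i).2 _ _ _)) (e x) (e y) = _
      rw [Matrix.reindex_apply, Matrix.submatrix_apply, Equiv.symm_apply_apply,
        Equiv.symm_apply_apply]
    have hco1 : ∀ z : Fin (2 ^ i), ((e (Sum.inl z) : Fin (2 ^ (i+1))) : ℕ) = (z : ℕ) := by
      intro z; simp [he]
    have hco2 : ∀ z : Fin (2 ^ i), ((e (Sum.inr z) : Fin (2 ^ (i+1))) : ℕ) = 2 ^ i + (z : ℕ) := by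
      intro z; simp [he]; omega
    rw [hKP1, hKP2]
    rcases x with x | x <;> rcases y with y | y
    · rw [Matrix.fromBlocks_apply₁₁, Matrix.fromBlocks_apply₁₁, hco1, hco1,
        kc_tl _ x.isLt y.isLt]
      exact IH x y
    · rw [Matrix.fromBlocks_apply₁₂, Matrix.fromBlocks_apply₁₂, hco1, hco2,
        kc_tr _ x.isLt y.isLt, neg_zero]
      constructor
      · rw [Matrix.smul_apply, Matrix.one_apply, smul_ite, smul_zero, smul_eq_mul, mul_one,
          apply_ite L, map_neg, hv, neg_zero, map_zero, ite_self]
      · rw [Matrix.smul_apply, Matrix.one_apply, smul_ite, smul_zero, smul_eq_mul, mul_one,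
          apply_ite L, hv, map_zero, ite_self]
    · rw [Matrix.fromBlocks_apply₂₁, Matrix.fromBlocks_apply₂₁, hco2, hco1,
        kc_bl _ x.isLt y.isLt]
      constructor
      · rw [Matrix.smul_apply, Matrix.one_apply, smul_ite, smul_zero, smul_eq_mul, mul_one,
          apply_ite L, map_zero]
        by_cases hxy : x = y
        · rw [if_pos hxy, if_pos (by rw [hxy])]
        · rw [if_neg hxy, if_neg (fun hh => hxy (Fin.ext hh))]
      · rw [Matrix.smul_apply, Matrix.one_apply, smul_ite, smul_zero, smul_eq_mul, mul_one,
          apply_ite L, map_neg, map_zero]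
        by_cases hxy : x = y
        · rw [if_pos hxy, if_pos (show (x:ℕ) = (y:ℕ) by rw [hxy])]
        · rw [if_neg hxy, if_neg (fun hh => hxy (Fin.ext hh)), neg_zero]
    · rw [Matrix.fromBlocks_apply₂₂, Matrix.fromBlocks_apply₂₂, hco2, hco2,
        kc_br _ x.isLt y.isLt]
      constructor
      · exact (IH x y).2
      · rw [neg_neg]; exact (IH x y).1

lemma coeff_inflate {k R : Type} [Field k] [CommRing R] {m : ℕ} {σ N : Type}
    (ρ : R →+* Matrix (Fin m) (Fin m) k) (M : Matrix N N (MvPowerSeries σ R))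
    (d : σ →₀ ℕ) (P Q : N × Fin m) :
    coeff (R := k) d (inflate ρ M P Q) = ρ (coeff (R := R) d (M P.1 Q.1)) P.2 Q.2 := rfl

lemma inv_cancel_smul {k : Type} [Field k] {m : ℕ} {c : k} (hc : c ≠ 0)
    {M N : Matrix (Fin m) (Fin m) k} (hMN : c • M = c • N) : M = N := by
  have h2 := congrArg (fun P => c⁻¹ • P) hMN
  simpa [inv_smul_smul₀ hc] using h2

lemma extract {k R R' : Type} [Field k] [CommRing R] [CommRing R'] {m : ℕ} {σ : Type}
    (ρ : R →+* Matrix (Fin m) (Fin m) k) (ρ' : R' →+* Matrix (Fin m) (Fin m) k)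
    {N : Type} [Fintype N] [DecidableEq N]
    (M : Matrix N N (MvPowerSeries σ R)) (M' : Matrix N N (MvPowerSeries σ R'))
    (C D : Matrix (N × Fin m) (N × Fin m) k)
    (H : ∀ P Q, (C.map ⇑(MvPowerSeries.C (σ := σ) (R := k)) * inflate ρ M) P Q
        - (inflate ρ' M' * D.map ⇑(MvPowerSeries.C (σ := σ) (R := k))) P Q
        ∈ (Ideal.span (Set.range (X : σ → MvPowerSeries σ k))) ^ 2)
    (s : σ) (P Q : N × Fin m) :
    ∑ W : N × Fin m, C P W * ρ (coeff (R := R) (Finsupp.single s 1) (M W.1 Q.1)) W.2 Q.2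
      = ∑ W : N × Fin m,
        ρ' (coeff (R := R') (Finsupp.single s 1) (M' P.1 W.1)) P.2 W.2 * D W Q := by
  have h0 := coeff_single_eq_zero_of_mem_sq (H P Q) s
  rw [map_sub, sub_eq_zero] at h0
  rw [Matrix.mul_apply, Matrix.mul_apply, map_sum, map_sum] at h0
  simp only [Matrix.map_apply, coeff_C_mul, coeff_mul_C, coeff_inflate] at h0
  exact h0

lemma matrixize {k : Type} [Field k] {m : ℕ} {N : Type} [Fintype N] [DecidableEq N]
    (C D : Matrix (N × Fin m) (N × Fin m) k)
    (E E' : N → N → Matrix (Fin m) (Fin m) k)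
    (H : ∀ P Q : N × Fin m, ∑ W : N × Fin m, C P W * (E W.1 Q.1) W.2 Q.2
        = ∑ W : N × Fin m, (E' P.1 W.1) P.2 W.2 * D W Q) (p q : N) :
    ∑ r : N, (Matrix.of fun α β => C (p, α) (r, β)) * E r q
      = ∑ r : N, E' p r * (Matrix.of fun α β => D (r, α) (q, β)) := by
  ext α β
  have h := H (p, α) (q, β)
  simpa [Fintype.sum_prod_type, Matrix.sum_apply, Matrix.mul_apply, Matrix.of_apply] using h

lemma rho_kc_delta {k R : Type} [Field k] [CommRing R] {m : ℕ}
    (ρ : R →+* Matrix (Fin m) (Fin m) k) {i w : ℕ} (hw : w < i)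
    (c : ℕ → R) (hc : ∀ t, c t = if t = w then 1 else 0) (p q : ℕ) :
    ρ (kc c i p q) = if p = q + 2 ^ w ∧ q.testBit w = false
      then ((-1 : k) ^ (cnt i w p)) • (1 : Matrix (Fin m) (Fin m) k) else 0 := by
  rw [kc, map_sum, Finset.sum_eq_single w]
  · rw [hc, if_pos rfl, mul_one]
    by_cases hcond : p = q + 2 ^ w ∧ q.testBit w = false
    · rw [if_pos hcond, if_pos hcond, map_pow, map_neg, _root_.map_one,
        show (-(1 : Matrix (Fin m) (Fin m) k)) = (-1 : k) • 1 by rw [neg_smul, one_smul],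
        smul_pow, one_pow]
    · rw [if_neg hcond, if_neg hcond, map_zero]
  · intro t _ htw
    rw [hc, if_neg htw, mul_zero, ite_self, map_zero]
  · intro hwi
    exact absurd (Finset.mem_range.mpr hw) hwi

lemma srel {k : Type} [Field k] {m i w : ℕ} (hw : w < i)
    (Cb Db : Fin (2 ^ i) → Fin (2 ^ i) → Matrix (Fin m) (Fin m) k)
    (MR : ∀ p q : Fin (2 ^ i),
      ∑ r : Fin (2 ^ i), Cb p r *
        (if (r : ℕ) = (q : ℕ) + 2 ^ w ∧ (q : ℕ).testBit w = false
          then ((-1 : k) ^ (cnt i w (r : ℕ))) • (1 : Matrix (Fin m) (Fin m) k) else 0)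
      = ∑ r : Fin (2 ^ i),
        (if (p : ℕ) = (r : ℕ) + 2 ^ w ∧ (r : ℕ).testBit w = false
          then ((-1 : k) ^ (cnt i w (p : ℕ))) • (1 : Matrix (Fin m) (Fin m) k) else 0)
          * Db r q) :
    (∀ p q : Fin (2 ^ i), (q : ℕ).testBit w = true → (p : ℕ).testBit w = false → Cb p q = 0) ∧
    (∀ p : Fin (2 ^ i), (p : ℕ).testBit w = true →
      Cb p p = Db ⟨(p : ℕ) - 2 ^ w, lt_of_le_of_lt (Nat.sub_le _ _) p.isLt⟩
                  ⟨(p : ℕ) - 2 ^ w, lt_of_le_of_lt (Nat.sub_le _ _) p.isLt⟩) := by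
  have sgn_ne : ∀ e : ℕ, ((-1 : k) ^ e) ≠ 0 :=
    fun e => pow_ne_zero _ (neg_ne_zero.mpr one_ne_zero)
  have sub_bit : ∀ p : Fin (2 ^ i), (p : ℕ).testBit w = true →
      ((p : ℕ) - 2 ^ w).testBit w = false := by
    intro p hp
    have h2w : 2 ^ w ≤ (p : ℕ) := Nat.ge_two_pow_of_testBit hp
    have h3 : (2 ^ w + ((p : ℕ) - 2 ^ w)).testBit w = !((p : ℕ) - 2 ^ w).testBit w :=
      Nat.testBit_two_pow_add_eq _ _
    rw [show 2 ^ w + ((p : ℕ) - 2 ^ w) = (p : ℕ) by omega, hp] at h3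
    simpa using h3.symm
  have key : ∀ p q : Fin (2 ^ i),
      (if hb : (q : ℕ).testBit w = false
        then ((-1 : k) ^ (cnt i w ((q : ℕ) + 2 ^ w))) •
          Cb p ⟨(q : ℕ) + 2 ^ w, add_pow_lt hw q.isLt hb⟩ else 0)
      = (if (p : ℕ).testBit w = true
        then ((-1 : k) ^ (cnt i w (p : ℕ))) •
          Db ⟨(p : ℕ) - 2 ^ w, lt_of_le_of_lt (Nat.sub_le _ _) p.isLt⟩ q else 0) := by
    intro p q
    have hL : (∑ r : Fin (2 ^ i), Cb p r *
        (if (r : ℕ) = (q : ℕ) + 2 ^ w ∧ (q : ℕ).testBit w = false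
          then ((-1 : k) ^ (cnt i w (r : ℕ))) • (1 : Matrix (Fin m) (Fin m) k) else 0))
        = (if hb : (q : ℕ).testBit w = false
          then ((-1 : k) ^ (cnt i w ((q : ℕ) + 2 ^ w))) •
            Cb p ⟨(q : ℕ) + 2 ^ w, add_pow_lt hw q.isLt hb⟩ else 0) := by
      by_cases hb : (q : ℕ).testBit w = false
      · rw [dif_pos hb, Finset.sum_eq_single (⟨(q : ℕ) + 2 ^ w, add_pow_lt hw q.isLt hb⟩ :
          Fin (2 ^ i))]
        · rw [if_pos ⟨rfl, hb⟩, mul_smul_comm, mul_one]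
        · intro r _ hr
          rw [if_neg, mul_zero]
          rintro ⟨h1, -⟩
          exact hr (Fin.ext h1)
        · intro hmem
          exact absurd (Finset.mem_univ _) hmem
      · rw [dif_neg hb]
        apply Finset.sum_eq_zero
        intro r _
        rw [if_neg (fun hc => hb hc.2), mul_zero]
    have hR : (∑ r : Fin (2 ^ i),
        (if (p : ℕ) = (r : ℕ) + 2 ^ w ∧ (r : ℕ).testBit w = false
          then ((-1 : k) ^ (cnt i w (p : ℕ))) • (1 : Matrix (Fin m) (Fin m) k) else 0)
          * Db r q)
        = (if (p : ℕ).testBit w = true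
          then ((-1 : k) ^ (cnt i w (p : ℕ))) •
            Db ⟨(p : ℕ) - 2 ^ w, lt_of_le_of_lt (Nat.sub_le _ _) p.isLt⟩ q else 0) := by
      by_cases hb : (p : ℕ).testBit w = true
      · have h2w : 2 ^ w ≤ (p : ℕ) := Nat.ge_two_pow_of_testBit hb
        rw [if_pos hb, Finset.sum_eq_single
            (⟨(p : ℕ) - 2 ^ w, lt_of_le_of_lt (Nat.sub_le _ _) p.isLt⟩ : Fin (2 ^ i))]
        · rw [if_pos ⟨by simp; omega, sub_bit p hb⟩, smul_mul_assoc, one_mul]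
        · intro r _ hr
          rw [if_neg, zero_mul]
          rintro ⟨h1, -⟩
          exact hr (Fin.ext (by simp; omega))
        · intro hmem
          exact absurd (Finset.mem_univ _) hmem
      · rw [if_neg hb]
        apply Finset.sum_eq_zero
        intro r _
        rw [if_neg, zero_mul]
        rintro ⟨h1, h2⟩
        apply hb
        rw [h1, Nat.add_comm, Nat.testBit_two_pow_add_eq, h2]
        rfl
    rw [← hL, ← hR]
    exact MR p q
  constructor
  · intro p q hq hp
    have h2w : 2 ^ w ≤ (q : ℕ) := Nat.ge_two_pow_of_testBit hq
    set q0 : Fin (2 ^ i) := ⟨(q : ℕ) - 2 ^ w, lt_of_le_of_lt (Nat.sub_le _ _) q.isLt⟩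
      with hq0
    have hbit : (q0 : ℕ).testBit w = false := sub_bit q hq
    have hkey := key p q0
    rw [dif_pos hbit, if_neg (by simp [hp])] at hkey
    have hmk : (⟨(q0 : ℕ) + 2 ^ w, add_pow_lt hw q0.isLt hbit⟩ : Fin (2 ^ i)) = q :=
      Fin.ext (by simp [hq0]; omega)
    rw [hmk] at hkey
    exact inv_cancel_smul (sgn_ne _) (hkey.trans (smul_zero _).symm)
  · intro p hp
    have h2w : 2 ^ w ≤ (p : ℕ) := Nat.ge_two_pow_of_testBit hp
    set p0 : Fin (2 ^ i) := ⟨(p : ℕ) - 2 ^ w, lt_of_le_of_lt (Nat.sub_le _ _) p.isLt⟩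
      with hp0
    have hbit : (p0 : ℕ).testBit w = false := sub_bit p hp
    have hkey := key p p0
    rw [dif_pos hbit, if_pos hp] at hkey
    have hmk : (⟨(p0 : ℕ) + 2 ^ w, add_pow_lt hw p0.isLt hbit⟩ : Fin (2 ^ i)) = p :=
      Fin.ext (by simp [hp0]; omega)
    rw [hmk] at hkey
    have hnt : (p0 : ℕ) + 2 ^ w = (p : ℕ) := by simp [hp0]; omega
    rw [hnt] at hkey
    exact inv_cancel_smul (sgn_ne _) hkey


lemma rho_sign_mul {k R : Type} [Field k] [CommRing R] {m : ℕ}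
    (ρ : R →+* Matrix (Fin m) (Fin m) k) (e : ℕ) (c : R) :
    ρ ((-1) ^ e * c) = ((-1 : k) ^ e) • ρ c := by
  rw [_root_.map_mul, map_pow, map_neg, _root_.map_one,
    show (-(1 : Matrix (Fin m) (Fin m) k)) = (-1 : k) • 1 by rw [neg_smul, one_smul],
    smul_pow, one_pow, smul_mul_assoc, one_mul]

lemma kc_col_collapse {R : Type} [CommRing R] (c : ℕ → R) {i j : ℕ} (hj : j < i) {q : ℕ}
    (hq : ∀ t, t < i → (q.testBit t = false ↔ t = j)) (p : ℕ) :
    kc c i p q = if p = q + 2 ^ j then (-1 : R) ^ (cnt i j p) * c j else 0 := by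
  rw [kc, Finset.sum_eq_single j]
  · by_cases hcond : p = q + 2 ^ j
    · rw [if_pos ⟨hcond, (hq j hj).mpr rfl⟩, if_pos hcond]
    · rw [if_neg (fun hc' => hcond hc'.1), if_neg hcond]
  · intro t ht htj
    rw [Finset.mem_range] at ht
    rw [if_neg]
    rintro ⟨-, h2⟩
    exact htj ((hq t ht).mp h2)
  · intro hmem
    exact absurd (Finset.mem_range.mpr hj) hmem

lemma nrel {k : Type} [Field k] {m i j : ℕ} (hj : j < i)
    (Cb Db : Fin (2 ^ i) → Fin (2 ^ i) → Matrix (Fin m) (Fin m) k)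
    (A A' : ℕ → Matrix (Fin m) (Fin m) k)
    (P1 Q1 : Fin (2 ^ i)) (hP1 : (P1 : ℕ) = 2 ^ i - 1) (hQ1 : (Q1 : ℕ) = 2 ^ i - 1 - 2 ^ j)
    (hvan : ∀ t, t < i → ∀ p q : Fin (2 ^ i), (q : ℕ).testBit t = true →
        (p : ℕ).testBit t = false → Db p q = 0)
    (MR : ∑ r : Fin (2 ^ i), Cb P1 r *
        (if (r : ℕ) = 2 ^ i - 1 then ((-1 : k) ^ (cnt i j (r : ℕ))) • (-(A j)) else 0)
      = ∑ r : Fin (2 ^ i),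
        (∑ t ∈ Finset.range i, if (P1 : ℕ) = (r : ℕ) + 2 ^ t ∧ (r : ℕ).testBit t = false
            then ((-1 : k) ^ (cnt i t (P1 : ℕ))) • (-(A' t)) else 0) * Db r Q1) :
    Cb P1 P1 * A j = A' j * Db Q1 Q1 := by
  have hpow : ∀ t, t < i → 2 ^ t < 2 ^ i := fun t ht => Nat.pow_lt_pow_right (by norm_num) ht
  have hipos : 0 < 2 ^ i := Nat.two_pow_pos i
  have hsub : ∀ t, t < i → ∀ l, (2 ^ i - 1 - 2 ^ t).testBit l
      = (decide (l < i) && !decide (t = l)) := by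
    intro t ht l
    rw [show 2 ^ i - 1 - 2 ^ t = 2 ^ i - (2 ^ t + 1) by omega,
      Nat.testBit_two_pow_sub_succ (hpow t ht), Nat.testBit_two_pow]
  -- collapse LHS
  have hL : (∑ r : Fin (2 ^ i), Cb P1 r *
      (if (r : ℕ) = 2 ^ i - 1 then ((-1 : k) ^ (cnt i j (r : ℕ))) • (-(A j)) else 0))
      = ((-1 : k) ^ (cnt i j (2 ^ i - 1))) • (-(Cb P1 P1 * A j)) := by
    rw [Finset.sum_eq_single P1]
    · rw [if_pos hP1, hP1, mul_smul_comm, mul_neg]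
    · intro r _ hr
      rw [if_neg (fun hc => hr (Fin.ext (by rw [hc, hP1]))), mul_zero]
    · intro hmem
      exact absurd (Finset.mem_univ _) hmem
  -- collapse RHS
  have hR : (∑ r : Fin (2 ^ i),
      (∑ t ∈ Finset.range i, if (P1 : ℕ) = (r : ℕ) + 2 ^ t ∧ (r : ℕ).testBit t = false
          then ((-1 : k) ^ (cnt i t (P1 : ℕ))) • (-(A' t)) else 0) * Db r Q1)
      = ((-1 : k) ^ (cnt i j (2 ^ i - 1))) • (-(A' j * Db Q1 Q1)) := by
    have step1 : ∀ r : Fin (2 ^ i),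
        (∑ t ∈ Finset.range i, if (P1 : ℕ) = (r : ℕ) + 2 ^ t ∧ (r : ℕ).testBit t = false
          then ((-1 : k) ^ (cnt i t (P1 : ℕ))) • (-(A' t)) else 0) * Db r Q1
        = ∑ t ∈ Finset.range i, (if (P1 : ℕ) = (r : ℕ) + 2 ^ t ∧ (r : ℕ).testBit t = false
          then ((-1 : k) ^ (cnt i t (P1 : ℕ))) • (-(A' t)) else 0) * Db r Q1 := by
      intro r
      rw [Finset.sum_mul]
    rw [Finset.sum_congr rfl (fun r _ => step1 r), Finset.sum_comm]
    have step2 : ∀ t ∈ Finset.range i,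
        (∑ r : Fin (2 ^ i), (if (P1 : ℕ) = (r : ℕ) + 2 ^ t ∧ (r : ℕ).testBit t = false
          then ((-1 : k) ^ (cnt i t (P1 : ℕ))) • (-(A' t)) else 0) * Db r Q1)
        = (if t = j then ((-1 : k) ^ (cnt i j (2 ^ i - 1))) • (-(A' j * Db Q1 Q1)) else 0) := by
      intro t htm
      rw [Finset.mem_range] at htm
      have hrt : 2 ^ i - 1 - 2 ^ t < 2 ^ i :=
        lt_of_le_of_lt (Nat.sub_le _ _) (Nat.sub_lt hipos one_pos)
      rw [Finset.sum_eq_single (⟨2 ^ i - 1 - 2 ^ t, hrt⟩ : Fin (2 ^ i))]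
      · have hcond : (P1 : ℕ) = (2 ^ i - 1 - 2 ^ t) + 2 ^ t ∧
            (2 ^ i - 1 - 2 ^ t).testBit t = false := by
          constructor
          · have h1 := hpow t htm
            have h2 := Nat.two_pow_pos t
            rw [hP1]
            omega
          · rw [hsub t htm t]; simp
        rw [if_pos hcond]
        by_cases htj : t = j
        · subst htj
          have hQmk : (⟨2 ^ i - 1 - 2 ^ t, hrt⟩ : Fin (2 ^ i)) = Q1 := Fin.ext (by rw [hQ1])
          rw [if_pos rfl, hQmk, hP1, smul_mul_assoc, neg_mul]
        · rw [if_neg htj]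
          have hDb : Db ⟨2 ^ i - 1 - 2 ^ t, hrt⟩ Q1 = 0 := by
            apply hvan t htm
            · have hjt : j ≠ t := fun hh => htj hh.symm
              rw [hQ1, hsub j hj t]
              simp [htm, hjt]
            · show (2 ^ i - 1 - 2 ^ t).testBit t = false
              rw [hsub t htm t]; simp
          rw [hDb, mul_zero]
      · intro r _ hr
        rw [if_neg, zero_mul]
        rintro ⟨h1, -⟩
        apply hr
        apply Fin.ext
        show (r : ℕ) = 2 ^ i - 1 - 2 ^ t
        have := hpow t htm
        omega
      · intro hmem
        exact absurd (Finset.mem_univ _) hmem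
    rw [Finset.sum_congr rfl step2, Finset.sum_eq_single j (fun t _ htj => if_neg htj)
      (fun hmem => absurd (Finset.mem_range.mpr hj) hmem), if_pos rfl]
  rw [hL, hR] at MR
  have := inv_cancel_smul (pow_ne_zero _ (neg_ne_zero.mpr (one_ne_zero : (1:k) ≠ 0))) MR
  exact neg_inj.mp this



lemma coeff_single_X_ne {σ S : Type} [CommRing S] {s t : σ} (h : s ≠ t) :
    coeff (R := S) (Finsupp.single s 1) (X t : MvPowerSeries σ S) = 0 := by
  classical
  rw [coeff_X, if_neg (fun hh => h ((Finsupp.single_left_inj one_ne_zero).mp hh))]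

lemma coeff_single_X_self {σ S : Type} [CommRing S] (s : σ) :
    coeff (R := S) (Finsupp.single s 1) (X s : MvPowerSeries σ S) = 1 := by
  classical
  rw [coeff_X, if_pos rfl]

lemma coeff_u_some {S : Type} [CommRing S] {n : ℕ} (aS : Fin n → S)
    (uS : ℕ → MvPowerSeries (Option (Fin n)) S)
    (huS : ∀ t, uS (t+1) = if hj : t < n then
        X (some ⟨t, hj⟩) - C (σ := Option (Fin n)) (R := S) (aS ⟨t, hj⟩) * X none else 0)
    (w : ℕ) (hwn : w < n) (t : ℕ) :
    coeff (R := S) (Finsupp.single (some (⟨w, hwn⟩ : Fin n)) 1) (uS (t+1))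
      = if t = w then 1 else 0 := by
  rw [huS]
  by_cases hj : t < n
  · rw [dif_pos hj, map_sub, coeff_C_mul,
      coeff_single_X_ne (t := (none : Option (Fin n))) (Option.some_ne_none _),
      mul_zero, sub_zero]
    by_cases htw : t = w
    · subst htw
      rw [if_pos rfl, coeff_single_X_self]
    · rw [if_neg htw, coeff_single_X_ne]
      intro hh
      exact htw (by simpa using congrArg Fin.val (Option.some.inj hh).symm)
  · rw [dif_neg hj, map_zero, if_neg (fun htw => hj (by rw [htw]; exact hwn))]

lemma coeff_u_none {S : Type} [CommRing S] {n : ℕ} (aS : Fin n → S)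
    (uS : ℕ → MvPowerSeries (Option (Fin n)) S)
    (huS : ∀ t, uS (t+1) = if hj : t < n then
        X (some ⟨t, hj⟩) - C (σ := Option (Fin n)) (R := S) (aS ⟨t, hj⟩) * X none else 0)
    (t : ℕ) :
    coeff (R := S) (Finsupp.single (none : Option (Fin n)) 1) (uS (t+1))
      = if hj : t < n then -(aS ⟨t, hj⟩) else 0 := by
  rw [huS]
  by_cases hj : t < n
  · rw [dif_pos hj, dif_pos hj, map_sub, coeff_C_mul, coeff_single_X_self, mul_one,
      coeff_single_X_ne (t := (some ⟨t, hj⟩ : Option (Fin n)))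
        (Option.some_ne_none _).symm, zero_sub]
  · rw [dif_neg hj, dif_neg hj, map_zero]


end KnHelper

namespace KnHelper

variable {k R R' : Type} [Field k] [CommRing R] [CommRing R'] {m : ℕ} {σ : Type}

lemma mrel1 (ρ : R →+* Matrix (Fin m) (Fin m) k) (ρ' : R' →+* Matrix (Fin m) (Fin m) k)
    {i : ℕ} (u v : ℕ → MvPowerSeries σ R) (u' v' : ℕ → MvPowerSeries σ R')
    (hu0 : u 0 ∈ (Ideal.span (Set.range (X : σ → MvPowerSeries σ R))) ^ 2)
    (hv : ∀ t, v t ∈ (Ideal.span (Set.range (X : σ → MvPowerSeries σ R))) ^ 2)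
    (hu0' : u' 0 ∈ (Ideal.span (Set.range (X : σ → MvPowerSeries σ R'))) ^ 2)
    (hv' : ∀ t, v' t ∈ (Ideal.span (Set.range (X : σ → MvPowerSeries σ R'))) ^ 2)
    (C D : Matrix (Fin (2 ^ i) × Fin m) (Fin (2 ^ i) × Fin m) k)
    (H : ∀ P Q, (C.map ⇑(MvPowerSeries.C (σ := σ) (R := k)) * inflate ρ (knorrerPair u v i).1) P Q
        - (inflate ρ' (knorrerPair u' v' i).1 * D.map ⇑(MvPowerSeries.C (σ := σ) (R := k))) P Q
        ∈ (Ideal.span (Set.range (X : σ → MvPowerSeries σ k))) ^ 2)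
    (s : σ) (p q : Fin (2 ^ i)) :
    ∑ r : Fin (2 ^ i), (Matrix.of fun α β => C (p, α) (r, β)) *
        ρ (kc (fun t => coeff (R := R) (Finsupp.single s 1) (u (t+1))) i r q)
      = ∑ r : Fin (2 ^ i),
        ρ' (kc (fun t => coeff (R := R') (Finsupp.single s 1) (u' (t+1))) i p r)
          * (Matrix.of fun α β => D (r, α) (q, β)) := by
  classical
  refine matrixize C D
    (fun r q' => ρ (kc (fun t => coeff (R := R) (Finsupp.single s 1) (u (t+1))) i r q'))
    (fun p' r => ρ' (kc (fun t => coeff (R := R') (Finsupp.single s 1) (u' (t+1))) i p' r))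
    (fun P Q => ?_) p q
  have hx := extract ρ ρ' (knorrerPair u v i).1 (knorrerPair u' v' i).1 C D H s P Q
  have hKM := knorrer_map u v (coeff (R := R) (Finsupp.single s 1)).toAddMonoidHom
    (coeff_single_eq_zero_of_mem_sq hu0 s)
    (fun t => coeff_single_eq_zero_of_mem_sq (hv t) s) i
  have hKM' := knorrer_map u' v' (coeff (R := R') (Finsupp.single s 1)).toAddMonoidHom
    (coeff_single_eq_zero_of_mem_sq hu0' s)
    (fun t => coeff_single_eq_zero_of_mem_sq (hv' t) s) i
  simp only [LinearMap.toAddMonoidHom_coe] at hKM hKM'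
  simp only [fun (r q' : Fin (2 ^ i)) => (hKM r q').1,
    fun (r q' : Fin (2 ^ i)) => (hKM' r q').1] at hx
  exact hx

lemma mrel2 (ρ : R →+* Matrix (Fin m) (Fin m) k) (ρ' : R' →+* Matrix (Fin m) (Fin m) k)
    {i : ℕ} (u v : ℕ → MvPowerSeries σ R) (u' v' : ℕ → MvPowerSeries σ R')
    (hu0 : u 0 ∈ (Ideal.span (Set.range (X : σ → MvPowerSeries σ R))) ^ 2)
    (hv : ∀ t, v t ∈ (Ideal.span (Set.range (X : σ → MvPowerSeries σ R))) ^ 2)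
    (hu0' : u' 0 ∈ (Ideal.span (Set.range (X : σ → MvPowerSeries σ R'))) ^ 2)
    (hv' : ∀ t, v' t ∈ (Ideal.span (Set.range (X : σ → MvPowerSeries σ R'))) ^ 2)
    (C D : Matrix (Fin (2 ^ i) × Fin m) (Fin (2 ^ i) × Fin m) k)
    (H : ∀ P Q, (D.map ⇑(MvPowerSeries.C (σ := σ) (R := k)) * inflate ρ (knorrerPair u v i).2) P Q
        - (inflate ρ' (knorrerPair u' v' i).2 * C.map ⇑(MvPowerSeries.C (σ := σ) (R := k))) P Q
        ∈ (Ideal.span (Set.range (X : σ → MvPowerSeries σ k))) ^ 2)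
    (s : σ) (p q : Fin (2 ^ i)) :
    ∑ r : Fin (2 ^ i), (Matrix.of fun α β => D (p, α) (r, β)) *
        ρ (kc (fun t => coeff (R := R) (Finsupp.single s 1) (u (t+1))) i r q)
      = ∑ r : Fin (2 ^ i),
        ρ' (kc (fun t => coeff (R := R') (Finsupp.single s 1) (u' (t+1))) i p r)
          * (Matrix.of fun α β => C (r, α) (q, β)) := by
  classical
  refine matrixize D C
    (fun r q' => ρ (kc (fun t => coeff (R := R) (Finsupp.single s 1) (u (t+1))) i r q'))
    (fun p' r => ρ' (kc (fun t => coeff (R := R') (Finsupp.single s 1) (u' (t+1))) i p' r))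
    (fun P Q => ?_) p q
  have hx := extract ρ ρ' (knorrerPair u v i).2 (knorrerPair u' v' i).2 D C H s P Q
  have hKM := knorrer_map u v (coeff (R := R) (Finsupp.single s 1)).toAddMonoidHom
    (coeff_single_eq_zero_of_mem_sq hu0 s)
    (fun t => coeff_single_eq_zero_of_mem_sq (hv t) s) i
  have hKM' := knorrer_map u' v' (coeff (R := R') (Finsupp.single s 1)).toAddMonoidHom
    (coeff_single_eq_zero_of_mem_sq hu0' s)
    (fun t => coeff_single_eq_zero_of_mem_sq (hv' t) s) i
  simp only [LinearMap.toAddMonoidHom_coe] at hKM hKM'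
  simp only [fun (r q' : Fin (2 ^ i)) => (hKM r q').2,
    fun (r q' : Fin (2 ^ i)) => (hKM' r q').2, map_neg, Matrix.neg_apply,
    mul_neg, neg_mul, Finset.sum_neg_distrib, neg_inj] at hx
  exact hx

end KnHelper

/-- Lemma 2.6(ii),(iii) of the paper.  In the setting of
Lemma 2.6 (`C·Φ̄ᵢ = Φ̄ᵢ'·D` and `D·Ψ̄ᵢ = Ψ̄ᵢ'·C` modulo `m²`), each diagonal
`(m × m)`-block `C_{jj}` of `C` and `D_{jj}` of `D` equals either `C_{11}` or `D_{11}`,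
and for each `j = 1,…,i` one has `C_{2ⁱ,2ⁱ}·A_j = A_j'·D_{2ⁱ-2^{j-1},2ⁱ-2^{j-1}}`
(0-indexed below: the block index `2ⁱ − 2^{j−1}` becomes `2^i - 2^j - 1` for
`j : Fin i`), where `A_j = ρ(a_j)` and `A_j' = ρ'(a_j')`. -/
theorem reduction_hom_diagonal_blocks
    (k : Type) [Field k] (n m : ℕ)
    (R R' : Type) [CommRing R] [Algebra k R] [CommRing R'] [Algebra k R']
    (ρ : R →ₐ[k] Matrix (Fin m) (Fin m) k)
    (ρ' : R' →ₐ[k] Matrix (Fin m) (Fin m) k)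
    (a : Fin n → R) (a' : Fin n → R')
    (f : MvPowerSeries (Option (Fin n)) k)
    (hford : f ∈ (Ideal.span (Set.range
        (MvPowerSeries.X : Option (Fin n) → MvPowerSeries (Option (Fin n)) k))) ^ 4)
    (h : MvPowerSeries (Option (Fin n)) R) (g : Fin n → MvPowerSeries (Option (Fin n)) R)
    (hh : h ∈ (Ideal.span (Set.range
        (MvPowerSeries.X : Option (Fin n) → MvPowerSeries (Option (Fin n)) R))) ^ 2)
    (hg : ∀ i, g i ∈ (Ideal.span (Set.range
        (MvPowerSeries.X : Option (Fin n) → MvPowerSeries (Option (Fin n)) R))) ^ 3)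
    (hf : MvPowerSeries.map (σ := Option (Fin n)) (algebraMap k R) f
        = (MvPowerSeries.X none) ^ 2 * h +
          ∑ i : Fin n,
            (MvPowerSeries.X (some i)
              - MvPowerSeries.C (σ := Option (Fin n)) (R := R) (a i) * MvPowerSeries.X none) * g i)
    (h' : MvPowerSeries (Option (Fin n)) R')
    (g' : Fin n → MvPowerSeries (Option (Fin n)) R')
    (hh' : h' ∈ (Ideal.span (Set.range
        (MvPowerSeries.X : Option (Fin n) → MvPowerSeries (Option (Fin n)) R'))) ^ 2)
    (hg' : ∀ i, g' i ∈ (Ideal.span (Set.range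
        (MvPowerSeries.X : Option (Fin n) → MvPowerSeries (Option (Fin n)) R'))) ^ 3)
    (hf' : MvPowerSeries.map (σ := Option (Fin n)) (algebraMap k R') f
        = (MvPowerSeries.X none) ^ 2 * h' +
          ∑ i : Fin n,
            (MvPowerSeries.X (some i)
              - MvPowerSeries.C (σ := Option (Fin n)) (R := R') (a' i) * MvPowerSeries.X none) * g' i)    (i : ℕ) (hi : i ≤ n) :
    let u : ℕ → MvPowerSeries (Option (Fin n)) R := fun j =>
      match j with
      | 0 => (MvPowerSeries.X none) ^ 2
      | j + 1 => if hj : j < n then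
          MvPowerSeries.X (some ⟨j, hj⟩)
            - MvPowerSeries.C (σ := Option (Fin n)) (R := R) (a ⟨j, hj⟩) * MvPowerSeries.X none
        else 0
    let v : ℕ → MvPowerSeries (Option (Fin n)) R := fun j =>
      match j with
      | 0 => h
      | j + 1 => if hj : j < n then g ⟨j, hj⟩ else 0
    let Φ := inflate ρ.toRingHom (knorrerPair u v i).1
    let Ψ := inflate ρ.toRingHom (knorrerPair u v i).2
    let u' : ℕ → MvPowerSeries (Option (Fin n)) R' := fun j =>
      match j with
      | 0 => (MvPowerSeries.X none) ^ 2
      | j + 1 => if hj : j < n then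
          MvPowerSeries.X (some ⟨j, hj⟩)
            - MvPowerSeries.C (σ := Option (Fin n)) (R := R') (a' ⟨j, hj⟩) * MvPowerSeries.X none
        else 0
    let v' : ℕ → MvPowerSeries (Option (Fin n)) R' := fun j =>
      match j with
      | 0 => h'
      | j + 1 => if hj : j < n then g' ⟨j, hj⟩ else 0
    let Φ' := inflate ρ'.toRingHom (knorrerPair u' v' i).1
    let Ψ' := inflate ρ'.toRingHom (knorrerPair u' v' i).2
    ∀ C D : Matrix ((Fin (2 ^ i)) × Fin m) ((Fin (2 ^ i)) × Fin m) k,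
      (∀ p q, (C.map ⇑(MvPowerSeries.C (σ := Option (Fin n)) (R := k)) * Φ) p q
              - (Φ' * D.map ⇑(MvPowerSeries.C (σ := Option (Fin n)) (R := k))) p q
            ∈ (Ideal.span (Set.range
                (MvPowerSeries.X : Option (Fin n) → MvPowerSeries (Option (Fin n)) k))) ^ 2) →
      (∀ p q, (D.map ⇑(MvPowerSeries.C (σ := Option (Fin n)) (R := k)) * Ψ) p q
              - (Ψ' * C.map ⇑(MvPowerSeries.C (σ := Option (Fin n)) (R := k))) p q
            ∈ (Ideal.span (Set.range
                (MvPowerSeries.X : Option (Fin n) → MvPowerSeries (Option (Fin n)) k))) ^ 2) →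
      (∀ j : Fin (2 ^ i),
        ((Matrix.of fun α β => C (j, α) (j, β)) =
            (Matrix.of fun α β => C ((⟨0, Nat.two_pow_pos i⟩ : Fin (2 ^ i)), α)
              ((⟨0, Nat.two_pow_pos i⟩ : Fin (2 ^ i)), β)) ∨
          (Matrix.of fun α β => C (j, α) (j, β)) =
            (Matrix.of fun α β => D ((⟨0, Nat.two_pow_pos i⟩ : Fin (2 ^ i)), α)
              ((⟨0, Nat.two_pow_pos i⟩ : Fin (2 ^ i)), β))) ∧
        ((Matrix.of fun α β => D (j, α) (j, β)) =
            (Matrix.of fun α β => C ((⟨0, Nat.two_pow_pos i⟩ : Fin (2 ^ i)), α)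
              ((⟨0, Nat.two_pow_pos i⟩ : Fin (2 ^ i)), β)) ∨
          (Matrix.of fun α β => D (j, α) (j, β)) =
            (Matrix.of fun α β => D ((⟨0, Nat.two_pow_pos i⟩ : Fin (2 ^ i)), α)
              ((⟨0, Nat.two_pow_pos i⟩ : Fin (2 ^ i)), β)))) ∧
      (∀ j : Fin i,
        (Matrix.of fun α β =>
            C ((⟨2 ^ i - 1, by have := Nat.two_pow_pos i; omega⟩ : Fin (2 ^ i)), α)
              ((⟨2 ^ i - 1, by have := Nat.two_pow_pos i; omega⟩ : Fin (2 ^ i)), β))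
            * ρ (a (Fin.castLE hi j)) =
          ρ' (a' (Fin.castLE hi j)) *
            (Matrix.of fun α β =>
              D ((⟨2 ^ i - 2 ^ (j : ℕ) - 1,
                    by
                      have h1 := Nat.two_pow_pos i
                      have h2 := Nat.two_pow_pos (j : ℕ)
                      omega⟩ : Fin (2 ^ i)), α)
                ((⟨2 ^ i - 2 ^ (j : ℕ) - 1,
                    by
                      have h1 := Nat.two_pow_pos i
                      have h2 := Nat.two_pow_pos (j : ℕ)
                      omega⟩ : Fin (2 ^ i)), β))) := by

  intro u v Φ Ψ u' v' Φ' Ψ' C D H1 H2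
  classical
  have hipos : 0 < 2 ^ i := Nat.two_pow_pos i
  have H1' : ∀ P Q : Fin (2 ^ i) × Fin m,
      (C.map ⇑(MvPowerSeries.C (σ := Option (Fin n)) (R := k))
          * inflate ρ.toRingHom (knorrerPair u v i).1) P Q
        - (inflate ρ'.toRingHom (knorrerPair u' v' i).1
          * D.map ⇑(MvPowerSeries.C (σ := Option (Fin n)) (R := k))) P Q
      ∈ (Ideal.span (Set.range
        (MvPowerSeries.X : Option (Fin n) → MvPowerSeries (Option (Fin n)) k))) ^ 2 := H1
  have H2' : ∀ P Q : Fin (2 ^ i) × Fin m,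
      (D.map ⇑(MvPowerSeries.C (σ := Option (Fin n)) (R := k))
          * inflate ρ.toRingHom (knorrerPair u v i).2) P Q
        - (inflate ρ'.toRingHom (knorrerPair u' v' i).2
          * C.map ⇑(MvPowerSeries.C (σ := Option (Fin n)) (R := k))) P Q
      ∈ (Ideal.span (Set.range
        (MvPowerSeries.X : Option (Fin n) → MvPowerSeries (Option (Fin n)) k))) ^ 2 := H2
  -- membership facts for u, v
  have hu0 : u 0 ∈ (Ideal.span (Set.range
      (MvPowerSeries.X : Option (Fin n) → MvPowerSeries (Option (Fin n)) R))) ^ 2 := by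
    show (MvPowerSeries.X none : MvPowerSeries (Option (Fin n)) R) ^ 2 ∈ _
    exact Ideal.pow_mem_pow (Ideal.subset_span (Set.mem_range_self none)) 2
  have hu0' : u' 0 ∈ (Ideal.span (Set.range
      (MvPowerSeries.X : Option (Fin n) → MvPowerSeries (Option (Fin n)) R'))) ^ 2 := by
    show (MvPowerSeries.X none : MvPowerSeries (Option (Fin n)) R') ^ 2 ∈ _
    exact Ideal.pow_mem_pow (Ideal.subset_span (Set.mem_range_self none)) 2
  have hv2 : ∀ t, v t ∈ (Ideal.span (Set.range
      (MvPowerSeries.X : Option (Fin n) → MvPowerSeries (Option (Fin n)) R))) ^ 2 := by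
    intro t
    match t with
    | 0 => exact hh
    | (t+1) =>
      show (if hj : t < n then g ⟨t, hj⟩ else 0) ∈ _
      rcases Nat.lt_or_ge t n with hj | hj
      · rw [dif_pos hj]
        exact Ideal.pow_le_pow_right (by norm_num) (hg ⟨t, hj⟩)
      · rw [dif_neg (Nat.not_lt.mpr hj)]
        exact Submodule.zero_mem _
  have hv2' : ∀ t, v' t ∈ (Ideal.span (Set.range
      (MvPowerSeries.X : Option (Fin n) → MvPowerSeries (Option (Fin n)) R'))) ^ 2 := by
    intro t
    match t with
    | 0 => exact hh'
    | (t+1) =>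
      show (if hj : t < n then g' ⟨t, hj⟩ else 0) ∈ _
      rcases Nat.lt_or_ge t n with hj | hj
      · rw [dif_pos hj]
        exact Ideal.pow_le_pow_right (by norm_num) (hg' ⟨t, hj⟩)
      · rw [dif_neg (Nat.not_lt.mpr hj)]
        exact Submodule.zero_mem _
  have huS : ∀ t, u (t+1) = if hj : t < n then
      MvPowerSeries.X (some ⟨t, hj⟩)
        - MvPowerSeries.C (σ := Option (Fin n)) (R := R) (a ⟨t, hj⟩) * MvPowerSeries.X none else 0 :=
    fun t => rfl
  have huS' : ∀ t, u' (t+1) = if hj : t < n then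
      MvPowerSeries.X (some ⟨t, hj⟩)
        - MvPowerSeries.C (σ := Option (Fin n)) (R := R') (a' ⟨t, hj⟩) * MvPowerSeries.X none else 0 :=
    fun t => rfl
  clear_value Φ Ψ Φ' Ψ'
  clear H1 H2 Φ Ψ Φ' Ψ'
  -- knorrer_map facts
  have hKM : ∀ (s : Option (Fin n)) (p q : Fin (2 ^ i)),
      MvPowerSeries.coeff (R := R) (Finsupp.single s 1) ((knorrerPair u v i).1 p q)
        = KnHelper.kc (fun t => MvPowerSeries.coeff (R := R) (Finsupp.single s 1) (u (t+1))) i p q ∧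
      MvPowerSeries.coeff (R := R) (Finsupp.single s 1) ((knorrerPair u v i).2 p q)
        = -KnHelper.kc (fun t => MvPowerSeries.coeff (R := R) (Finsupp.single s 1) (u (t+1))) i p q := by
    intro s p q
    have h0 := KnHelper.knorrer_map u v
      (MvPowerSeries.coeff (R := R) (Finsupp.single s 1)).toAddMonoidHom
      (KnHelper.coeff_single_eq_zero_of_mem_sq hu0 s)
      (fun t => KnHelper.coeff_single_eq_zero_of_mem_sq (hv2 t) s) i p q
    simpa using h0
  have hKM' : ∀ (s : Option (Fin n)) (p q : Fin (2 ^ i)),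
      MvPowerSeries.coeff (R := R') (Finsupp.single s 1) ((knorrerPair u' v' i).1 p q)
        = KnHelper.kc (fun t => MvPowerSeries.coeff (R := R') (Finsupp.single s 1) (u' (t+1))) i p q ∧
      MvPowerSeries.coeff (R := R') (Finsupp.single s 1) ((knorrerPair u' v' i).2 p q)
        = -KnHelper.kc (fun t => MvPowerSeries.coeff (R := R') (Finsupp.single s 1) (u' (t+1))) i p q := by
    intro s p q
    have h0 := KnHelper.knorrer_map u' v'
      (MvPowerSeries.coeff (R := R') (Finsupp.single s 1)).toAddMonoidHom
      (KnHelper.coeff_single_eq_zero_of_mem_sq hu0' s)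
      (fun t => KnHelper.coeff_single_eq_zero_of_mem_sq (hv2' t) s) i p q
    simpa using h0
  -- master relations
  have MR1 := fun (s : Option (Fin n)) (p q : Fin (2 ^ i)) =>
    KnHelper.mrel1 ρ.toRingHom ρ'.toRingHom u v u' v' hu0 hv2 hu0' hv2' C D H1' s p q
  have MR2 := fun (s : Option (Fin n)) (p q : Fin (2 ^ i)) =>
    KnHelper.mrel2 ρ.toRingHom ρ'.toRingHom u v u' v' hu0 hv2 hu0' hv2' C D H2' s p q
  -- delta rewriting for variables `some w`
  have hρδ : ∀ (w : ℕ) (hw : w < i) (p q : ℕ),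
      ρ.toRingHom (KnHelper.kc (fun t => MvPowerSeries.coeff (R := R) (Finsupp.single
          (some (⟨w, lt_of_lt_of_le hw hi⟩ : Fin n)) 1) (u (t+1))) i p q)
        = if p = q + 2 ^ w ∧ q.testBit w = false
          then ((-1 : k) ^ (KnHelper.cnt i w p)) • (1 : Matrix (Fin m) (Fin m) k) else 0 :=
    fun w hw p q => KnHelper.rho_kc_delta ρ.toRingHom hw _
      (fun t => KnHelper.coeff_u_some a u huS w (lt_of_lt_of_le hw hi) t) p q
  have hρδ' : ∀ (w : ℕ) (hw : w < i) (p q : ℕ),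
      ρ'.toRingHom (KnHelper.kc (fun t => MvPowerSeries.coeff (R := R') (Finsupp.single
          (some (⟨w, lt_of_lt_of_le hw hi⟩ : Fin n)) 1) (u' (t+1))) i p q)
        = if p = q + 2 ^ w ∧ q.testBit w = false
          then ((-1 : k) ^ (KnHelper.cnt i w p)) • (1 : Matrix (Fin m) (Fin m) k) else 0 :=
    fun w hw p q => KnHelper.rho_kc_delta ρ'.toRingHom hw _
      (fun t => KnHelper.coeff_u_some a' u' huS' w (lt_of_lt_of_le hw hi) t) p q
  -- the two srel packages
  have hsC := fun (w : ℕ) (hw : w < i) => KnHelper.srel hw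
    (fun p q => Matrix.of fun α β => C (p, α) (q, β))
    (fun p q => Matrix.of fun α β => D (p, α) (q, β))
    (fun p q => by
      have hmr := MR1 (some (⟨w, lt_of_lt_of_le hw hi⟩ : Fin n)) p q
      simp only [hρδ w hw, hρδ' w hw] at hmr
      exact hmr)
  have hsD := fun (w : ℕ) (hw : w < i) => KnHelper.srel hw
    (fun p q => Matrix.of fun α β => D (p, α) (q, β))
    (fun p q => Matrix.of fun α β => C (p, α) (q, β))
    (fun p q => by
      have hmr := MR2 (some (⟨w, lt_of_lt_of_le hw hi⟩ : Fin n)) p q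
      simp only [hρδ w hw, hρδ' w hw] at hmr
      exact hmr)
  -- part (ii)
  have part2 : ∀ p : Fin (2 ^ i),
      ((Matrix.of fun α β => C (p, α) (p, β)) =
          (Matrix.of fun α β => C ((⟨0, Nat.two_pow_pos i⟩ : Fin (2 ^ i)), α)
            ((⟨0, Nat.two_pow_pos i⟩ : Fin (2 ^ i)), β)) ∨
        (Matrix.of fun α β => C (p, α) (p, β)) =
          (Matrix.of fun α β => D ((⟨0, Nat.two_pow_pos i⟩ : Fin (2 ^ i)), α)
            ((⟨0, Nat.two_pow_pos i⟩ : Fin (2 ^ i)), β))) ∧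
      ((Matrix.of fun α β => D (p, α) (p, β)) =
          (Matrix.of fun α β => C ((⟨0, Nat.two_pow_pos i⟩ : Fin (2 ^ i)), α)
            ((⟨0, Nat.two_pow_pos i⟩ : Fin (2 ^ i)), β)) ∨
        (Matrix.of fun α β => D (p, α) (p, β)) =
          (Matrix.of fun α β => D ((⟨0, Nat.two_pow_pos i⟩ : Fin (2 ^ i)), α)
            ((⟨0, Nat.two_pow_pos i⟩ : Fin (2 ^ i)), β))) := by
    suffices hgen : ∀ x : ℕ, ∀ p : Fin (2 ^ i), (p : ℕ) = x →
        ((Matrix.of fun α β => C (p, α) (p, β)) =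
            (Matrix.of fun α β => C ((⟨0, Nat.two_pow_pos i⟩ : Fin (2 ^ i)), α)
              ((⟨0, Nat.two_pow_pos i⟩ : Fin (2 ^ i)), β)) ∨
          (Matrix.of fun α β => C (p, α) (p, β)) =
            (Matrix.of fun α β => D ((⟨0, Nat.two_pow_pos i⟩ : Fin (2 ^ i)), α)
              ((⟨0, Nat.two_pow_pos i⟩ : Fin (2 ^ i)), β))) ∧
        ((Matrix.of fun α β => D (p, α) (p, β)) =
            (Matrix.of fun α β => C ((⟨0, Nat.two_pow_pos i⟩ : Fin (2 ^ i)), α)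
              ((⟨0, Nat.two_pow_pos i⟩ : Fin (2 ^ i)), β)) ∨
          (Matrix.of fun α β => D (p, α) (p, β)) =
            (Matrix.of fun α β => D ((⟨0, Nat.two_pow_pos i⟩ : Fin (2 ^ i)), α)
              ((⟨0, Nat.two_pow_pos i⟩ : Fin (2 ^ i)), β))) by
      exact fun p => hgen (p : ℕ) p rfl
    intro x
    induction x using Nat.strong_induction_on with
    | _ x IH =>
      intro p hpx
      by_cases hp0 : (p : ℕ) = 0
      · have hz : p = (⟨0, Nat.two_pow_pos i⟩ : Fin (2 ^ i)) := Fin.ext hp0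
        rw [hz]
        exact ⟨Or.inl rfl, Or.inr rfl⟩
      · obtain ⟨w, hwbit, -⟩ := Nat.exists_most_significant_bit hp0
        have hwi : w < i := by
          by_contra hge
          have h2 : 2 ^ i ≤ 2 ^ w := Nat.pow_le_pow_right (by norm_num) (Nat.not_lt.mp hge)
          have h3 := Nat.ge_two_pow_of_testBit hwbit
          have h4 := p.isLt
          omega
        have h2wle := Nat.ge_two_pow_of_testBit hwbit
        have h2wpos := Nat.two_pow_pos w
        have hCd : (Matrix.of fun α β => C (p, α) (p, β)) =
            (Matrix.of fun α β =>
              D ((⟨(p : ℕ) - 2 ^ w, lt_of_le_of_lt (Nat.sub_le _ _) p.isLt⟩ : Fin (2 ^ i)), α)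
                ((⟨(p : ℕ) - 2 ^ w, lt_of_le_of_lt (Nat.sub_le _ _) p.isLt⟩ : Fin (2 ^ i)), β)) :=
          (hsC w hwi).2 p hwbit
        have hDd : (Matrix.of fun α β => D (p, α) (p, β)) =
            (Matrix.of fun α β =>
              C ((⟨(p : ℕ) - 2 ^ w, lt_of_le_of_lt (Nat.sub_le _ _) p.isLt⟩ : Fin (2 ^ i)), α)
                ((⟨(p : ℕ) - 2 ^ w, lt_of_le_of_lt (Nat.sub_le _ _) p.isLt⟩ : Fin (2 ^ i)), β)) :=
          (hsD w hwi).2 p hwbit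
        have hrec := IH ((p : ℕ) - 2 ^ w) (by omega)
          (⟨(p : ℕ) - 2 ^ w, lt_of_le_of_lt (Nat.sub_le _ _) p.isLt⟩ : Fin (2 ^ i)) rfl
        rw [hCd, hDd]
        exact ⟨hrec.2, hrec.1⟩
  refine ⟨part2, fun j => ?_⟩
  -- part (iii)
  have hji : (j : ℕ) < i := j.isLt
  have hjn : (j : ℕ) < n := lt_of_lt_of_le hji hi
  have hjpow : 2 ^ (j : ℕ) < 2 ^ i := Nat.pow_lt_pow_right (by norm_num) hji
  set A : ℕ → Matrix (Fin m) (Fin m) k :=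
    fun t => if hjt : t < n then ρ (a ⟨t, hjt⟩) else 0 with hA
  set A' : ℕ → Matrix (Fin m) (Fin m) k :=
    fun t => if hjt : t < n then ρ' (a' ⟨t, hjt⟩) else 0 with hA'
  set P1 : Fin (2 ^ i) := ⟨2 ^ i - 1, Nat.sub_lt hipos one_pos⟩ with hP1def
  set Q1 : Fin (2 ^ i) :=
    ⟨2 ^ i - 1 - 2 ^ (j : ℕ), lt_of_le_of_lt (Nat.sub_le _ _) (Nat.sub_lt hipos one_pos)⟩
    with hQ1def
  have hQbit : ∀ t, t < i → ((Q1 : ℕ).testBit t = false ↔ t = (j : ℕ)) := by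
    intro t ht
    show ((2 ^ i - 1 - 2 ^ (j : ℕ)).testBit t = false ↔ t = (j : ℕ))
    rw [show 2 ^ i - 1 - 2 ^ (j : ℕ) = 2 ^ i - (2 ^ (j : ℕ) + 1) by omega,
      Nat.testBit_two_pow_sub_succ hjpow, Nat.testBit_two_pow]
    rw [decide_eq_true ht, Bool.true_and, Bool.not_eq_false', decide_eq_true_eq]
    exact eq_comm
  have hρL : ∀ r : Fin (2 ^ i),
      ρ.toRingHom (KnHelper.kc (fun t => MvPowerSeries.coeff (R := R)
          (Finsupp.single (none : Option (Fin n)) 1) (u (t+1))) i r Q1)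
        = if (r : ℕ) = 2 ^ i - 1
          then ((-1 : k) ^ (KnHelper.cnt i (j : ℕ) (r : ℕ))) • (-(A (j : ℕ))) else 0 := by
    intro r
    rw [KnHelper.kc_col_collapse _ hji hQbit (r : ℕ)]
    have hcQ : (Q1 : ℕ) + 2 ^ (j : ℕ) = 2 ^ i - 1 := by
      show 2 ^ i - 1 - 2 ^ (j : ℕ) + 2 ^ (j : ℕ) = 2 ^ i - 1
      omega
    rw [hcQ]
    by_cases hc : (r : ℕ) = 2 ^ i - 1
    · rw [if_pos hc, if_pos hc, KnHelper.rho_sign_mul]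
      congr 1
      rw [KnHelper.coeff_u_none a u huS, dif_pos hjn, map_neg]
      show -(ρ (a ⟨(j : ℕ), hjn⟩)) = -(A (j : ℕ))
      simp only [hA]
      rw [dif_pos hjn]
    · rw [if_neg hc, if_neg hc, map_zero]
  have hρR : ∀ r : Fin (2 ^ i),
      ρ'.toRingHom (KnHelper.kc (fun t => MvPowerSeries.coeff (R := R')
          (Finsupp.single (none : Option (Fin n)) 1) (u' (t+1))) i P1 r)
        = ∑ t ∈ Finset.range i,
          if (P1 : ℕ) = (r : ℕ) + 2 ^ t ∧ (r : ℕ).testBit t = false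
            then ((-1 : k) ^ (KnHelper.cnt i t (P1 : ℕ))) • (-(A' t)) else 0 := by
    intro r
    rw [KnHelper.kc, map_sum]
    refine Finset.sum_congr rfl (fun t ht => ?_)
    rw [Finset.mem_range] at ht
    have hval : ρ'.toRingHom (MvPowerSeries.coeff (R := R')
        (Finsupp.single (none : Option (Fin n)) 1) (u' (t+1))) = -(A' t) := by
      rw [KnHelper.coeff_u_none a' u' huS', dif_pos (lt_of_lt_of_le ht hi), map_neg]
      show -(ρ' (a' ⟨t, lt_of_lt_of_le ht hi⟩)) = -(A' t)
      simp only [hA']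
      rw [dif_pos (lt_of_lt_of_le ht hi)]
    rw [apply_ite (fun x => ρ'.toRingHom x), map_zero, KnHelper.rho_sign_mul, hval]
  have hmr := MR1 none P1 Q1
  simp only [hρL, hρR] at hmr
  have hres := KnHelper.nrel hji
    (fun p q => Matrix.of fun α β => C (p, α) (q, β))
    (fun p q => Matrix.of fun α β => D (p, α) (q, β))
    A A' P1 Q1 rfl rfl
    (fun t ht p q => (hsD t ht).1 p q) hmr
  simp only [hA, hA'] at hres
  rw [dif_pos hjn, dif_pos hjn] at hres
  have hQQ : Q1 = (⟨2 ^ i - 2 ^ (j : ℕ) - 1,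
      lt_of_le_of_lt (Nat.sub_le _ _) (Nat.sub_lt hipos (Nat.two_pow_pos _))⟩ : Fin (2 ^ i)) := by
    apply Fin.ext
    show 2 ^ i - 1 - 2 ^ (j : ℕ) = 2 ^ i - 2 ^ (j : ℕ) - 1
    omega
  rw [hQQ] at hres
  exact hres
end

section
/- Let k be an infinite field. For every finite-dimensional k-algebra Λ there is a representation embedding of the category of finite-dimensional Λ-modules into the category of finite-dimensional k⟨a,b⟩-modules; equivalently, the free algebra on two generators k⟨a,b⟩ is finite-length wild. -/
open CategoryTheory

/-- A module is *indecomposable* if it is nonzero and its only idempotent endomorphisms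
are `0` and the identity. -/
def IsIndecomposableModule (R M : Type) [Ring R] [AddCommGroup M] [Module R M] : Prop :=
  (¬ Subsingleton M) ∧
    ∀ e : M →ₗ[R] M, e ∘ₗ e = e → e = 0 ∨ e = LinearMap.id

namespace GPWild

variable (k : Type) [Field k] (Λ : Type) [Ring Λ] [Algebra k Λ]
variable {m : ℕ} (x : Fin m → Λ) (lam : Option (Fin m) → k)

def matrixModule (n : Type) [Fintype n] [DecidableEq n]
    (M : Type) [AddCommGroup M] [Module Λ M] :
    Module (Matrix n n Λ) (n → M) where
  smul P v := fun i => ∑ j, P i j • v j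
  one_smul v := by
    funext i
    show ∑ j, (1 : Matrix n n Λ) i j • v j = v i
    simp [Matrix.one_apply, ite_smul]
  mul_smul P Q v := by
    funext i
    show ∑ j, (P * Q) i j • v j = ∑ l, P i l • ∑ j, Q l j • v j
    simp only [Matrix.mul_apply, Finset.sum_smul, Finset.smul_sum, mul_smul]
    exact Finset.sum_comm
  smul_zero P := by funext i; show ∑ j, _ • (0:M) = (0:M); simp
  smul_add P v w := by
    funext i
    show ∑ j, _ • (v j + w j) = (∑ j, _ • v j) + (∑ j, _ • w j)
    simp [smul_add, Finset.sum_add_distrib]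
  add_smul P Q v := by
    funext i
    show ∑ j, (P i j + Q i j) • v j = (∑ j, P i j • v j) + (∑ j, Q i j • v j)
    simp [add_smul, Finset.sum_add_distrib]
  zero_smul v := by funext i; show ∑ j, (0:Λ) • v j = (0:M); simp

def Amat : Matrix (Option (Fin m)) (Option (Fin m)) Λ :=
  Matrix.of fun i j =>
    match i, j with
    | none, some _ => 1
    | some t, none => x t
    | _, _ => 0

def Bmat : Matrix (Option (Fin m)) (Option (Fin m)) Λ :=
  Matrix.diagonal fun i => algebraMap k Λ (lam i)

noncomputable def psi : FreeAlgebra k (Fin 2) →ₐ[k] Matrix (Option (Fin m)) (Option (Fin m)) Λ :=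
  FreeAlgebra.lift k ![Amat Λ x, Bmat k Λ lam]

@[simp] lemma psi_a : psi k Λ x lam (FreeAlgebra.ι k 0) = Amat Λ x := by simp [psi]

@[simp] lemma psi_b : psi k Λ x lam (FreeAlgebra.ι k 1) = Bmat k Λ lam := by simp [psi]

noncomputable def VModule (M : Type) [AddCommGroup M] [Module Λ M] :
    Module (FreeAlgebra k (Fin 2)) (Option (Fin m) → M) :=
  letI := matrixModule Λ (Option (Fin m)) M
  Module.compHom _ (psi k Λ x lam).toRingHom

noncomputable def Fobj (M : ModuleCat.{0} Λ) : ModuleCat.{0} (FreeAlgebra k (Fin 2)) :=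
  letI := VModule k Λ x lam M
  ModuleCat.of (FreeAlgebra k (Fin 2)) (Option (Fin m) → M)

lemma smul_def (M : ModuleCat.{0} Λ) (s : FreeAlgebra k (Fin 2))
    (v : Fobj k Λ x lam M) (i : Option (Fin m)) :
    (s • v) i = ∑ j, psi k Λ x lam s i j • v j := rfl

noncomputable def FmapFun {M N : ModuleCat.{0} Λ} (f : M ⟶ N)
    (v : Fobj k Λ x lam M) : Fobj k Λ x lam N := fun i => f (v i)

/-- Any `Λ`-linear map between components gives an `S`-linear map between powers. -/
noncomputable def Fmap {M N : ModuleCat.{0} Λ} (f : M ⟶ N) :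
    Fobj k Λ x lam M ⟶ Fobj k Λ x lam N := ConcreteCategory.ofHom {
  toFun := FmapFun k Λ x lam f
  map_add' v w := by funext i; exact map_add f.hom _ _
  map_smul' s v := by
    funext i
    show f ((s • v) i) = (s • FmapFun k Λ x lam f v) i
    rw [smul_def, smul_def, map_sum]
    exact Finset.sum_congr rfl fun j _ => map_smul f.hom _ _ }

noncomputable def Ffunctor : ModuleCat.{0} Λ ⥤ ModuleCat.{0} (FreeAlgebra k (Fin 2)) where
  obj := Fobj k Λ x lam
  map := Fmap k Λ x lam
  map_id M := by ext v; rfl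
  map_comp f g := by ext v; rfl

instance : (Ffunctor k Λ x lam).Additive where
  map_add := by intros; ext v; rfl

lemma diag_smul {M : ModuleCat.{0} Λ} (d : Option (Fin m) → Λ) (v : Option (Fin m) → M)
    (i : Option (Fin m)) :
    ∑ j, Matrix.diagonal d i j • v j = d i • v i := by
  rw [Finset.sum_eq_single i]
  · rw [Matrix.diagonal_apply_eq]
  · intro j _ hj
    rw [Matrix.diagonal_apply_ne _ (Ne.symm hj), zero_smul]
  · intro h; exact absurd (Finset.mem_univ i) h

lemma b_smul {M : ModuleCat.{0} Λ} (v : Fobj k Λ x lam M) (i : Option (Fin m)) :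
    ((FreeAlgebra.ι k (1 : Fin 2)) • v) i = algebraMap k Λ (lam i) • v i := by
  rw [smul_def, psi_b, Bmat]; exact diag_smul Λ _ v i

lemma scalar_smul {M : ModuleCat.{0} Λ} (c : k) (v : Fobj k Λ x lam M) (i : Option (Fin m)) :
    ((algebraMap k (FreeAlgebra k (Fin 2)) c) • v) i = algebraMap k Λ c • v i := by
  rw [smul_def, AlgHom.commutes, Matrix.algebraMap_eq_diagonal]; refine (diag_smul Λ _ v i).trans ?_
  simp [Pi.algebraMap_apply]

lemma a_smul_none {M : ModuleCat.{0} Λ} (v : Fobj k Λ x lam M) :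
    ((FreeAlgebra.ι k (0 : Fin 2)) • v) none = ∑ t, v (some t) := by
  rw [smul_def, psi_a, Fintype.sum_option]
  simp [Amat]

lemma a_smul_some {M : ModuleCat.{0} Λ} (v : Fobj k Λ x lam M) (t : Fin m) :
    ((FreeAlgebra.ι k (0 : Fin 2)) • v) (some t) = x t • v none := by
  rw [smul_def, psi_a, Fintype.sum_option]
  simp [Amat]

open CategoryTheory.Limits

lemma fmap_apply {M N : ModuleCat.{0} Λ} (f : M ⟶ N) (v : Fobj k Λ x lam M)
    (i : Option (Fin m)) : Fmap k Λ x lam f v i = f (v i) := rfl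

noncomputable def kerLiftFun {M N : ModuleCat.{0} Λ} (f : M ⟶ N)
    {W : ModuleCat.{0} (FreeAlgebra k (Fin 2))}
    (g' : W ⟶ (Ffunctor k Λ x lam).obj M)
    (hg' : g' ≫ (Ffunctor k Λ x lam).map f = 0) (w : W) :
    Fobj k Λ x lam (ModuleCat.of Λ (LinearMap.ker f.hom)) :=
  fun i => ⟨g' w i, LinearMap.mem_ker.2 (congrFun (ConcreteCategory.congr_hom hg' w) i)⟩

noncomputable def preservesKernels {M N : ModuleCat.{0} Λ} (f : M ⟶ N) :
    PreservesLimit (parallelPair f 0) (Ffunctor k Λ x lam) := by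
  apply preservesLimit_of_preserves_limit_cone (ModuleCat.kernelIsLimit f)
  apply (isLimitMapConeForkEquiv' (Ffunctor k Λ x lam)
    (by ext ⟨_, h⟩; exact h :
      ModuleCat.ofHom (LinearMap.ker f.hom).subtype ≫ f = 0)).symm _
  refine KernelFork.IsLimit.ofι _ _
    (fun {W} g' hg' => ConcreteCategory.ofHom
      { toFun := kerLiftFun k Λ x lam f g' hg'
        map_add' := fun w w' => by
          funext i
          apply Subtype.ext
          show g' (w + w') i = g' w i + g' w' i
          rw [map_add]; rfl
        map_smul' := fun s w => by
          funext i
          apply Subtype.ext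
          show g' (s • w) i = Subtype.val ((s • kerLiftFun k Λ x lam f g' hg' w) i)
          erw [map_smul, smul_def k Λ x lam (ModuleCat.of Λ M),
            smul_def k Λ x lam (ModuleCat.of Λ (LinearMap.ker f.hom)),
            AddSubmonoidClass.coe_finset_sum]
          exact Finset.sum_congr rfl fun j _ => rfl })
    ?_ ?_
  · intro W g' hg'
    ext w
    rfl
  · intro W g' hg' mm hm
    ext w
    funext i
    exact Subtype.ext (congrFun (ConcreteCategory.congr_hom hm w) i)


section Coker

variable {M N : ModuleCat.{0} Λ} (f : M ⟶ N)

noncomputable abbrev Fpi : (Ffunctor k Λ x lam).obj N ⟶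
    (Ffunctor k Λ x lam).obj (ModuleCat.of Λ (↑N ⧸ LinearMap.range f.hom)) :=
  (Ffunctor k Λ x lam).map (ModuleCat.ofHom (LinearMap.range f.hom).mkQ)

lemma Fpi_surjective : Function.Surjective (Fpi k Λ x lam f) := by
  intro v
  refine ⟨fun i => (Submodule.Quotient.mk_surjective _ (v i)).choose, ?_⟩
  funext i
  exact (Submodule.Quotient.mk_surjective _ (v i)).choose_spec

lemma ker_Fpi_le {W : ModuleCat.{0} (FreeAlgebra k (Fin 2))}
    (g' : (Ffunctor k Λ x lam).obj N ⟶ W)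
    (hg' : (Ffunctor k Λ x lam).map f ≫ g' = 0) :
    LinearMap.ker (Fpi k Λ x lam f).hom ≤ LinearMap.ker g'.hom := by
  intro v hv
  have hvi : ∀ i, v i ∈ LinearMap.range f.hom := by
    intro i
    have : Fpi k Λ x lam f v = 0 := hv
    have h2 := congrFun this i
    exact (Submodule.Quotient.mk_eq_zero _).1 h2
  have : v = (Ffunctor k Λ x lam).map f (fun i => (hvi i).choose) := by
    funext i
    exact ((hvi i).choose_spec).symm
  rw [LinearMap.mem_ker, this]
  exact ConcreteCategory.congr_hom hg' _

noncomputable def cokerEquiv :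
    ((Ffunctor k Λ x lam).obj N ⧸ LinearMap.ker (Fpi k Λ x lam f).hom) ≃ₗ[FreeAlgebra k (Fin 2)]
      (Ffunctor k Λ x lam).obj (ModuleCat.of Λ (↑N ⧸ LinearMap.range f.hom)) :=
  LinearEquiv.ofBijective (Submodule.liftQ _ (Fpi k Λ x lam f).hom le_rfl)
    ⟨by
      rw [← LinearMap.ker_eq_bot]
      exact Submodule.ker_liftQ_eq_bot _ _ _ le_rfl,
     by
      intro v
      obtain ⟨u, rfl⟩ := Fpi_surjective k Λ x lam f v
      exact ⟨Submodule.Quotient.mk u, rfl⟩⟩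

lemma cokerEquiv_mk (u : (Ffunctor k Λ x lam).obj N) :
    cokerEquiv k Λ x lam f (Submodule.Quotient.mk u) = Fpi k Λ x lam f u := rfl

noncomputable def preservesCokernels :
    Limits.PreservesColimit (Limits.parallelPair f 0) (Ffunctor k Λ x lam) := by
  apply preservesColimit_of_preserves_colimit_cocone (ModuleCat.cokernelIsColimit f)
  apply (isColimitMapCoconeCoforkEquiv' (Ffunctor k Λ x lam)
    (ModuleCat.hom_ext (LinearMap.range_mkQ_comp f.hom) :
      f ≫ ModuleCat.ofHom (LinearMap.range f.hom).mkQ = 0)).symm _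
  refine CokernelCofork.IsColimit.ofπ _ _
    (fun {W} g' hg' => ConcreteCategory.ofHom <|
      (Submodule.liftQ (LinearMap.ker (Fpi k Λ x lam f).hom) g'.hom
          (ker_Fpi_le k Λ x lam f g' hg')) ∘ₗ
        ((cokerEquiv k Λ x lam f).symm :
          (Ffunctor k Λ x lam).obj (ModuleCat.of Λ (↑N ⧸ LinearMap.range f.hom)) →ₗ[FreeAlgebra k (Fin 2)] _))
    ?_ ?_
  · intro W g' hg'
    ext u
    show Submodule.liftQ _ g'.hom (ker_Fpi_le k Λ x lam f g' hg') ((cokerEquiv k Λ x lam f).symm (Fpi k Λ x lam f u)) = g' u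
    rw [← cokerEquiv_mk k Λ x lam f u, LinearEquiv.symm_apply_apply]
    rfl
  · intro W g' hg' mm hm
    ext v
    obtain ⟨u, rfl⟩ := Fpi_surjective k Λ x lam f v
    refine Eq.trans (ConcreteCategory.congr_hom hm u) ?_
    show g' u = Submodule.liftQ _ g'.hom (ker_Fpi_le k Λ x lam f g' hg') ((cokerEquiv k Λ x lam f).symm (Fpi k Λ x lam f u))
    rw [← cokerEquiv_mk k Λ x lam f u, LinearEquiv.symm_apply_apply]
    rfl

end Coker


noncomputable def FpreservesFiniteLimits : Limits.PreservesFiniteLimits (Ffunctor k Λ x lam) := by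
  haveI : ∀ {X Y : ModuleCat.{0} Λ} (f : X ⟶ Y),
      Limits.PreservesLimit (Limits.parallelPair f 0) (Ffunctor k Λ x lam) :=
    fun f => preservesKernels k Λ x lam f
  exact Functor.preservesFiniteLimits_of_preservesKernels (Ffunctor k Λ x lam)

noncomputable def FpreservesFiniteColimits :
    Limits.PreservesFiniteColimits (Ffunctor k Λ x lam) := by
  haveI : ∀ {X Y : ModuleCat.{0} Λ} (f : X ⟶ Y),
      Limits.PreservesColimit (Limits.parallelPair f 0) (Ffunctor k Λ x lam) :=
    fun f => preservesCokernels k Λ x lam f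
  exact Functor.preservesFiniteColimits_of_preservesCokernels (Ffunctor k Λ x lam)


section HomChar

variable {M N : ModuleCat.{0} Λ}

/-- `Pi.single` as an element of `Fobj`. -/
noncomputable def sing (M : ModuleCat.{0} Λ) (j : Option (Fin m)) (u : M) :
    Fobj k Λ x lam M := Pi.single j u

@[simp] lemma sing_apply (M : ModuleCat.{0} Λ) (j : Option (Fin m)) (u : M)
    (i : Option (Fin m)) : sing k Λ x lam M j u i = (Pi.single j u : Option (Fin m) → M) i := rfl

lemma sing_add (j : Option (Fin m)) (u u' : M) :
    sing k Λ x lam M j (u + u') = sing k Λ x lam M j u + sing k Λ x lam M j u' := by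
  show (Pi.single j (u + u') : Option (Fin m) → M)
      = (Pi.single j u : Option (Fin m) → M) + (Pi.single j u' : Option (Fin m) → M)
  exact Pi.single_add (f := fun _ : Option (Fin m) => (M : Type)) j u u'

lemma sing_zero (j : Option (Fin m)) :
    sing k Λ x lam M j (0 : M) = 0 := by
  show (Pi.single j (0 : M) : Option (Fin m) → M) = 0
  exact Pi.single_zero (M := fun _ : Option (Fin m) => (M : Type)) j

lemma cancel_scalar {P : ModuleCat.{0} Λ} {c : k} (hc : c ≠ 0) {z : P}
    (h : algebraMap k Λ c • z = 0) : z = 0 := by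
  have h2 : algebraMap k Λ c⁻¹ • algebraMap k Λ c • z = 0 := by rw [h, smul_zero]
  rwa [smul_smul, ← map_mul, inv_mul_cancel₀ hc, map_one, one_smul] at h2

variable (hlam : Function.Injective lam)
variable (g : Fobj k Λ x lam M ⟶ Fobj k Λ x lam N)

lemma b_single (j : Option (Fin m)) (u : M) :
    (FreeAlgebra.ι k (1 : Fin 2)) • sing k Λ x lam M j u
      = (algebraMap k (FreeAlgebra k (Fin 2)) (lam j)) • sing k Λ x lam M j u := by
  funext i
  rw [b_smul, scalar_smul]
  rcases eq_or_ne i j with rfl | hij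
  · rfl
  · rw [sing_apply, Pi.single_eq_of_ne hij, smul_zero, smul_zero]

include hlam in
lemma g_single_ne (j : Option (Fin m)) (u : M) (i : Option (Fin m)) (hij : i ≠ j) :
    g (sing k Λ x lam M j u) i = 0 := by
  have h1 : g ((FreeAlgebra.ι k (1 : Fin 2)) • sing k Λ x lam M j u)
      = (FreeAlgebra.ι k (1 : Fin 2)) • g (sing k Λ x lam M j u) := map_smul g.hom _ _
  rw [b_single k Λ x lam j u, map_smul] at h1
  have h2 := congrFun h1 i
  rw [scalar_smul, b_smul] at h2
  have h3 : algebraMap k Λ (lam j - lam i) • g (sing k Λ x lam M j u) i = 0 := by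
    rw [map_sub, sub_smul, h2, sub_self]
  exact cancel_scalar k Λ (sub_ne_zero.2 (fun h => hij (hlam h).symm)) h3

/-- The diagonal component of `g`. -/
noncomputable def comp (j : Option (Fin m)) (u : M) : N :=
  g (sing k Λ x lam M j u) j

include hlam in
lemma g_single (j : Option (Fin m)) (u : M) :
    g (sing k Λ x lam M j u) = sing k Λ x lam N j (comp k Λ x lam g j u) := by
  funext i
  rcases eq_or_ne i j with rfl | hij
  · rw [sing_apply, Pi.single_eq_same]
    rfl
  · rw [sing_apply, Pi.single_eq_of_ne hij]
    exact g_single_ne k Λ x lam hlam g j u i hij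

lemma a_single_some (t : Fin m) (u : M) :
    (FreeAlgebra.ι k (0 : Fin 2)) • sing k Λ x lam M (some t) u
      = sing k Λ x lam M none u := by
  funext i
  cases i with
  | none =>
    rw [a_smul_none]
    simp [Pi.single_apply]
  | some t' =>
    rw [a_smul_some]
    simp [Pi.single_apply]

lemma a_single_none (u : M) :
    (FreeAlgebra.ι k (0 : Fin 2)) • sing k Λ x lam M none u
      = ∑ t, sing k Λ x lam M (some t) (x t • u) := by
  funext i
  cases i with
  | none =>
    erw [a_smul_none, Finset.sum_apply]
    simp [Pi.single_apply]
  | some t0 =>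
    erw [a_smul_some, Finset.sum_apply]
    simp [Pi.single_apply]

include hlam in
lemma comp_some_eq_none (t : Fin m) (u : M) :
    comp k Λ x lam g (some t) u = comp k Λ x lam g none u := by
  have h1 : g (sing k Λ x lam M none u)
      = (FreeAlgebra.ι k (0 : Fin 2)) • g (sing k Λ x lam M (some t) u) := by
    rw [← map_smul, a_single_some]
  have h2 : (FreeAlgebra.ι k (0 : Fin 2)) • g (sing k Λ x lam M (some t) u)
      = (FreeAlgebra.ι k (0 : Fin 2)) • sing k Λ x lam N (some t) (comp k Λ x lam g (some t) u) := by
    rw [g_single k Λ x lam hlam]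
  have h3 := congrFun (h1.trans h2) none
  rw [a_smul_none] at h3
  have h4 : ∑ t', sing k Λ x lam N (some t) (comp k Λ x lam g (some t) u) (some t')
      = comp k Λ x lam g (some t) u := by
    simp [Pi.single_apply]
  exact (h3.trans h4).symm

include hlam in
lemma comp_none_x (t : Fin m) (u : M) :
    comp k Λ x lam g none (x t • u) = x t • comp k Λ x lam g none u := by
  have h1 : g ((FreeAlgebra.ι k (0 : Fin 2)) • sing k Λ x lam M none u)
      = (FreeAlgebra.ι k (0 : Fin 2)) • g (sing k Λ x lam M none u) := map_smul g.hom _ _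
  rw [a_single_none, map_sum] at h1
  have h2 := congrFun h1 (some t)
  erw [Finset.sum_apply, a_smul_some] at h2
  have h3 : ∑ t', g (sing k Λ x lam M (some t') (x t' • u)) (some t)
      = comp k Λ x lam g (some t) (x t • u) := by
    rw [Finset.sum_congr rfl
      (fun t' _ => congrFun (g_single k Λ x lam hlam g (some t') (x t' • u)) (some t))]
    simp [Pi.single_apply]
  rw [h3, comp_some_eq_none k Λ x lam hlam] at h2
  have h5 : x t • g (sing k Λ x lam M none u) none = x t • comp k Λ x lam g none u := rfl
  exact h2.trans h5

lemma comp_add (j : Option (Fin m)) (u u' : M) :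
    comp k Λ x lam g j (u + u') = comp k Λ x lam g j u + comp k Λ x lam g j u' := by
  unfold comp
  rw [sing_add, map_add]
  rfl

lemma scalar_single (c : k) (j : Option (Fin m)) (u : M) :
    sing k Λ x lam M j (algebraMap k Λ c • u)
      = (algebraMap k (FreeAlgebra k (Fin 2)) c) • sing k Λ x lam M j u := by
  funext i
  rw [scalar_smul]
  rcases eq_or_ne i j with rfl | hij
  · rw [sing_apply, sing_apply, Pi.single_eq_same, Pi.single_eq_same]
  · rw [sing_apply, sing_apply, Pi.single_eq_of_ne hij, Pi.single_eq_of_ne hij, smul_zero]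

lemma comp_ksmul (c : k) (u : M) :
    comp k Λ x lam g none (algebraMap k Λ c • u)
      = algebraMap k Λ c • comp k Λ x lam g none u := by
  unfold comp
  rw [scalar_single, map_smul]
  exact scalar_smul k Λ x lam c _ none

lemma comp_zero' : comp k Λ x lam g none 0 = 0 := by
  unfold comp
  rw [sing_zero, map_zero]
  rfl

variable (hx : Submodule.span k (Set.range x) = ⊤)

include hlam hx in
lemma comp_smul (r : Λ) (u : M) :
    comp k Λ x lam g none (r • u) = r • comp k Λ x lam g none u := by
  have hr : r ∈ Submodule.span k (Set.range x) := by rw [hx]; exact Submodule.mem_top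
  refine Submodule.span_induction
    (p := fun r _ => ∀ u : M,
      comp k Λ x lam g none (r • u) = r • comp k Λ x lam g none u)
    ?_ ?_ ?_ ?_ hr u
  · rintro _ ⟨t, rfl⟩ u
    exact comp_none_x k Λ x lam hlam g t u
  · intro u
    rw [zero_smul, zero_smul]
    exact comp_zero' k Λ x lam g
  · intro r s _ _ hr hs u
    rw [add_smul, add_smul, comp_add, hr, hs]
  · intro c r _ hr u
    rw [Algebra.smul_def, mul_smul, comp_ksmul, hr, ← mul_smul, ← Algebra.smul_def]

/-- The Λ-linear map underlying a diagonal `S`-linear map. -/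
noncomputable def gdiag : M →ₗ[Λ] N where
  toFun := comp k Λ x lam g none
  map_add' := comp_add k Λ x lam g none
  map_smul' := comp_smul k Λ x lam hlam g hx

include hlam hx in
lemma g_eq (v : Fobj k Λ x lam M) (i : Option (Fin m)) :
    g v i = gdiag k Λ x lam hlam g hx (v i) := by
  have hv : v = ∑ j, sing k Λ x lam M j (v j) := by
    funext i
    erw [Finset.sum_apply]
    cases i <;> simp [Pi.single_apply]
  have h1 : g v i = ∑ j, g (sing k Λ x lam M j (v j)) i := by
    conv_lhs => rw [hv]
    rw [map_sum]
    exact Finset.sum_apply _ _ _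
  rw [h1, Finset.sum_congr rfl
    (fun j _ => congrFun (g_single k Λ x lam hlam g j (v j)) i)]
  have h2 : ∑ j, sing k Λ x lam N j (comp k Λ x lam g j (v j)) i
      = comp k Λ x lam g i (v i) := by simp [Pi.single_apply]
  rw [h2]
  cases i with
  | none => rfl
  | some t => exact comp_some_eq_none k Λ x lam hlam g t (v (some t))

end HomChar


lemma fd_transfer (M : ModuleCat.{0} Λ)
    (h : @FiniteDimensional k (RestrictScalars k Λ M) _ _ (RestrictScalars.module k Λ M)) :
    @FiniteDimensional k
      (RestrictScalars k (FreeAlgebra k (Fin 2)) ((Ffunctor k Λ x lam).obj M)) _ _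
      (RestrictScalars.module k (FreeAlgebra k (Fin 2)) ((Ffunctor k Λ x lam).obj M)) := by
  letI := RestrictScalars.module k Λ M
  letI := RestrictScalars.module k (FreeAlgebra k (Fin 2)) ((Ffunctor k Λ x lam).obj M)
  haveI : Module.Finite k (RestrictScalars k Λ M) := h
  let e : RestrictScalars k (FreeAlgebra k (Fin 2)) ((Ffunctor k Λ x lam).obj M) ≃ₗ[k]
      (Option (Fin m) → RestrictScalars k Λ M) :=
    { toFun := fun v => v
      invFun := fun v => v
      left_inv := fun v => rfl
      right_inv := fun v => rfl
      map_add' := fun v w => rfl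
      map_smul' := fun c v => by
        funext i
        exact scalar_smul k Λ x lam c v i }
  haveI : Module.Finite k (Option (Fin m) → RestrictScalars k Λ M) := Module.Finite.pi
  have := Module.Finite.equiv e.symm; exact this

end GPWild

/-- Example 2.3; Gelfand–Ponomarev.  Let `k` be an infinite field.
For every finite-dimensional `k`-algebra `Λ` there is a representation embedding of the
finite-dimensional `Λ`-modules into the finite-dimensional modules over the free algebra
`k⟨a,b⟩`: an exact functor (preserving finite limits and colimits) sending
finite-dimensional modules to finite-dimensional ones, preserving indecomposability and
reflecting isomorphism.  Equivalently, `k⟨a,b⟩` is finite-length wild. -/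
theorem free_algebra_two_generators_is_wild
    (k : Type) [Field k] [Infinite k]
    (Λ : Type) [Ring Λ] [Algebra k Λ] [FiniteDimensional k Λ] :
    ∃ F : ModuleCat.{0} Λ ⥤ ModuleCat.{0} (FreeAlgebra k (Fin 2)),
      Nonempty (Limits.PreservesFiniteLimits F) ∧
      Nonempty (Limits.PreservesFiniteColimits F) ∧
      (∀ M : ModuleCat.{0} Λ, @FiniteDimensional k (RestrictScalars k Λ M) _ _ (RestrictScalars.module k Λ M) →
        @FiniteDimensional k (RestrictScalars k (FreeAlgebra k (Fin 2)) (F.obj M)) _ _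
          (RestrictScalars.module k (FreeAlgebra k (Fin 2)) (F.obj M))) ∧
      (∀ M : ModuleCat.{0} Λ, @FiniteDimensional k (RestrictScalars k Λ M) _ _ (RestrictScalars.module k Λ M) →
        IsIndecomposableModule Λ M →
        IsIndecomposableModule (FreeAlgebra k (Fin 2)) (F.obj M)) ∧
      (∀ M N : ModuleCat.{0} Λ,
        @FiniteDimensional k (RestrictScalars k Λ M) _ _ (RestrictScalars.module k Λ M) →
        @FiniteDimensional k (RestrictScalars k Λ N) _ _ (RestrictScalars.module k Λ N) →
        (Nonempty (F.obj M ≅ F.obj N) ↔ Nonempty (M ≅ N))) := by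
  classical
  set m := Module.finrank k Λ with hm
  let bas : Module.Basis (Fin m) k Λ := Module.finBasis k Λ
  let x : Fin m → Λ := bas
  have hx : Submodule.span k (Set.range x) = ⊤ := bas.span_eq
  let emb : ℕ ↪ k := Infinite.natEmbedding k
  let lam : Option (Fin m) → k := fun i => emb ((finSuccEquiv m).symm i : Fin (m + 1))
  have hlam : Function.Injective lam := by
    intro i j h
    have h1 := emb.injective h
    have h2 : ((finSuccEquiv m).symm i : Fin (m + 1)) = (finSuccEquiv m).symm j :=
      Fin.val_injective h1
    exact (finSuccEquiv m).symm.injective h2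
  refine ⟨GPWild.Ffunctor k Λ x lam,
    ⟨GPWild.FpreservesFiniteLimits k Λ x lam⟩,
    ⟨GPWild.FpreservesFiniteColimits k Λ x lam⟩,
    fun M hM => GPWild.fd_transfer k Λ x lam M hM, ?_, ?_⟩
  · -- indecomposability
    rintro M _ ⟨hM1, hM2⟩
    constructor
    · intro hs
      apply hM1
      constructor
      intro u v
      let cu : (GPWild.Ffunctor k Λ x lam).obj M := fun _ => u
      let cv : (GPWild.Ffunctor k Λ x lam).obj M := fun _ => v
      have := hs.elim cu cv
      exact congrFun this none
    · intro e he
      let f := GPWild.gdiag k Λ x lam hlam (ConcreteCategory.ofHom (X := GPWild.Fobj k Λ x lam M) (Y := GPWild.Fobj k Λ x lam M) e) hx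
      have hfe : ∀ (w : (GPWild.Ffunctor k Λ x lam).obj M) (i : Option (Fin m)),
          e w i = f (w i) := GPWild.g_eq k Λ x lam hlam (ConcreteCategory.ofHom (X := GPWild.Fobj k Λ x lam M) (Y := GPWild.Fobj k Λ x lam M) e) hx
      have hsing : ∀ u : M, (GPWild.sing k Λ x lam M none u) none = u := fun u =>
        Pi.single_eq_same (M := fun _ : Option (Fin m) => (M : Type)) none u
      have hff : f ∘ₗ f = f := by
        apply LinearMap.ext
        intro u
        have h1 := congrFun (LinearMap.congr_fun he (GPWild.sing k Λ x lam M none u)) none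
        -- h1 : e (e (sing none u)) none = e (sing none u) none
        have h2 : e (GPWild.sing k Λ x lam M none u) none = f u := by
          exact (hfe _ _).trans (congrArg f (hsing u))
        have h3 : e (e (GPWild.sing k Λ x lam M none u)) none
            = f (e (GPWild.sing k Λ x lam M none u) none) := hfe _ _
        show f (f u) = f u
        rw [← h2, ← h3]
        exact h1
      rcases hM2 f hff with h0 | hid
      · left
        apply LinearMap.ext
        intro w
        funext i
        rw [hfe w i, h0]
        rfl
      · right
        apply LinearMap.ext
        intro w
        funext i
        rw [hfe w i, hid]
        rfl
  · -- isomorphism reflection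
    intro M N _ _
    constructor
    · rintro ⟨iso⟩
      let f := GPWild.gdiag k Λ x lam hlam iso.hom hx
      let f' := GPWild.gdiag k Λ x lam hlam iso.inv hx
      have hfe : ∀ (w : (GPWild.Ffunctor k Λ x lam).obj M) (i : Option (Fin m)),
          iso.hom w i = f (w i) := GPWild.g_eq k Λ x lam hlam iso.hom hx
      have hfe' : ∀ (w : (GPWild.Ffunctor k Λ x lam).obj N) (i : Option (Fin m)),
          iso.inv w i = f' (w i) := GPWild.g_eq k Λ x lam hlam iso.inv hx
      have hsingM : ∀ u : M, (GPWild.sing k Λ x lam M none u) none = u := fun u =>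
        Pi.single_eq_same (M := fun _ : Option (Fin m) => (M : Type)) none u
      have hsingN : ∀ u : N, (GPWild.sing k Λ x lam N none u) none = u := fun u =>
        Pi.single_eq_same (M := fun _ : Option (Fin m) => (N : Type)) none u
      have h1 : ∀ u : M, f' (f u) = u := by
        intro u
        have ha := congrFun (ConcreteCategory.congr_hom iso.hom_inv_id
          (GPWild.sing k Λ x lam M none u)) none
        have hb : iso.hom (GPWild.sing k Λ x lam M none u) none = f u := by
          exact (hfe _ _).trans (congrArg f (hsingM u))
        have hc : iso.inv (iso.hom (GPWild.sing k Λ x lam M none u)) none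
            = f' (iso.hom (GPWild.sing k Λ x lam M none u) none) := hfe' _ _
        rw [← hb, ← hc]
        exact ha.trans (hsingM u)
      have h2 : ∀ u : N, f (f' u) = u := by
        intro u
        have ha := congrFun (ConcreteCategory.congr_hom iso.inv_hom_id
          (GPWild.sing k Λ x lam N none u)) none
        have hb : iso.inv (GPWild.sing k Λ x lam N none u) none = f' u := by
          exact (hfe' _ _).trans (congrArg f' (hsingN u))
        have hc : iso.hom (iso.inv (GPWild.sing k Λ x lam N none u)) none
            = f (iso.inv (GPWild.sing k Λ x lam N none u) none) := hfe _ _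
        rw [← hb, ← hc]
        exact ha.trans (hsingN u)
      exact ⟨{ hom := ModuleCat.ofHom f, inv := ModuleCat.ofHom f',
               hom_inv_id := ModuleCat.hom_ext (LinearMap.ext h1),
               inv_hom_id := ModuleCat.hom_ext (LinearMap.ext h2) }⟩
    · rintro ⟨iso⟩
      exact ⟨(GPWild.Ffunctor k Λ x lam).mapIso iso⟩
end

section
/- Let X_1,...,X_m be n×n matrices over a field k and B the mn×mn block matrix with diagonal blocks X_1,...,X_m and identity blocks on the subdiagonal; let B' be defined analogously from X_1',...,X_m'. If Σ = diag(σ_1,...,σ_m) is block-diagonal and ΣB = B'Σ, then σ_1 = σ_2 = ... = σ_m and σ_1 X_i = X_i' σ_1 for all i. -/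
open Matrix

/-- Let `X_1,…,X_m` be `n × n` matrices over a field `k` and `B` the
`mn × mn` block matrix with diagonal blocks `X_1,…,X_m` and identity blocks on the
subdiagonal; let `B'` be built analogously from `X_1',…,X_m'`.  If `Σ = diag(σ_1,…,σ_m)`
is block-diagonal and `ΣB = B'Σ`, then `σ_1 = ⋯ = σ_m` and `σ_1 X_i = X_i' σ_1` for all
`i`. -/
theorem block_diagonal_intertwiner_constant
    (k : Type) [Field k] (m n : ℕ)
    (X X' : Fin m → Matrix (Fin n) (Fin n) k)
    (σ : Fin m → Matrix (Fin n) (Fin n) k)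
    (B B' Sg : Matrix (Fin m × Fin n) (Fin m × Fin n) k)
    (hB : B = Matrix.of fun p q =>
      if p.1 = q.1 then X p.1 p.2 q.2
      else if (p.1 : ℕ) = (q.1 : ℕ) + 1 then (if p.2 = q.2 then 1 else 0) else 0)
    (hB' : B' = Matrix.of fun p q =>
      if p.1 = q.1 then X' p.1 p.2 q.2
      else if (p.1 : ℕ) = (q.1 : ℕ) + 1 then (if p.2 = q.2 then 1 else 0) else 0)
    (hSg : Sg = Matrix.of fun p q => if p.1 = q.1 then σ p.1 p.2 q.2 else 0)
    (hcomm : Sg * B = B' * Sg) :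
    (∀ i j : Fin m, σ i = σ j) ∧ ∀ j i : Fin m, σ j * X i = X' i * σ j := by
  subst hB hB' hSg
  have hent : ∀ (i j : Fin m) (a b : Fin n),
      (∑ c, σ i a c * (if i = j then X i c b
        else if (i:ℕ) = (j:ℕ) + 1 then (if c = b then 1 else 0) else 0))
    = ∑ c, (if i = j then X' i a c
        else if (i:ℕ) = (j:ℕ) + 1 then (if a = c then 1 else 0) else 0) * σ j c b := by
    intro i j a b
    have h := congrFun (congrFun hcomm (i, a)) (j, b)
    rw [Matrix.mul_apply, Matrix.mul_apply, Fintype.sum_prod_type, Fintype.sum_prod_type,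
      Finset.sum_eq_single i (by intro x _ hx; simp [Ne.symm hx]) (by simp),
      Finset.sum_eq_single j (by intro x _ hx; simp [hx]) (by simp)] at h
    simpa using h
  have hdiag : ∀ i : Fin m, σ i * X i = X' i * σ i := by
    intro i
    ext a b
    have h := hent i i a b
    simpa [Matrix.mul_apply] using h
  have hstep : ∀ i j : Fin m, (i : ℕ) = (j : ℕ) + 1 → σ i = σ j := by
    intro i j hij
    have hne : i ≠ j := by
      intro h; rw [h] at hij; omega
    ext a b
    have h := hent i j a b
    simp [hne, hij, mul_ite, ite_mul] at h
    exact h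
  have hconst : ∀ i j : Fin m, σ i = σ j := by
    have h0 : ∀ (t : ℕ) (ht : t < m),
        σ ⟨t, ht⟩ = σ ⟨0, Nat.lt_of_le_of_lt (Nat.zero_le t) ht⟩ := by
      intro t
      induction t with
      | zero => intro ht; rfl
      | succ t ih =>
        intro ht
        have h1 : σ ⟨t + 1, ht⟩ = σ ⟨t, Nat.lt_of_succ_lt ht⟩ :=
          hstep _ _ rfl
        rw [h1, ih]
    intro i j
    have hi := h0 i.1 i.2
    have hj := h0 j.1 j.2
    simp only [Fin.eta] at hi hj
    rw [hi, hj]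
  exact ⟨hconst, fun j i => by rw [hconst j i]; exact hdiag i⟩
end
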